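/- arXiv:1309.3467 — 5 statements merged into one kernel-verified Lean document; each statement's English description precedes it below -/
import Mathlib

section
/- Let M ≥ 2, let S : Fin M → ℂ be an injective signal set, and let s be a nonzero complex number. Then the minimum, over all Latin squares f of order M (with symbols in any Fin t) that remove the fade state s, of the number of distinct symbols actually used by f (the cardinality of the range of f), equals the chromatic number of the singularity removal graph G_s. -/
noncomputable section

/-- The equivalence relation on cells `(a,b)` identifying cells with the same
effective constellation point `S a + s * S b`. Its classes are the
singularity removal constraints. -/
def fadeSetoid (M : ℕ) (S : Fin M → ℂ) (s : ℂ) : Setoid (Fin M × Fin M) where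
  r p q := S p.1 + s * S p.2 = S q.1 + s * S q.2
  iseqv := ⟨fun _ => rfl, fun h => h.symm, fun h₁ h₂ => h₁.trans h₂⟩

/-- The singularity removal graph: vertices are the singularity removal
constraints (equivalence classes); two distinct classes are adjacent iff they
contain cells sharing a row or a column. -/
def srg (M : ℕ) (S : Fin M → ℂ) (s : ℂ) :
    SimpleGraph (Quotient (fadeSetoid M S s)) where
  Adj u v := u ≠ v ∧ ∃ p q : Fin M × Fin M,
      Quotient.mk (fadeSetoid M S s) p = u ∧ Quotient.mk (fadeSetoid M S s) q = v ∧
      (p.1 = q.1 ∨ p.2 = q.2)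
  symm := by
    constructor
    rintro u v ⟨hne, p, q, hp, hq, h⟩
    exact ⟨hne.symm, q, p, hq, hp, h.imp Eq.symm Eq.symm⟩
  loopless := by
    constructor
    rintro u ⟨hne, -⟩
    exact hne rfl

/-- A Latin square of order `M` with symbols in `Fin t`. -/
def IsLatinSquare {M t : ℕ} (f : Fin M × Fin M → Fin t) : Prop :=
  (∀ a : Fin M, Function.Injective fun b => f (a, b)) ∧
  (∀ b : Fin M, Function.Injective fun a => f (a, b))

/-- `f` removes the fade state `s`: it is constant on every singularity
removal constraint. -/
def RemovesFadeState (M : ℕ) (S : Fin M → ℂ) (s : ℂ) {t : ℕ}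
    (f : Fin M × Fin M → Fin t) : Prop :=
  ∀ p q : Fin M × Fin M, S p.1 + s * S p.2 = S q.1 + s * S q.2 → f p = f q

/-- The set of singularity removal constraints containing at least two cells. -/
def vitalSet (M : ℕ) (S : Fin M → ℂ) (s : ℂ) : Set (Quotient (fadeSetoid M S s)) :=
  {c | ∃ p q : Fin M × Fin M, p ≠ q ∧
    Quotient.mk (fadeSetoid M S s) p = c ∧ Quotient.mk (fadeSetoid M S s) q = c}

/-- The vital subgraph: the induced subgraph of the singularity removal graph
on the classes of size at least two. -/
def vital (M : ℕ) (S : Fin M → ℂ) (s : ℂ) : SimpleGraph (vitalSet M S s) :=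
  (srg M S s).induce (vitalSet M S s)

/-- The `M`-PSK signal set `S m = exp (i (2m+1) π / M)`. -/
def PSK (M : ℕ) : Fin M → ℂ :=
  fun m => Complex.exp (Complex.I * (2 * (m : ℕ) + 1) * (Real.pi : ℂ) / (M : ℂ))

/-- The square `n²`-QAM signal set: `S (k + l n) = (−n+1+2l) + (−n+1+2k) i`. -/
def QAM (n : ℕ) : Fin (n ^ 2) → ℂ := fun j =>
  (((2 * ((j : ℕ) / n) + 1 : ℤ) - (n : ℤ) : ℤ) : ℂ) +
    (((2 * ((j : ℕ) % n) + 1 : ℤ) - (n : ℤ) : ℤ) : ℂ) * Complex.I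

section Aux
variable (M : ℕ) (S : Fin M → ℂ) (s : ℂ)

lemma latin_to_colorable {t : ℕ} (f : Fin M × Fin M → Fin t)
    (hL : IsLatinSquare f) (hR : RemovesFadeState M S s f) :
    (srg M S s).Colorable (Finset.univ.image f).card := by
  classical
  let g : Quotient (fadeSetoid M S s) → ↥(Finset.univ.image f) :=
    Quotient.lift (fun p => (⟨f p, Finset.mem_image_of_mem f (Finset.mem_univ p)⟩ :
        ↥(Finset.univ.image f)))
      (fun p q h => by exact Subtype.ext (hR p q h))
  have hvalid : ∀ {u v}, (srg M S s).Adj u v → g u ≠ g v := by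
    rintro u v ⟨hne, ⟨pa, pb⟩, ⟨qa, qb⟩, hp, hq, hshare⟩ hgeq
    subst hp; subst hq
    have hfpq : f (pa, pb) = f (qa, qb) := congrArg Subtype.val hgeq
    rcases hshare with h1 | h2
    · simp only at h1
      subst h1
      have : pb = qb := hL.1 pa hfpq
      exact hne (by rw [this])
    · simp only at h2
      subst h2
      have : pa = qa := hL.2 pb hfpq
      exact hne (by rw [this])
  have C : (srg M S s).Coloring ↥(Finset.univ.image f) :=
    SimpleGraph.Coloring.mk g hvalid
  have h := C.colorable
  rwa [Fintype.card_coe] at h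

lemma coloring_to_latin (hS : Function.Injective S) (hs : s ≠ 0) {n : ℕ}
    (C : (srg M S s).Coloring (Fin n)) :
    ∃ (f : Fin M × Fin M → Fin n), IsLatinSquare f ∧ RemovesFadeState M S s f := by
  classical
  refine ⟨fun p => C (Quotient.mk (fadeSetoid M S s) p), ?_, ?_⟩
  · constructor
    · intro a b b' h
      simp only at h
      by_contra hbb
      have hneq : Quotient.mk (fadeSetoid M S s) (a, b) ≠ Quotient.mk (fadeSetoid M S s) (a, b') := by
        intro he
        have : S a + s * S b = S a + s * S b' := Quotient.exact he
        have : S b = S b' := by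
          have h2 : s * S b = s * S b' := by linear_combination this
          exact mul_left_cancel₀ hs h2
        exact hbb (hS this)
      have hadj : (srg M S s).Adj (Quotient.mk (fadeSetoid M S s) (a, b))
          (Quotient.mk (fadeSetoid M S s) (a, b')) :=
        ⟨hneq, (a, b), (a, b'), rfl, rfl, Or.inl rfl⟩
      exact C.valid hadj h
    · intro b a a' h
      simp only at h
      by_contra haa
      have hneq : Quotient.mk (fadeSetoid M S s) (a, b) ≠ Quotient.mk (fadeSetoid M S s) (a', b) := by
        intro he
        have : S a + s * S b = S a' + s * S b := Quotient.exact he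
        have : S a = S a' := by linear_combination this
        exact haa (hS this)
      have hadj : (srg M S s).Adj (Quotient.mk (fadeSetoid M S s) (a, b))
          (Quotient.mk (fadeSetoid M S s) (a', b)) :=
        ⟨hneq, (a, b), (a', b), rfl, rfl, Or.inr rfl⟩
      exact C.valid hadj h
  · intro p q h
    simp only
    congr 1
    exact Quotient.sound h

end Aux

/-- the minimum number of symbols actually used by a Latin square
of order `M` removing the fade state `s` equals the chromatic number of the
singularity removal graph. -/
theorem min_symbols_eq_chromaticNumber (M : ℕ) (hM : 2 ≤ M)
    (S : Fin M → ℂ) (hS : Function.Injective S) (s : ℂ) (hs : s ≠ 0) :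
    ((sInf {n : ℕ | ∃ (t : ℕ) (f : Fin M × Fin M → Fin t),
        IsLatinSquare f ∧ RemovesFadeState M S s f ∧
        (Finset.univ.image f).card = n} : ℕ) : ℕ∞) =
      (srg M S s).chromaticNumber := by
  classical
  letI : Fintype (Quotient (fadeSetoid M S s)) :=
    @Quotient.fintype _ _ _ (fun _ _ => Classical.dec _)
  set T := {n : ℕ | ∃ (t : ℕ) (f : Fin M × Fin M → Fin t),
      IsLatinSquare f ∧ RemovesFadeState M S s f ∧
      (Finset.univ.image f).card = n} with hT
  have htop : (srg M S s).chromaticNumber ≠ ⊤ :=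
    (SimpleGraph.chromaticNumber_ne_top_iff_exists).2
      ⟨_, (srg M S s).colorable_of_fintype⟩
  obtain ⟨C⟩ := (srg M S s).colorable_chromaticNumber_of_fintype
  obtain ⟨f, hL, hR⟩ := coloring_to_latin M S s hS hs C
  have hmem : (Finset.univ.image f).card ∈ T := ⟨_, f, hL, hR, rfl⟩
  have hne : T.Nonempty := ⟨_, hmem⟩
  obtain ⟨t, g, hLg, hRg, hcard⟩ := Nat.sInf_mem hne
  apply le_antisymm
  · have h1 : sInf T ≤ (Finset.univ.image f).card := Nat.sInf_le hmem
    have h2 : (Finset.univ.image f).card ≤ ENat.toNat (srg M S s).chromaticNumber := by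
      simpa using Finset.card_le_univ (Finset.univ.image f)
    have h3 : sInf T ≤ ENat.toNat (srg M S s).chromaticNumber := h1.trans h2
    calc ((sInf T : ℕ) : ℕ∞) ≤ (ENat.toNat (srg M S s).chromaticNumber : ℕ∞) := by
          exact_mod_cast h3
      _ = (srg M S s).chromaticNumber := ENat.coe_toNat htop
  · rw [← hcard]
    exact (latin_to_colorable M S s g hLg hRg).chromaticNumber_le
end
end

section
/- Let M = n² with n ≥ 2 an integer, and let S be the square M-QAM signal set. Then each of the eight complex numbers 1+i, 1−i, −1+i, −1−i, (1+i)/2, (1−i)/2, (−1+i)/2, (−1−i)/2 is a singular fade state for S, i.e., for each such s there exist distinct pairs (a,b) ≠ (a',b') in (Fin M) × (Fin M) with S a + s·S b = S a' + s·S b'. -/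
noncomputable section

lemma qam_val (n : ℕ) (j : ℕ) (h : j < n ^ 2) (k l : ℕ) (hd : j / n = l) (hm : j % n = k) :
    QAM n ⟨j, h⟩ = ((2 * (l : ℂ) + 1) - n) + ((2 * (k : ℂ) + 1) - n) * Complex.I := by
  have h1 : ((j : ℤ) / (n : ℤ)) = (l : ℤ) := by rw [← Int.natCast_ediv, hd]
  have h2 : ((j : ℤ) % (n : ℤ)) = (k : ℤ) := by rw [← Int.natCast_emod, hm]
  simp only [QAM, Fin.val_mk, h1, h2]
  push_cast
  ring

/-- each of the eight listed complex numbers is a singular fade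
state for the square `n²`-QAM signal set. -/
theorem qam_eight_singular_fade_states (n : ℕ) (hn : 2 ≤ n) (s : ℂ)
    (hs : s ∈ ({1 + Complex.I, 1 - Complex.I, -1 + Complex.I, -1 - Complex.I,
      (1 + Complex.I) / 2, (1 - Complex.I) / 2, (-1 + Complex.I) / 2,
      (-1 - Complex.I) / 2} : Set ℂ)) :
    s ≠ 0 ∧ ∃ p q : Fin (n ^ 2) × Fin (n ^ 2), p ≠ q ∧
      QAM n p.1 + s * QAM n p.2 = QAM n q.1 + s * QAM n q.2 := by
  have hn0 : 0 < n := by omega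
  have h0 : 0 < n ^ 2 := by positivity
  have h1 : 1 < n ^ 2 := by nlinarith
  have h2 : n < n ^ 2 := by nlinarith
  have h3 : n + 1 < n ^ 2 := by nlinarith
  have hA := qam_val n 0 h0 0 0 (Nat.zero_div n) (Nat.zero_mod n)
  have hB := qam_val n 1 h1 1 0 (Nat.div_eq_of_lt (by omega)) (Nat.mod_eq_of_lt (by omega))
  have hC := qam_val n n h2 0 1 (Nat.div_self hn0) (Nat.mod_self n)
  have hD := qam_val n (n + 1) h3 1 1
    (by rw [Nat.add_comm, Nat.add_div_right _ hn0, Nat.div_eq_of_lt (by omega)])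
    (by rw [Nat.add_comm, Nat.add_mod_right, Nat.mod_eq_of_lt (by omega)])
  norm_num at hA hB hC hD
  simp only [Set.mem_insert_iff, Set.mem_singleton_iff] at hs
  rcases hs with rfl | rfl | rfl | rfl | rfl | rfl | rfl | rfl
  · refine ⟨by simp [Complex.ext_iff], ⟨⟨n + 1, h3⟩, ⟨0, h0⟩⟩, ⟨⟨0, h0⟩, ⟨n, h2⟩⟩,
      by simp only [ne_eq, Prod.mk.injEq, Fin.mk.injEq, not_and]; omega, ?_⟩
    simp only [hA, hB, hC, hD]
    ring
  · refine ⟨by simp [Complex.ext_iff], ⟨⟨n, h2⟩, ⟨0, h0⟩⟩, ⟨⟨1, h1⟩, ⟨n, h2⟩⟩,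
      by simp only [ne_eq, Prod.mk.injEq, Fin.mk.injEq, not_and]; omega, ?_⟩
    simp only [hA, hB, hC, hD]
    ring
  · refine ⟨by simp [Complex.ext_iff], ⟨⟨1, h1⟩, ⟨0, h0⟩⟩, ⟨⟨n, h2⟩, ⟨n, h2⟩⟩,
      by simp only [ne_eq, Prod.mk.injEq, Fin.mk.injEq, not_and]; omega, ?_⟩
    simp only [hA, hB, hC, hD]
    ring
  · refine ⟨by simp [Complex.ext_iff], ⟨⟨0, h0⟩, ⟨0, h0⟩⟩, ⟨⟨n + 1, h3⟩, ⟨n, h2⟩⟩,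
      by simp only [ne_eq, Prod.mk.injEq, Fin.mk.injEq, not_and]; omega, ?_⟩
    simp only [hA, hB, hC, hD]
    ring
  · refine ⟨by simp [div_eq_zero_iff, Complex.ext_iff], ⟨⟨1, h1⟩, ⟨0, h0⟩⟩, ⟨⟨0, h0⟩, ⟨n + 1, h3⟩⟩,
      by simp only [ne_eq, Prod.mk.injEq, Fin.mk.injEq, not_and]; omega, ?_⟩
    simp only [hA, hB, hC, hD]
    linear_combination (-1 : ℂ) * Complex.I_sq
  · refine ⟨by simp [div_eq_zero_iff, Complex.ext_iff], ⟨⟨n, h2⟩, ⟨0, h0⟩⟩, ⟨⟨0, h0⟩, ⟨n + 1, h3⟩⟩,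
      by simp only [ne_eq, Prod.mk.injEq, Fin.mk.injEq, not_and]; omega, ?_⟩
    simp only [hA, hB, hC, hD]
    linear_combination (1 : ℂ) * Complex.I_sq
  · refine ⟨by simp [div_eq_zero_iff, Complex.ext_iff], ⟨⟨0, h0⟩, ⟨0, h0⟩⟩, ⟨⟨n, h2⟩, ⟨n + 1, h3⟩⟩,
      by simp only [ne_eq, Prod.mk.injEq, Fin.mk.injEq, not_and]; omega, ?_⟩
    simp only [hA, hB, hC, hD]
    linear_combination (-1 : ℂ) * Complex.I_sq
  · refine ⟨by simp [div_eq_zero_iff, Complex.ext_iff], ⟨⟨0, h0⟩, ⟨0, h0⟩⟩, ⟨⟨1, h1⟩, ⟨n + 1, h3⟩⟩,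
      by simp only [ne_eq, Prod.mk.injEq, Fin.mk.injEq, not_and]; omega, ?_⟩
    simp only [hA, hB, hC, hD]
    linear_combination (1 : ℂ) * Complex.I_sq
end
end

section
/- Let M = 2^λ with λ ≥ 3, let S be the M-PSK signal set, and let k ∈ {1,…,M/2−1}. Set s equal to sin(kπ/M) or 1/sin(kπ/M) if k is even, and equal to sin(kπ/M)·exp(iπ/M) or (1/sin(kπ/M))·exp(iπ/M) if k is odd. Then the vital subgraph G_s^V of the singularity removal graph G_s is isomorphic to the circulant graph on ZMod M with connection set {k, −k, M/2}. -/
noncomputable section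

/-- The circulant graph on `ZMod M` with connection set `T`:
`i` and `j` are adjacent iff `i ≠ j` and `j - i ∈ T ∪ (-T)`. -/
def circulant (M : ℕ) (T : Set (ZMod M)) : SimpleGraph (ZMod M) :=
  SimpleGraph.fromRel (fun i j => j - i ∈ T)


open Polynomial in
private lemma fold_lemma (lam M : ℕ) (hM : M = 2 ^ lam) (hlam : 1 ≤ lam) [NeZero M] (ω : ℂ)
    (hω : IsPrimitiveRoot ω M) (f : ZMod M → ℤ)
    (hf : ∑ j : ZMod M, (f j : ℂ) * ω ^ (j.val) = 0) :
    ∀ j : ZMod M, f j = f (j + ((M / 2 : ℕ) : ZMod M)) := by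
  have hM0 : 0 < M := by rw [hM]; positivity
  set h : ℕ := M / 2 with hh
  have hMhh : M = h + h := by
    rw [hh, hM]
    have : 2 ^ lam = 2 * 2 ^ (lam - 1) := by
      rw [← pow_succ']
      congr 1
      omega
    omega
  have hhpos : 0 < h := by omega
  have hhM : h < M := by omega
  have hωM : ω ^ M = 1 := hω.pow_eq_one
  have hωh : ω ^ h = -1 := by
    have hsq : (ω ^ h - 1) * (ω ^ h + 1) = 0 := by
      have : (ω ^ h) * (ω ^ h) = 1 := by
        rw [← pow_add, ← hMhh, hωM]
      linear_combination this
    have hne : ω ^ h ≠ 1 := hω.pow_ne_one_of_pos_of_lt hhpos.ne' hhM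
    rcases mul_eq_zero.mp hsq with h1 | h2
    · exact absurd (by linear_combination h1) hne
    · linear_combination h2
  have step1 : ∑ n ∈ Finset.range M, (f ((n : ZMod M)) : ℂ) * ω ^ n = 0 := by
    rw [← hf]
    rw [← Fin.sum_univ_eq_sum_range (fun n => (f ((n : ZMod M)) : ℂ) * ω ^ n) M]
    apply Finset.sum_nbij' (fun (i : Fin M) => ((i : ℕ) : ZMod M))
      (fun (z : ZMod M) => (⟨z.val, z.val_lt⟩ : Fin M))
    · intros; exact Finset.mem_univ _
    · intros; exact Finset.mem_univ _
    · intro i _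
      apply Fin.ext
      simp [ZMod.val_cast_of_lt i.isLt]
    · intro z _
      simp [ZMod.natCast_rightInverse z]
    · intro i _
      rw [ZMod.val_cast_of_lt i.isLt]
  have hz2 : ((h : ℕ) : ZMod M) + ((h : ℕ) : ZMod M) = 0 := by
    rw [← Nat.cast_add, ← hMhh, ZMod.natCast_self]
  have step2 : ∑ n ∈ Finset.range h,
      (((f ((n : ZMod M)) - f ((n : ZMod M) + (h : ZMod M))) : ℤ) : ℂ) * ω ^ n = 0 := by
    have esplit : ∑ n ∈ Finset.range M, (f ((n : ZMod M)) : ℂ) * ω ^ n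
        = (∑ n ∈ Finset.Ico 0 h, (f ((n : ZMod M)) : ℂ) * ω ^ n)
          + ∑ n ∈ Finset.Ico h M, (f ((n : ZMod M)) : ℂ) * ω ^ n := by
      rw [Finset.range_eq_Ico,
        ← Finset.sum_Ico_consecutive _ (by omega : 0 ≤ h) (by omega : h ≤ M)]
    have e2 : ∑ n ∈ Finset.Ico h M, (f ((n : ZMod M)) : ℂ) * ω ^ n
        = ∑ n ∈ Finset.range h, (f ((n : ZMod M) + (h : ZMod M)) : ℂ) * (- ω ^ n) := by
      rw [Finset.sum_Ico_eq_sum_range]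
      have : M - h = h := by omega
      rw [this]
      apply Finset.sum_congr rfl
      intro n _
      have c1 : ((h + n : ℕ) : ZMod M) = (n : ZMod M) + (h : ZMod M) := by
        push_cast; ring
      rw [c1, pow_add, hωh]
      ring
    rw [esplit, e2, ← Finset.range_eq_Ico] at step1
    rw [← step1, ← Finset.sum_add_distrib]
    apply Finset.sum_congr rfl
    intro n _
    push_cast
    ring
  set Q : ℚ[X] := ∑ n ∈ Finset.range h,
    C (((f ((n : ZMod M)) - f ((n : ZMod M) + (h : ZMod M))) : ℤ) : ℚ) * X ^ n with hQ
  have haeval : aeval ω Q = 0 := by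
    rw [hQ, map_sum, ← step2]
    apply Finset.sum_congr rfl
    intro n _
    rw [map_mul, map_pow, aeval_X, aeval_C]
    norm_num [eq_ratCast (algebraMap ℚ ℂ)]
  have hdeg : Q.natDegree < h := by
    have : Q.natDegree ≤ h - 1 := by
      apply Polynomial.natDegree_sum_le_of_forall_le
      intro i hi
      refine le_trans (Polynomial.natDegree_C_mul_le _ _) ?_
      rw [Polynomial.natDegree_X_pow]
      have := Finset.mem_range.mp hi
      omega
    omega
  have htot : M.totient = h := by
    rw [hM, Nat.totient_prime_pow Nat.prime_two (by omega : 0 < lam)]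
    have h2 : 2 ^ lam = 2 ^ (lam - 1) * 2 := by
      rw [← pow_succ]; congr 1; omega
    omega
  have hminpoly : minpoly ℚ ω = cyclotomic M ℚ :=
    (cyclotomic_eq_minpoly_rat hω hM0).symm
  have hQ0 : Q = 0 := by
    apply Polynomial.eq_zero_of_dvd_of_natDegree_lt (minpoly.dvd ℚ ω haeval)
    rw [hminpoly, Polynomial.natDegree_cyclotomic, htot]
    exact hdeg
  have hcoeff : ∀ n, n < h → f ((n : ZMod M)) = f ((n : ZMod M) + (h : ZMod M)) := by
    intro n hn
    have hcz : Q.coeff n = 0 := by rw [hQ0]; simp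
    rw [hQ, Polynomial.finset_sum_coeff] at hcz
    simp only [Polynomial.coeff_C_mul, Polynomial.coeff_X_pow] at hcz
    rw [Finset.sum_eq_single n] at hcz
    · simp at hcz
      exact_mod_cast sub_eq_zero.mp (by exact_mod_cast hcz)
    · intro b _ hbn
      simp [Ne.symm hbn]
    · intro hnmem
      exact absurd (Finset.mem_range.mpr hn) hnmem
  intro j
  by_cases hj : j.val < h
  · have := hcoeff j.val hj
    rwa [ZMod.natCast_rightInverse j] at this
  · have hjv : j.val - h < h := by have := ZMod.val_lt j; omega
    have this2 := hcoeff (j.val - h) hjv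
    have hjj2 : ((j.val - h : ℕ) : ZMod M) + (h : ZMod M) = j := by
      rw [← Nat.cast_add]
      have e : (j.val - h) + h = j.val := by omega
      rw [e]
      exact ZMod.natCast_rightInverse j
    rw [← hjj2, add_assoc, hz2, add_zero]
    exact this2.symm



/-- weight function: six signed indicators -/
private def wt6 {M : ℕ} (a b c d e g j : ZMod M) : ℤ :=
  (if j = a then 2 else 0) - (if j = b then 2 else 0) - (if j = c then 1 else 0)
    + (if j = d then 1 else 0) + (if j = e then 1 else 0) - (if j = g then 1 else 0)

private lemma noSolA {M : ℕ} (hz k a b g : ZMod M)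
    (hz0 : hz ≠ 0) (hk0 : k ≠ 0) (hkk : k + k ≠ 0) (hab : a ≠ b)
    (H : ∀ j : ZMod M, wt6 a b (g + k + k) (g + k) (g + k) g j
        = wt6 a b (g + k + k) (g + k) (g + k) g (j + hz)) : False := by
  have F1 : ¬(g + k = g + k + k) := fun h => hk0 (by linear_combination -h)
  have F2 : ¬(g + k = g) := fun h => hk0 (by linear_combination h)
  have F3 : ¬(g = g + k + k) := fun h => hkk (by linear_combination -h)
  have F4 : ¬(g = g + k) := fun h => hk0 (by linear_combination -h)
  have F5 : ¬(g + k + k = g + k) := fun h => hk0 (by linear_combination h)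
  have F6 : ¬(g + k + k = g) := fun h => hkk (by linear_combination h)
  by_cases had : a = g + k
  · -- value 4 at a; impossible
    have Ha := H a
    simp only [wt6, if_true] at Ha
    rw [if_neg hab, if_pos had] at Ha
    rw [if_neg (show ¬(a = g + k + k) from had ▸ F1)] at Ha
    rw [if_neg (show ¬(a = g) from had ▸ F2)] at Ha
    rw [if_neg (show ¬(a + hz = a) from fun h => hz0 (by linear_combination h))] at Ha
    rw [if_neg (show ¬(a + hz = g + k) from fun h => hz0 (by linear_combination h - had))] at Ha
    split_ifs at Ha <;> omega
  · by_cases hac : a = g + k + k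
    · -- value 1 at a
      have Ha := H a
      simp only [wt6, if_true] at Ha
      rw [if_neg hab, if_pos hac, if_neg had] at Ha
      rw [if_neg (show ¬(a = g) from fun h => hkk (by linear_combination h - hac))] at Ha
      rw [if_neg (show ¬(a + hz = a) from fun h => hz0 (by linear_combination h))] at Ha
      rw [if_neg (show ¬(a + hz = g + k + k) from fun h => hz0 (by linear_combination h - hac))] at Ha
      split_ifs at Ha <;> try omega
      -- surviving: a+hz = g+k and a+hz = g
      exact hk0 (by linear_combination ‹a + hz = g› - ‹a + hz = g + k›)
    · by_cases hag : a = g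
      · have Ha := H a
        simp only [wt6, if_true] at Ha
        rw [if_neg hab, if_pos hag] at Ha
        rw [if_neg (show ¬(a = g + k + k) from hag ▸ F3)] at Ha
        rw [if_neg (show ¬(a = g + k) from hag ▸ F4)] at Ha
        rw [if_neg (show ¬(a + hz = a) from fun h => hz0 (by linear_combination h))] at Ha
        rw [if_neg (show ¬(a + hz = g) from fun h => hz0 (by linear_combination h - hag))] at Ha
        split_ifs at Ha <;> try omega
        -- surviving: a+hz = g+k+k and a+hz = g+k
        exact hk0 (by linear_combination ‹a + hz = g + k› - ‹a + hz = g + k + k›)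
      · -- a not among support points: value 2; forces a + hz = g + k
        have Ha := H a
        simp only [wt6, if_true] at Ha
        rw [if_neg hab, if_neg hac, if_neg had, if_neg hag] at Ha
        rw [if_neg (show ¬(a + hz = a) from fun h => hz0 (by linear_combination h))] at Ha
        split_ifs at Ha <;> try omega
        -- surviving branch: ¬(a+hz=b), ¬(a+hz=g+k+k), a+hz=g+k, ¬(a+hz=g)
        have hd2 : a + hz = g + k := ‹a + hz = g + k›
        have hnb : ¬(a + hz = b) := ‹¬(a + hz = b)›
        have hbd : ¬(b = g + k) := fun h => hnb (by rw [h]; exact hd2)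
        have hba : ¬(b = a) := fun h => hab h.symm
        have hbhzb : ¬(b + hz = b) := fun h => hz0 (by linear_combination h)
        have hbhzd : ¬(b + hz = g + k) := fun h => hab (by linear_combination hd2 - h)
        by_cases hbc : b = g + k + k
        · by_cases hbg : b = g
          · exact hkk (by linear_combination hbg - hbc)
          · have Hb := H b
            simp only [wt6, if_true] at Hb
            rw [if_neg hba, if_pos hbc, if_neg hbd, if_neg hbg, if_neg hbhzb,
              if_neg hbhzd] at Hb
            split_ifs at Hb <;> omega
        · by_cases hbg : b = g
          · have Hb := H b
            simp only [wt6, if_true] at Hb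
            rw [if_neg hba, if_neg hbc, if_neg hbd, if_pos hbg, if_neg hbhzb,
              if_neg hbhzd] at Hb
            split_ifs at Hb <;> omega
          · have Hb := H b
            simp only [wt6, if_true] at Hb
            rw [if_neg hba, if_neg hbc, if_neg hbd, if_neg hbg, if_neg hbhzb,
              if_neg hbhzd] at Hb
            split_ifs at Hb <;> try omega
            exact hkk (by linear_combination ‹b + hz = g› - ‹b + hz = g + k + k›)



private lemma coreAux {M : ℕ} (hz k D : ZMod M)
    (hz0 : hz ≠ 0) (hzz : hz + hz = 0)
    (hk0 : k ≠ 0) (hkk : k + k ≠ 0) (hkh : k ≠ hz)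
    (hD0 : D ≠ 0) (a b c d e g : ZMod M) (hab : a ≠ b)
    (hc : c = g + D + k) (hd : d = g + k) (he : e = g + D)
    (H : ∀ j : ZMod M, wt6 a b c d e g j = wt6 a b c d e g (j + hz)) :
    D = hz ∧ ((a = c ∧ b = e) ∨ (a = g ∧ b = d)) := by
  by_cases hDk : D = k
  · exfalso
    apply noSolA hz k a b g hz0 hk0 hkk hab
    intro j
    have h := H j
    rw [show c = g + k + k by rw [hc, hDk]; try ring, hd,
      show e = g + k by rw [he, hDk]] at h
    exact h
  · by_cases hDk' : D = -k
    · exfalso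
      apply noSolA hz k b a (g - k) hz0 hk0 hkk (fun h => hab h.symm)
      have key : ∀ i : ZMod M,
          wt6 b a (g - k + k + k) (g - k + k) (g - k + k) (g - k) i
            = - wt6 a b c d e g i := by
        intro i
        rw [show g - k + k + k = d by rw [hd]; try ring,
          show g - k + k = g by try ring,
          show g - k = e by rw [he, hDk']; try ring,
          show c = g by rw [hc, hDk']; try ring]
        simp only [wt6]
        split_ifs <;> omega
      intro j
      rw [key j, key (j + hz), H j]
    · -- main case
      subst hc hd he
      by_cases hAc : a = g + D + k
      · -- value 1 at a = c
        have Ha := H a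
        simp only [wt6, if_true] at Ha
        rw [if_neg hab, if_pos hAc] at Ha
        rw [if_neg (show ¬(a = g + k) from fun h => hD0 (by linear_combination h - hAc))] at Ha
        rw [if_neg (show ¬(a = g + D) from fun h => hk0 (by linear_combination h - hAc))] at Ha
        rw [if_neg (show ¬(a = g) from fun h => hDk' (by linear_combination h - hAc))] at Ha
        rw [if_neg (show ¬(a + hz = a) from fun h => hz0 (by linear_combination h))] at Ha
        rw [if_neg (show ¬(a + hz = g + D + k) from fun h => hz0 (by linear_combination h - hAc))] at Ha
        split_ifs at Ha <;> try omega
        · -- a+hz = g+k and a+hz = g+D : D = k, contradiction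
          exact absurd (by linear_combination ‹a + hz = g + k› - ‹a + hz = g + D›) hDk
        · -- MAIN1 : a+hz = g+k, so D = hz ; show b = e
          have hDz : D = hz := by linear_combination ‹a + hz = g + k› - hAc - hzz
          have He := H (g + D)
          simp only [wt6, if_true] at He
          rw [if_neg (show ¬(g + D = a) from fun h => hk0 (by linear_combination -h - hAc))] at He
          rw [if_neg (show ¬(g + D = g + D + k) from fun h => hk0 (by linear_combination -h))] at He
          rw [if_neg (show ¬(g + D = g + k) from fun h => hDk (by linear_combination h))] at He
          rw [if_neg (show ¬(g + D = g) from fun h => hD0 (by linear_combination h))] at He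
          rw [show g + D + hz = g by rw [hDz]; linear_combination hzz] at He
          rw [if_neg (show ¬(g = a) from fun h => hDk' (by linear_combination -h - hAc))] at He
          rw [if_neg (show ¬(g = g + D + k) from fun h => hDk' (by linear_combination -h))] at He
          rw [if_neg (show ¬(g = g + k) from fun h => hk0 (by linear_combination -h))] at He
          rw [if_neg (show ¬(g = g + D) from fun h => hD0 (by linear_combination -h))] at He
          split_ifs at He <;> try omega
          exact ⟨hDz, Or.inl ⟨hAc, (‹g + D = b›).symm⟩⟩
        · -- a+hz = g+D alone : k = hz, contradiction
          exact absurd (by linear_combination ‹a + hz = g + D› - hAc - hzz) hkh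
      · by_cases hAg : a = g
        · -- value 1 at a = g
          have Ha := H a
          simp only [wt6, if_true] at Ha
          rw [if_neg hab, if_neg hAc, if_pos hAg] at Ha
          rw [if_neg (show ¬(a = g + k) from fun h => hk0 (by linear_combination hAg - h))] at Ha
          rw [if_neg (show ¬(a = g + D) from fun h => hD0 (by linear_combination hAg - h))] at Ha
          rw [if_neg (show ¬(a + hz = a) from fun h => hz0 (by linear_combination h))] at Ha
          rw [if_neg (show ¬(a + hz = g) from fun h => hz0 (by linear_combination h - hAg))] at Ha
          split_ifs at Ha <;> try omega
          · -- c and d: D = 0 contradiction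
            exact absurd (by linear_combination ‹a + hz = g + k› - ‹a + hz = g + D + k›) hD0
          · -- d alone : k = hz contradiction
            exact absurd (by linear_combination hAg - ‹a + hz = g + k›) hkh
          · -- MAIN2 : e alone : D = hz ; show b = d
            have hDz : D = hz := by linear_combination hAg - ‹a + hz = g + D›
            have Hd := H (g + k)
            simp only [wt6, if_true] at Hd
            rw [if_neg (show ¬(g + k = a) from fun h => hk0 (by linear_combination h + hAg))] at Hd
            rw [if_neg (show ¬(g + k = g + D + k) from fun h => hD0 (by linear_combination -h))] at Hd
            rw [if_neg (show ¬(g + k = g + D) from fun h => hDk (by linear_combination -h))] at Hd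
            rw [if_neg (show ¬(g + k = g) from fun h => hk0 (by linear_combination h))] at Hd
            rw [show g + k + hz = g + D + k by rw [hDz]; try ring] at Hd
            rw [if_neg (show ¬(g + D + k = a) from fun h => hDk' (by linear_combination h + hAg))] at Hd
            rw [if_neg (show ¬(g + D + k = g + k) from fun h => hD0 (by linear_combination h))] at Hd
            rw [if_neg (show ¬(g + D + k = g + D) from fun h => hk0 (by linear_combination h))] at Hd
            rw [if_neg (show ¬(g + D + k = g) from fun h => hDk' (by linear_combination h))] at Hd
            split_ifs at Hd <;> try omega
            exact ⟨hDz, Or.inr ⟨hAg, (‹g + k = b›).symm⟩⟩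
        · by_cases hAd : a = g + k
          · -- value 3, impossible
            have Ha := H a
            simp only [wt6, if_true] at Ha
            rw [if_neg hab, if_neg hAc, if_pos hAd, if_neg hAg] at Ha
            rw [if_neg (show ¬(a = g + D) from fun h => hDk (by linear_combination hAd - h))] at Ha
            rw [if_neg (show ¬(a + hz = a) from fun h => hz0 (by linear_combination h))] at Ha
            rw [if_neg (show ¬(a + hz = g + k) from fun h => hz0 (by linear_combination h - hAd))] at Ha
            split_ifs at Ha <;> omega
          · by_cases hAe : a = g + D
            · have Ha := H a
              simp only [wt6, if_true] at Ha
              rw [if_neg hab, if_neg hAc, if_neg hAd, if_pos hAe, if_neg hAg] at Ha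
              rw [if_neg (show ¬(a + hz = a) from fun h => hz0 (by linear_combination h))] at Ha
              rw [if_neg (show ¬(a + hz = g + D) from fun h => hz0 (by linear_combination h - hAe))] at Ha
              split_ifs at Ha <;> omega
            · -- value 2, impossible
              exfalso
              have Ha := H a
              simp only [wt6, if_true] at Ha
              rw [if_neg hab, if_neg hAc, if_neg hAd, if_neg hAe, if_neg hAg] at Ha
              rw [if_neg (show ¬(a + hz = a) from fun h => hz0 (by linear_combination h))] at Ha
              split_ifs at Ha <;> try omega
              exact absurd (by linear_combination ‹a + hz = g + k› - ‹a + hz = g + D›) hDk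



private lemma pow_val_mod {M : ℕ} (ω : ℂ) (hω : IsPrimitiveRoot ω M) (n : ℕ) : ω ^ (n % M) = ω ^ n := by
  conv_rhs => rw [← Nat.div_add_mod n M]
  rw [pow_add, pow_mul, hω.pow_eq_one, one_pow, one_mul]

private lemma epow_add {M : ℕ} [NeZero M] (ω : ℂ) (hω : IsPrimitiveRoot ω M) (x y : ZMod M) :
    ω ^ (x + y).val = ω ^ x.val * ω ^ y.val := by
  rw [ZMod.val_add, pow_val_mod ω hω, pow_add]

private lemma epow_inj {M : ℕ} [NeZero M] (ω : ℂ) (hω : IsPrimitiveRoot ω M) (x y : ZMod M) (h : ω ^ x.val = ω ^ y.val) : x = y := by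
  have := hω.pow_inj x.val_lt y.val_lt h
  have h2 : ((x.val : ℕ) : ZMod M) = ((y.val : ℕ) : ZMod M) := by rw [this]
  rwa [ZMod.natCast_rightInverse x, ZMod.natCast_rightInverse y] at h2

private lemma sum_wt6 {M : ℕ} [NeZero M] (ω : ℂ) (a b c d e g : ZMod M) :
    ∑ j : ZMod M, ((wt6 a b c d e g j : ℤ) : ℂ) * ω ^ j.val
      = 2 * ω ^ a.val - 2 * ω ^ b.val - ω ^ c.val + ω ^ d.val + ω ^ e.val - ω ^ g.val := by
  have expand : ∀ j : ZMod M, ((wt6 a b c d e g j : ℤ) : ℂ) * ω ^ j.val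
      = (if j = a then 2 * ω ^ j.val else 0) - (if j = b then 2 * ω ^ j.val else 0)
        - (if j = c then ω ^ j.val else 0) + (if j = d then ω ^ j.val else 0)
        + (if j = e then ω ^ j.val else 0) - (if j = g then ω ^ j.val else 0) := by
    intro j
    simp only [wt6]
    push_cast
    split_ifs <;> ring
  rw [Finset.sum_congr rfl (fun j _ => expand j)]
  simp only [Finset.sum_sub_distrib, Finset.sum_add_distrib]
  rw [Finset.sum_ite_eq' Finset.univ a, Finset.sum_ite_eq' Finset.univ b,
    Finset.sum_ite_eq' Finset.univ c, Finset.sum_ite_eq' Finset.univ d,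
    Finset.sum_ite_eq' Finset.univ e, Finset.sum_ite_eq' Finset.univ g]
  simp




-- the main equation solver
private lemma coreE (lam M : ℕ) (hM : M = 2 ^ lam) (hlam : 3 ≤ lam) [NeZero M]
    (ω : ℂ) (hω : IsPrimitiveRoot ω M) (k : ZMod M)
    (hk0 : k ≠ 0) (hkk : k + k ≠ 0) (hkh : k ≠ ((M / 2 : ℕ) : ZMod M))
    (hz0 : ((M / 2 : ℕ) : ZMod M) ≠ 0) (hzz : ((M / 2 : ℕ) : ZMod M) + ((M / 2 : ℕ) : ZMod M) = 0)
    (U V X Y κ : ZMod M)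
    (heq : 2 * ω ^ U.val - 2 * ω ^ V.val
        = (ω ^ X.val - ω ^ Y.val) * (ω ^ κ.val - ω ^ (κ - k).val)) :
    (U = V ∧ X = Y) ∨
      (X = Y + ((M / 2 : ℕ) : ZMod M) ∧ U = X + κ ∧ V = X + (κ - k)) ∨
      (X = Y + ((M / 2 : ℕ) : ZMod M) ∧ U = Y + (κ - k) ∧ V = Y + κ) := by
  set hz : ZMod M := ((M / 2 : ℕ) : ZMod M) with hhz
  have hκκ : κ ≠ κ - k := fun h => hk0 (by linear_combination h)
  have hκpow : ω ^ κ.val - ω ^ (κ - k).val ≠ 0 := by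
    intro h0
    exact hκκ (epow_inj ω hω _ _ (by linear_combination h0))
  by_cases hXY : X = Y
  · left
    refine ⟨?_, hXY⟩
    apply epow_inj ω hω
    have : 2 * ω ^ U.val - 2 * ω ^ V.val = 0 := by
      rw [heq, hXY]; ring
    linear_combination this / 2
  · have hUV : U ≠ V := by
      intro h
      apply hκpow
      have h2 : (ω ^ X.val - ω ^ Y.val) * (ω ^ κ.val - ω ^ (κ - k).val) = 0 := by
        rw [← heq, h]; ring
      rcases mul_eq_zero.mp h2 with h3 | h3
      · exact absurd (epow_inj ω hω _ _ (by linear_combination h3)) hXY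
      · exact h3
    -- build the fold hypothesis
    have hf : ∑ j : ZMod M, ((wt6 U V (X + κ) (Y + κ) (X + (κ - k)) (Y + (κ - k)) j : ℤ) : ℂ)
        * ω ^ j.val = 0 := by
      rw [sum_wt6]
      rw [epow_add ω hω X κ, epow_add ω hω Y κ, epow_add ω hω X (κ - k),
        epow_add ω hω Y (κ - k)]
      linear_combination heq
    have H := fold_lemma lam M hM (by omega) ω hω _ hf
    have hcore := coreAux hz k (X - Y) hz0 hzz hk0 hkk hkh
      (fun h => hXY (by linear_combination h)) U V (X + κ) (Y + κ) (X + (κ - k))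
      (Y + (κ - k)) hUV (by ring) (by ring) (by ring) H
    rcases hcore with ⟨hD, hfam⟩
    have hXYh : X = Y + hz := by linear_combination hD
    rcases hfam with ⟨h1, h2⟩ | ⟨h1, h2⟩
    · exact Or.inr (Or.inl ⟨hXYh, h1, h2⟩)
    · exact Or.inr (Or.inr ⟨hXYh, h1, h2⟩)



private lemma eqCharN (lam M : ℕ) (hM : M = 2 ^ lam) (hlam : 3 ≤ lam) [NeZero M]
    (ω : ℂ) (hω : IsPrimitiveRoot ω M) (s : ℂ) (kz qz κ : ZMod M)
    (hk0 : kz ≠ 0) (hkk : kz + kz ≠ 0) (hkh : kz ≠ ((M / 2 : ℕ) : ZMod M))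
    (hz0 : ((M / 2 : ℕ) : ZMod M) ≠ 0)
    (hzz : ((M / 2 : ℕ) : ZMod M) + ((M / 2 : ℕ) : ZMod M) = 0)
    (hωh : ω ^ ((M / 2 : ℕ) : ZMod M).val = -1)
    (hs2 : 2 * ω ^ qz.val * s = ω ^ κ.val - ω ^ (κ - kz).val) :
    ∀ A A' B B' : ZMod M,
      (ω ^ A.val + s * ω ^ B.val = ω ^ A'.val + s * ω ^ B'.val) ↔
      ((A = A' ∧ B = B') ∨
       (A' = A + kz ∧ B' = B + ((M / 2 : ℕ) : ZMod M) ∧ B = A + (qz - (κ - kz))) ∨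
       (A = A' + kz ∧ B = B' + ((M / 2 : ℕ) : ZMod M) ∧ B' = A' + (qz - (κ - kz)))) := by
  intro A A' B B'
  set hz : ZMod M := ((M / 2 : ℕ) : ZMod M) with hhz
  set c : ZMod M := qz - (κ - kz) with hcdef
  have hkey : 2 * s * ω ^ c.val = ω ^ kz.val - 1 := by
    have m1 : ω ^ qz.val * ω ^ (kz - κ).val = ω ^ c.val := by
      rw [← epow_add ω hω]; congr 1; rw [hcdef]; ring
    have m2 : ω ^ κ.val * ω ^ (kz - κ).val = ω ^ kz.val := by
      rw [← epow_add ω hω]; congr 1; ring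
    have m3 : ω ^ (κ - kz).val * ω ^ (kz - κ).val = 1 := by
      rw [← epow_add ω hω, show (κ - kz) + (kz - κ) = (0 : ZMod M) by ring,
        ZMod.val_zero, pow_zero]
    linear_combination (-2*s) * m1 + (ω ^ (kz - κ).val) * hs2 + m2 - m3
  constructor
  · intro h
    have heq : 2 * ω ^ (A + qz).val - 2 * ω ^ (A' + qz).val
        = (ω ^ B'.val - ω ^ B.val) * (ω ^ κ.val - ω ^ (κ - kz).val) := by
      rw [epow_add ω hω A qz, epow_add ω hω A' qz]
      linear_combination (2 * ω ^ qz.val) * h + (ω ^ B'.val - ω ^ B.val) * hs2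
    rcases coreE lam M hM hlam ω hω kz hk0 hkk hkh hz0 hzz (A + qz) (A' + qz) B' B κ heq with
      ⟨h1, h2⟩ | ⟨h1, h2, h3⟩ | ⟨h1, h2, h3⟩
    · exact Or.inl ⟨by linear_combination h1, h2.symm⟩
    · refine Or.inr (Or.inr ⟨?_, ?_, ?_⟩)
      · linear_combination h2 - h3
      · linear_combination -h1 - hzz
      · linear_combination -h3
    · refine Or.inr (Or.inl ⟨?_, ?_, ?_⟩)
      · linear_combination h3 - h2
      · exact h1
      · linear_combination -h2
  · intro hca
    rcases hca with ⟨h1, h2⟩ | ⟨h1, h2, h3⟩ | ⟨h1, h2, h3⟩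
    · rw [h1, h2]
    · rw [h2, h3, h1]
      rw [epow_add ω hω (A + c) hz, hωh, epow_add ω hω A c, epow_add ω hω A kz]
      linear_combination (ω ^ A.val) * hkey
    · rw [h2, h3, h1]
      rw [epow_add ω hω (A' + c) hz, hωh, epow_add ω hω A' c, epow_add ω hω A' kz]
      linear_combination -(ω ^ A'.val) * hkey

private lemma eqCharR (lam M : ℕ) (hM : M = 2 ^ lam) (hlam : 3 ≤ lam) [NeZero M]
    (ω : ℂ) (hω : IsPrimitiveRoot ω M) (s : ℂ) (kz wz κ : ZMod M)
    (hk0 : kz ≠ 0) (hkk : kz + kz ≠ 0) (hkh : kz ≠ ((M / 2 : ℕ) : ZMod M))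
    (hz0 : ((M / 2 : ℕ) : ZMod M) ≠ 0)
    (hzz : ((M / 2 : ℕ) : ZMod M) + ((M / 2 : ℕ) : ZMod M) = 0)
    (hωh : ω ^ ((M / 2 : ℕ) : ZMod M).val = -1)
    (hs2r : (ω ^ κ.val - ω ^ (κ - kz).val) * s = 2 * ω ^ wz.val) :
    ∀ A A' B B' : ZMod M,
      (ω ^ A.val + s * ω ^ B.val = ω ^ A'.val + s * ω ^ B'.val) ↔
      ((A = A' ∧ B = B') ∨
       (A' = A + ((M / 2 : ℕ) : ZMod M) ∧ B' = B + (-kz) ∧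
         B = A + (κ - wz + ((M / 2 : ℕ) : ZMod M))) ∨
       (A = A' + ((M / 2 : ℕ) : ZMod M) ∧ B = B' + (-kz) ∧
         B' = A' + (κ - wz + ((M / 2 : ℕ) : ZMod M)))) := by
  intro A A' B B'
  set hz : ZMod M := ((M / 2 : ℕ) : ZMod M) with hhz
  set c : ZMod M := κ - wz + hz with hcdef
  have hkey2 : (ω ^ c.val - ω ^ (c - kz).val) * s = -2 := by
    have m1 : ω ^ κ.val * ω ^ (c - κ).val = ω ^ c.val := by
      rw [← epow_add ω hω]; congr 1; ring
    have m2 : ω ^ (κ - kz).val * ω ^ (c - κ).val = ω ^ (c - kz).val := by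
      rw [← epow_add ω hω]; congr 1; ring
    have m3 : ω ^ wz.val * ω ^ (c - κ).val = -1 := by
      rw [← epow_add ω hω, show wz + (c - κ) = hz by rw [hcdef]; ring]
      exact hωh
    linear_combination (ω ^ (c - κ).val) * hs2r - s * m1 + s * m2 + 2 * m3
  constructor
  · intro h
    have heq : 2 * ω ^ (B' + wz).val - 2 * ω ^ (B + wz).val
        = (ω ^ A.val - ω ^ A'.val) * (ω ^ κ.val - ω ^ (κ - kz).val) := by
      rw [epow_add ω hω B' wz, epow_add ω hω B wz]
      linear_combination (-(ω ^ κ.val - ω ^ (κ - kz).val)) * h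
        + (ω ^ B.val - ω ^ B'.val) * hs2r
    rcases coreE lam M hM hlam ω hω kz hk0 hkk hkh hz0 hzz (B' + wz) (B + wz) A A' κ heq with
      ⟨h1, h2⟩ | ⟨h1, h2, h3⟩ | ⟨h1, h2, h3⟩
    · exact Or.inl ⟨h2, by linear_combination -h1⟩
    · refine Or.inr (Or.inr ⟨h1, ?_, ?_⟩)
      · linear_combination h3 - h2
      · linear_combination h2 + h1
    · refine Or.inr (Or.inl ⟨?_, ?_, ?_⟩)
      · linear_combination -h1 - hzz
      · linear_combination h2 - h3
      · linear_combination h3 - h1 - hzz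
  · intro hca
    rcases hca with ⟨h1, h2⟩ | ⟨h1, h2, h3⟩ | ⟨h1, h2, h3⟩
    · rw [h1, h2]
    · rw [h2, h3, h1]
      rw [show (A + c) + -kz = A + (c - kz) by ring]
      rw [epow_add ω hω A c, epow_add ω hω A (c - kz), epow_add ω hω A hz, hωh]
      linear_combination (ω ^ A.val) * hkey2
    · rw [h2, h3, h1]
      rw [show (A' + c) + -kz = A' + (c - kz) by ring]
      rw [epow_add ω hω A' c, epow_add ω hω A' (c - kz), epow_add ω hω A' hz, hωh]
      linear_combination -(ω ^ A'.val) * hkey2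



private lemma isoLemma (M : ℕ) [NeZero M] (S : Fin M → ℂ) (s : ℂ)
    (x y c : ZMod M) (hx : x ≠ 0) (hy : y ≠ 0) (hxy : x ≠ y)
    (T : Set (ZMod M))
    (hT : ∀ d : ZMod M, (d ∈ T ∨ -d ∈ T) ↔ (d = x ∨ d = -x ∨ d = y ∨ d = -y))
    (CHAR : ∀ p q : Fin M × Fin M,
      (S p.1 + s * S p.2 = S q.1 + s * S q.2) ↔
      (p = q ∨
       (((q.1 : ℕ) : ZMod M) = ((p.1 : ℕ) : ZMod M) + x ∧
        ((q.2 : ℕ) : ZMod M) = ((p.2 : ℕ) : ZMod M) + y ∧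
        ((p.2 : ℕ) : ZMod M) = ((p.1 : ℕ) : ZMod M) + c) ∨
       (((p.1 : ℕ) : ZMod M) = ((q.1 : ℕ) : ZMod M) + x ∧
        ((p.2 : ℕ) : ZMod M) = ((q.2 : ℕ) : ZMod M) + y ∧
        ((q.2 : ℕ) : ZMod M) = ((q.1 : ℕ) : ZMod M) + c))) :
    Nonempty (vital M S s ≃g circulant M T) := by
  classical
  set st := fadeSetoid M S s with hst
  -- basic conversions between Fin M and ZMod M
  let tf : ZMod M → Fin M := fun z => ⟨z.val, z.val_lt⟩
  let Z : Fin M → ZMod M := fun i => ((i : ℕ) : ZMod M)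
  have Ztf : ∀ z, Z (tf z) = z := fun z => ZMod.natCast_rightInverse z
  have tfZ : ∀ i, tf (Z i) = i := by
    intro i
    apply Fin.ext
    show (Z i).val = (i : ℕ)
    exact ZMod.val_cast_of_lt i.isLt
  have tf_inj : ∀ z w, tf z = tf w → z = w := by
    intro z w h
    rw [← Ztf z, ← Ztf w, h]
  have tf_eq : ∀ (z : ZMod M) (i : Fin M), i = tf z ↔ Z i = z := by
    intro z i
    constructor
    · intro h; rw [h, Ztf]
    · intro h; rw [← h, tfZ]
  -- representative cells
  set uu : ZMod M → Fin M × Fin M := fun t => (tf t, tf (t + c)) with huu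
  set vv : ZMod M → Fin M × Fin M := fun t => (tf (t + x), tf (t + c + y)) with hvv
  have huu1 : ∀ t : ZMod M, (((uu t).1 : ℕ) : ZMod M) = t := fun t => Ztf t
  have huu2 : ∀ t : ZMod M, (((uu t).2 : ℕ) : ZMod M) = t + c := fun t => Ztf _
  have hvv1 : ∀ t : ZMod M, (((vv t).1 : ℕ) : ZMod M) = t + x := fun t => Ztf _
  have hvv2 : ∀ t : ZMod M, (((vv t).2 : ℕ) : ZMod M) = t + c + y := fun t => Ztf _
  have tf_eq' : ∀ (z : ZMod M) (i : Fin M), ((i : ℕ) : ZMod M) = z → i = tf z := by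
    intro z i h
    rw [← h, tfZ]
  have mk_eq : ∀ p q : Fin M × Fin M,
      (Quotient.mk st p = Quotient.mk st q) ↔ (S p.1 + s * S p.2 = S q.1 + s * S q.2) :=
    fun p q => ⟨fun h => Quotient.exact h, fun h => Quotient.sound h⟩
  -- class description
  have classEq : ∀ (t : ZMod M) (p : Fin M × Fin M),
      Quotient.mk st p = Quotient.mk st (uu t) ↔ (p = uu t ∨ p = vv t) := by
    intro t p
    rw [mk_eq, CHAR]
    constructor
    · rintro (h | ⟨h1, h2, h3⟩ | ⟨h1, h2, h3⟩)
      · exact Or.inl h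
      · -- impossible: forces x = y
        rw [huu1] at h1
        rw [huu2] at h2
        exact absurd (by linear_combination h2 + h3 - h1) hxy
      · -- p = vv t
        rw [huu1] at h1
        rw [huu2] at h2
        right
        have c1 : p.1 = tf (t + x) := tf_eq' _ _ h1
        have c2 : p.2 = tf (t + c + y) := tf_eq' _ _ h2
        exact Prod.ext c1 c2
    · rintro (h | h)
      · exact Or.inl h
      · right; right
        subst h
        rw [hvv1, hvv2, huu1, huu2]
        exact ⟨rfl, rfl, rfl⟩
  -- membership in the vital set
  have hne_uv : ∀ t : ZMod M, uu t ≠ vv t := by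
    intro t h
    have h1 := congrArg (fun (r : Fin M × Fin M) => ((r.1 : ℕ) : ZMod M)) h
    rw [huu1, hvv1] at h1
    exact hx (by linear_combination -h1)
  have memV : ∀ t : ZMod M, Quotient.mk st (uu t) ∈ vitalSet M S s := by
    intro t
    exact ⟨uu t, vv t, hne_uv t, rfl, ((classEq t (vv t)).mpr (Or.inr rfl)).symm ▸ rfl⟩
  -- injectivity
  have hinj : ∀ t t' : ZMod M,
      Quotient.mk st (uu t) = Quotient.mk st (uu t') → t = t' := by
    intro t t' h
    rcases (classEq t' (uu t)).mp h with h1 | h1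
    · have := congrArg (fun (r : Fin M × Fin M) => ((r.1 : ℕ) : ZMod M)) h1
      rw [huu1, huu1] at this
      exact this
    · exfalso
      have e1 := congrArg (fun (r : Fin M × Fin M) => ((r.1 : ℕ) : ZMod M)) h1
      have e2 := congrArg (fun (r : Fin M × Fin M) => ((r.2 : ℕ) : ZMod M)) h1
      rw [huu1, hvv1] at e1
      rw [huu2, hvv2] at e2
      exact hxy (by linear_combination e2 - e1)
  -- surjectivity onto the vital set
  have hsurj : ∀ u, u ∈ vitalSet M S s → ∃ t : ZMod M, Quotient.mk st (uu t) = u := by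
    rintro u ⟨p, q, hpq, hp, hq⟩
    have hrel : S p.1 + s * S p.2 = S q.1 + s * S q.2 :=
      (mk_eq p q).mp (hp.trans hq.symm)
    rcases (CHAR p q).mp hrel with h | ⟨h1, h2, h3⟩ | ⟨h1, h2, h3⟩
    · exact absurd h hpq
    · refine ⟨((p.1 : ℕ) : ZMod M), ?_⟩
      have hup : uu ((p.1 : ℕ) : ZMod M) = p := by
        apply Prod.ext
        · exact (tfZ p.1)
        · exact (tf_eq' _ _ h3).symm
      rw [hup]
      exact hp
    · refine ⟨((q.1 : ℕ) : ZMod M), ?_⟩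
      have hup : uu ((q.1 : ℕ) : ZMod M) = q := by
        apply Prod.ext
        · exact (tfZ q.1)
        · exact (tf_eq' _ _ h3).symm
      rw [hup]
      exact hq
  -- adjacency transfer
  have zc : ∀ {i j : Fin M}, i = j → ((i : ℕ) : ZMod M) = ((j : ℕ) : ZMod M) :=
    fun h => by rw [h]
  have adjEquiv : ∀ t t' : ZMod M,
      (srg M S s).Adj (Quotient.mk st (uu t)) (Quotient.mk st (uu t')) ↔
        (t ≠ t' ∧ (t' - t = x ∨ t' - t = -x ∨ t' - t = y ∨ t' - t = -y)) := by
    intro t t'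
    constructor
    · rintro ⟨hne, p, q, hp, hq, hshare⟩
      have htt' : t ≠ t' := fun h => hne (by rw [h])
      refine ⟨htt', ?_⟩
      rcases (classEq t p).mp hp with hP | hP <;> rcases (classEq t' q).mp hq with hQ | hQ <;>
        subst hP <;> subst hQ <;> rcases hshare with hrow | hcol
      · exact absurd (by have e := zc hrow; rw [huu1, huu1] at e; exact e) htt'
      · exfalso; have e := zc hcol; rw [huu2, huu2] at e
        exact htt' (by linear_combination e)
      · have e := zc hrow; rw [huu1, hvv1] at e
        exact Or.inr (Or.inl (by linear_combination -e))
      · have e := zc hcol; rw [huu2, hvv2] at e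
        exact Or.inr (Or.inr (Or.inr (by linear_combination -e)))
      · have e := zc hrow; rw [hvv1, huu1] at e
        exact Or.inl (by linear_combination -e)
      · have e := zc hcol; rw [hvv2, huu2] at e
        exact Or.inr (Or.inr (Or.inl (by linear_combination -e)))
      · exfalso; have e := zc hrow; rw [hvv1, hvv1] at e
        exact htt' (by linear_combination e)
      · exfalso; have e := zc hcol; rw [hvv2, hvv2] at e
        exact htt' (by linear_combination e)
    · rintro ⟨htt', hd⟩
      have hne : Quotient.mk st (uu t) ≠ Quotient.mk st (uu t') :=
        fun h => htt' (hinj t t' h)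
      rcases hd with hd | hd | hd | hd
      · have ht' : t' = t + x := by linear_combination hd
        exact ⟨hne, vv t, uu t',
          (classEq t (vv t)).mpr (Or.inr rfl), rfl,
          Or.inl (congrArg tf ht'.symm)⟩
      · have ht : t = t' + x := by linear_combination -hd
        exact ⟨hne, uu t, vv t',
          rfl, (classEq t' (vv t')).mpr (Or.inr rfl),
          Or.inl (congrArg tf ht)⟩
      · have ht' : t' = t + y := by linear_combination hd
        exact ⟨hne, vv t, uu t',
          (classEq t (vv t)).mpr (Or.inr rfl), rfl,
          Or.inr (congrArg tf (by rw [ht']; ring))⟩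
      · have ht : t = t' + y := by linear_combination -hd
        exact ⟨hne, uu t, vv t',
          rfl, (classEq t' (vv t')).mpr (Or.inr rfl),
          Or.inr (congrArg tf (by rw [ht]; ring))⟩
  have circAdj : ∀ t t' : ZMod M,
      (circulant M T).Adj t t' ↔
        (t ≠ t' ∧ (t' - t = x ∨ t' - t = -x ∨ t' - t = y ∨ t' - t = -y)) := by
    intro t t'
    unfold circulant
    rw [SimpleGraph.fromRel_adj]
    rw [show t - t' = -(t' - t) by ring]
    rw [hT (t' - t)]
  -- build the equivalence
  let eqv : ZMod M ≃ ↥(vitalSet M S s) :=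
    Equiv.ofBijective (fun t => ⟨Quotient.mk st (uu t), memV t⟩)
      ⟨fun t t' h => hinj t t' (congrArg Subtype.val h),
       fun u => (hsurj u.1 u.2).imp (fun t ht => Subtype.ext ht)⟩
  exact ⟨SimpleGraph.Iso.symm ⟨eqv, @fun a b => (adjEquiv a b).trans (circAdj a b).symm⟩⟩



-- helper : lift a ZMod-level characterization to cells
private lemma charFin (M : ℕ) [NeZero M] (ω ζ s : ℂ) (hζ0 : ζ ≠ 0)
    (hP : ∀ m : Fin M, PSK M m = ζ * ω ^ (((m : ℕ) : ZMod M)).val)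
    (x y c : ZMod M)
    (hiff : ∀ A A' B B' : ZMod M,
      (ω ^ A.val + s * ω ^ B.val = ω ^ A'.val + s * ω ^ B'.val) ↔
      ((A = A' ∧ B = B') ∨ (A' = A + x ∧ B' = B + y ∧ B = A + c) ∨
       (A = A' + x ∧ B = B' + y ∧ B' = A' + c))) :
    ∀ p q : Fin M × Fin M,
      (PSK M p.1 + s * PSK M p.2 = PSK M q.1 + s * PSK M q.2) ↔
      (p = q ∨
       (((q.1 : ℕ) : ZMod M) = ((p.1 : ℕ) : ZMod M) + x ∧
        ((q.2 : ℕ) : ZMod M) = ((p.2 : ℕ) : ZMod M) + y ∧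
        ((p.2 : ℕ) : ZMod M) = ((p.1 : ℕ) : ZMod M) + c) ∨
       (((p.1 : ℕ) : ZMod M) = ((q.1 : ℕ) : ZMod M) + x ∧
        ((p.2 : ℕ) : ZMod M) = ((q.2 : ℕ) : ZMod M) + y ∧
        ((q.2 : ℕ) : ZMod M) = ((q.1 : ℕ) : ZMod M) + c)) := by
  have hZinj : ∀ i j : Fin M, ((i : ℕ) : ZMod M) = ((j : ℕ) : ZMod M) → i = j := by
    intro i j h
    have := congrArg ZMod.val h
    rw [ZMod.val_cast_of_lt i.isLt, ZMod.val_cast_of_lt j.isLt] at this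
    exact Fin.ext this
  intro p q
  rw [hP p.1, hP p.2, hP q.1, hP q.2]
  have hfact : (ζ * ω ^ (((p.1 : ℕ) : ZMod M)).val
        + s * (ζ * ω ^ (((p.2 : ℕ) : ZMod M)).val)
      = ζ * ω ^ (((q.1 : ℕ) : ZMod M)).val + s * (ζ * ω ^ (((q.2 : ℕ) : ZMod M)).val))
      ↔ (ω ^ (((p.1 : ℕ) : ZMod M)).val + s * ω ^ (((p.2 : ℕ) : ZMod M)).val
      = ω ^ (((q.1 : ℕ) : ZMod M)).val + s * ω ^ (((q.2 : ℕ) : ZMod M)).val) := by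
    constructor
    · intro h
      apply mul_left_cancel₀ hζ0
      linear_combination h
    · intro h
      linear_combination ζ * h
  rw [hfact, hiff]
  apply or_congr _ Iff.rfl
  constructor
  · rintro ⟨h1, h2⟩
    exact Prod.ext (hZinj _ _ h1) (hZinj _ _ h2)
  · rintro rfl
    exact ⟨rfl, rfl⟩

/-- for `M = 2^λ`-PSK and `k ∈ {1, …, M/2 − 1}`, with singular
fade state of absolute value `sin(kπ/M)` or `1/sin(kπ/M)`, the vital subgraph
is isomorphic to the circulant graph on `ZMod M` with connection set
`{k, -k, M/2}`. -/
theorem psk_vital_iso_circulant (lam M k : ℕ) (hlam : 3 ≤ lam) (hM : M = 2 ^ lam)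
    (hk1 : 1 ≤ k) (hk2 : k ≤ M / 2 - 1) (s : ℂ)
    (hs : if k % 2 = 0 then
        s = ((Real.sin (k * Real.pi / M) : ℝ) : ℂ) ∨
        s = ((1 / Real.sin (k * Real.pi / M) : ℝ) : ℂ)
      else
        s = ((Real.sin (k * Real.pi / M) : ℝ) : ℂ) *
            Complex.exp (Complex.I * (Real.pi : ℂ) / (M : ℂ)) ∨
        s = ((1 / Real.sin (k * Real.pi / M) : ℝ) : ℂ) *
            Complex.exp (Complex.I * (Real.pi : ℂ) / (M : ℂ))) :
    Nonempty (vital M (PSK M) s ≃g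
      circulant M {(k : ZMod M), -(k : ZMod M), ((M / 2 : ℕ) : ZMod M)}) := by
  have hM0 : 0 < M := by rw [hM]; positivity
  haveI : NeZero M := ⟨hM0.ne'⟩
  have hdvd8 : 8 ∣ M := by
    rw [hM]
    exact pow_dvd_pow 2 hlam
  have hkM2 : k < M / 2 := by omega
  have hkM : k < M := by omega
  set ζ : ℂ := Complex.exp (Complex.I * (Real.pi : ℂ) / (M : ℂ)) with hζdef
  have hζ0 : ζ ≠ 0 := Complex.exp_ne_zero _
  have hMC : (M : ℂ) ≠ 0 := Nat.cast_ne_zero.mpr hM0.ne'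
  have hωexp : ζ ^ 2 = Complex.exp (2 * (Real.pi : ℂ) * Complex.I / (M : ℂ)) := by
    rw [hζdef, ← Complex.exp_nat_mul]
    congr 1
    push_cast
    ring
  set ω : ℂ := ζ ^ 2 with hωdef
  have hω : IsPrimitiveRoot ω M := by
    rw [hωexp]
    exact Complex.isPrimitiveRoot_exp M hM0.ne'
  have hζpow : ∀ n : ℕ, ζ ^ n
      = Complex.exp ((n : ℂ) * (Complex.I * (Real.pi : ℂ) / (M : ℂ))) :=
    fun n => by rw [Complex.exp_nat_mul]
  have hωpow : ∀ n : ℕ, ω ^ n = ζ ^ (2 * n) := by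
    intro n
    rw [hωdef, ← pow_mul]
  have hζI : ζ ^ (M / 2) = Complex.I := by
    rw [hζpow]
    have hc : ((M / 2 : ℕ) : ℂ) * 2 = (M : ℂ) := by
      exact_mod_cast congrArg (Nat.cast : ℕ → ℂ) (by omega : M / 2 * 2 = M)
    have harg : ((M / 2 : ℕ) : ℂ) * (Complex.I * (Real.pi : ℂ) / (M : ℂ))
        = ((Real.pi / 2 : ℝ) : ℂ) * Complex.I := by
      push_cast
      field_simp
      linear_combination hc
    rw [harg, Complex.exp_mul_I, ← Complex.ofReal_cos, ← Complex.ofReal_sin,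
      Real.cos_pi_div_two, Real.sin_pi_div_two]
    simp
  -- ZMod elements and their values
  have hqval : (((M / 4 : ℕ) : ZMod M)).val = M / 4 := ZMod.val_cast_of_lt (by omega)
  have hkval : ((k : ZMod M)).val = k := ZMod.val_cast_of_lt (by omega)
  have hκval : ((((k + k % 2) / 2 : ℕ) : ZMod M)).val = (k + k % 2) / 2 :=
    ZMod.val_cast_of_lt (by omega)
  have hwval : (((M / 4 + k % 2 : ℕ) : ZMod M)).val = M / 4 + k % 2 :=
    ZMod.val_cast_of_lt (by omega)
  have hhval : (((M / 2 : ℕ) : ZMod M)).val = M / 2 := ZMod.val_cast_of_lt (by omega)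
  set kz : ZMod M := (k : ZMod M) with hkzdef
  set hz : ZMod M := ((M / 2 : ℕ) : ZMod M) with hhzdef
  set qz : ZMod M := ((M / 4 : ℕ) : ZMod M) with hqzdef
  set κz : ZMod M := (((k + k % 2) / 2 : ℕ) : ZMod M) with hκzdef
  set wz : ZMod M := ((M / 4 + k % 2 : ℕ) : ZMod M) with hwzdef
  have hk0 : kz ≠ 0 := by
    intro h
    have := congrArg ZMod.val h
    rw [hkval, ZMod.val_zero] at this
    omega
  have hkk : kz + kz ≠ 0 := by
    intro h
    have h2 : ((k + k : ℕ) : ZMod M) = 0 := by push_cast; exact h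
    have := congrArg ZMod.val h2
    rw [ZMod.val_cast_of_lt (by omega : k + k < M), ZMod.val_zero] at this
    omega
  have hkh : kz ≠ hz := by
    intro h
    have := congrArg ZMod.val h
    rw [hkval, hhval] at this
    omega
  have hz0 : hz ≠ 0 := by
    intro h
    have := congrArg ZMod.val h
    rw [hhval, ZMod.val_zero] at this
    omega
  have hzz : hz + hz = 0 := by
    have h2 : ((M / 2 + M / 2 : ℕ) : ZMod M) = 0 := by
      rw [show M / 2 + M / 2 = M by omega]
      exact ZMod.natCast_self M
    push_cast at h2
    exact h2
  have hωh : ω ^ hz.val = -1 := by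
    rw [hhzdef, hhval, hωpow, show 2 * (M / 2) = M by omega, hζpow]
    rw [show ((M : ℕ) : ℂ) * (Complex.I * (Real.pi : ℂ) / (M : ℂ))
      = (Real.pi : ℂ) * Complex.I by field_simp]
    exact Complex.exp_pi_mul_I
  have hωq : ω ^ qz.val = Complex.I := by
    rw [hqzdef, hqval, hωpow, show 2 * (M / 4) = M / 2 by omega, hζI]
  have hωκ : ω ^ κz.val = ζ ^ (k + k % 2) := by
    rw [hκzdef, hκval, hωpow, show 2 * ((k + k % 2) / 2) = k + k % 2 by omega]
  have hωw : ω ^ wz.val = Complex.I * ζ ^ (2 * (k % 2)) := by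
    rw [hwzdef, hwval, hωpow, show 2 * (M / 4 + k % 2) = M / 2 + 2 * (k % 2) by omega,
      pow_add, hζI]
  have hκX : ω ^ (κz - kz).val * ζ ^ (2 * k) = ζ ^ (k + k % 2) := by
    have h1 : ω ^ (κz - kz).val * ω ^ kz.val = ω ^ κz.val := by
      rw [← epow_add ω hω]
      congr 1
      ring
    rw [hkzdef, hkval] at h1
    rw [hωpow k] at h1
    rw [h1, hωκ]
  -- PSK in terms of ζ and ω
  have hP : ∀ m : Fin M, PSK M m = ζ * ω ^ (((m : ℕ) : ZMod M)).val := by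
    intro m
    have hval : (((m : ℕ) : ZMod M)).val = (m : ℕ) := ZMod.val_cast_of_lt m.isLt
    rw [hval, hωpow, ← pow_succ']
    rw [hζpow, PSK]
    congr 1
    push_cast
    ring
  -- basic sine facts
  have hsinpos : 0 < Real.sin ((k : ℝ) * Real.pi / (M : ℝ)) := by
    apply Real.sin_pos_of_pos_of_lt_pi
    · have h1 : (0 : ℝ) < (k : ℝ) := by exact_mod_cast hk1
      have h2 : (0 : ℝ) < (M : ℝ) := by exact_mod_cast hM0
      positivity
    · have h1 : (k : ℝ) < (M : ℝ) := by exact_mod_cast hkM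
      have h2 : (0 : ℝ) < (M : ℝ) := by exact_mod_cast hM0
      rw [div_lt_iff₀ h2]
      nlinarith [Real.pi_pos]
  have hsin2 : 2 * Complex.I * ((Real.sin ((k : ℝ) * Real.pi / (M : ℝ)) : ℝ) : ℂ) * ζ ^ k
      = ζ ^ (2 * k) - 1 := by
    set X : ℝ := (k : ℝ) * Real.pi / (M : ℝ) with hXdef
    have e1 : Complex.exp ((X : ℂ) * Complex.I) = ζ ^ k := by
      rw [hζpow]
      congr 1
      rw [hXdef]
      push_cast
      ring
    have e2 : Complex.exp (-(X : ℂ) * Complex.I) * ζ ^ k = 1 := by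
      rw [← e1, ← Complex.exp_add,
        show -(X : ℂ) * Complex.I + (X : ℂ) * Complex.I = 0 by ring, Complex.exp_zero]
    rw [Complex.ofReal_sin, Complex.sin]
    linear_combination ζ ^ k * e1 - e2
      + (Complex.exp (-(X : ℂ) * Complex.I) - Complex.exp ((X : ℂ) * Complex.I)) * ζ ^ k
        * Complex.I_sq
  have hsinne : ((Real.sin ((k : ℝ) * Real.pi / (M : ℝ)) : ℝ) : ℂ) ≠ 0 :=
    Complex.ofReal_ne_zero.mpr hsinpos.ne'
  -- connection set facts
  have hnhz : -hz = hz := by linear_combination -hzz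
  have hTn : ∀ d : ZMod M, (d ∈ ({kz, -kz, hz} : Set (ZMod M)) ∨
      -d ∈ ({kz, -kz, hz} : Set (ZMod M))) ↔ (d = kz ∨ d = -kz ∨ d = hz ∨ d = -hz) := by
    intro d
    simp only [Set.mem_insert_iff, Set.mem_singleton_iff]
    constructor
    · rintro ((h | h | h) | (h | h | h))
      · exact Or.inl h
      · exact Or.inr (Or.inl h)
      · exact Or.inr (Or.inr (Or.inl h))
      · exact Or.inr (Or.inl (by linear_combination -h))
      · exact Or.inl (by linear_combination -h)
      · exact Or.inr (Or.inr (Or.inl (by linear_combination -h - hzz)))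
    · rintro (h | h | h | h)
      · exact Or.inl (Or.inl h)
      · exact Or.inl (Or.inr (Or.inl h))
      · exact Or.inl (Or.inr (Or.inr h))
      · exact Or.inl (Or.inr (Or.inr (by linear_combination h - hzz)))
  have hTr : ∀ d : ZMod M, (d ∈ ({kz, -kz, hz} : Set (ZMod M)) ∨
      -d ∈ ({kz, -kz, hz} : Set (ZMod M))) ↔
      (d = hz ∨ d = -hz ∨ d = -kz ∨ d = -(-kz)) := by
    intro d
    simp only [Set.mem_insert_iff, Set.mem_singleton_iff]
    constructor
    · rintro ((h | h | h) | (h | h | h))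
      · exact Or.inr (Or.inr (Or.inr (by linear_combination h)))
      · exact Or.inr (Or.inr (Or.inl h))
      · exact Or.inl h
      · exact Or.inr (Or.inr (Or.inl (by linear_combination -h)))
      · exact Or.inr (Or.inr (Or.inr (by linear_combination -h)))
      · exact Or.inl (by linear_combination -h - hzz)
    · rintro (h | h | h | h)
      · exact Or.inl (Or.inr (Or.inr h))
      · exact Or.inl (Or.inr (Or.inr (by linear_combination h - hzz)))
      · exact Or.inl (Or.inr (Or.inl h))
      · exact Or.inl (Or.inl (by linear_combination h))
  have hnk0 : -kz ≠ 0 := fun h => hk0 (by linear_combination -h)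
  have hhk : hz ≠ -kz := fun h => hkh (by linear_combination h - hzz)
  by_cases hpar : k % 2 = 0
  · rw [if_pos hpar] at hs
    rcases hs with hs | hs
    · -- s = sin(kπ/M)
      have hsid : 2 * Complex.I * s * ζ ^ k = (ζ ^ (2 * k) - 1) * ζ ^ (k % 2) := by
        rw [hs, hpar, pow_zero, mul_one]
        exact hsin2
      have hs2 : 2 * ω ^ qz.val * s = ω ^ κz.val - ω ^ (κz - kz).val := by
        apply mul_right_cancel₀ (pow_ne_zero (2 * k) hζ0)
        rw [hωq, hωκ]
        linear_combination ζ ^ k * hsid + hκX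
      have CHAR := charFin M ω ζ s hζ0 hP kz hz (qz - (κz - kz))
        (eqCharN lam M hM hlam ω hω s kz qz κz hk0 hkk hkh hz0 hzz hωh hs2)
      exact isoLemma M (PSK M) s kz hz (qz - (κz - kz)) hk0 hz0 hkh _ hTn CHAR
    · -- s = 1/sin(kπ/M)
      have hsid : (ζ ^ (2 * k) - 1) * s = 2 * Complex.I * ζ ^ (k + k % 2) := by
        have hs' : s = ((Real.sin ((k : ℝ) * Real.pi / (M : ℝ)) : ℝ) : ℂ)⁻¹ := by
          rw [hs, one_div, Complex.ofReal_inv]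
        have hmul : s * ((Real.sin ((k : ℝ) * Real.pi / (M : ℝ)) : ℝ) : ℂ) = 1 := by
          rw [hs']
          exact inv_mul_cancel₀ hsinne
        rw [hpar, Nat.add_zero]
        linear_combination (-s) * hsin2 + 2 * Complex.I * ζ ^ k * hmul
      have hs2r : (ω ^ κz.val - ω ^ (κz - kz).val) * s = 2 * ω ^ wz.val := by
        apply mul_right_cancel₀ (pow_ne_zero (2 * k) hζ0)
        rw [hωκ, hωw]
        linear_combination ζ ^ (k + k % 2) * hsid - s * hκX
      have CHAR := charFin M ω ζ s hζ0 hP hz (-kz) (κz - wz + hz)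
        (eqCharR lam M hM hlam ω hω s kz wz κz hk0 hkk hkh hz0 hzz hωh hs2r)
      exact isoLemma M (PSK M) s hz (-kz) (κz - wz + hz) hz0 hnk0 hhk _ hTr CHAR
  · rw [if_neg hpar] at hs
    have hpar1 : k % 2 = 1 := by omega
    rcases hs with hs | hs
    · -- s = sin(kπ/M) ζ
      have hsid : 2 * Complex.I * s * ζ ^ k = (ζ ^ (2 * k) - 1) * ζ ^ (k % 2) := by
        rw [hs, hpar1, pow_one]
        linear_combination ζ * hsin2
      have hs2 : 2 * ω ^ qz.val * s = ω ^ κz.val - ω ^ (κz - kz).val := by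
        apply mul_right_cancel₀ (pow_ne_zero (2 * k) hζ0)
        rw [hωq, hωκ]
        linear_combination ζ ^ k * hsid + hκX
      have CHAR := charFin M ω ζ s hζ0 hP kz hz (qz - (κz - kz))
        (eqCharN lam M hM hlam ω hω s kz qz κz hk0 hkk hkh hz0 hzz hωh hs2)
      exact isoLemma M (PSK M) s kz hz (qz - (κz - kz)) hk0 hz0 hkh _ hTn CHAR
    · -- s = (1/sin(kπ/M)) ζ
      have hsid : (ζ ^ (2 * k) - 1) * s = 2 * Complex.I * ζ ^ (k + k % 2) := by
        have hs' : s = ((Real.sin ((k : ℝ) * Real.pi / (M : ℝ)) : ℝ) : ℂ)⁻¹ * ζ := by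
          rw [hs, one_div, Complex.ofReal_inv]
        have hmul : s * ((Real.sin ((k : ℝ) * Real.pi / (M : ℝ)) : ℝ) : ℂ) = ζ := by
          rw [hs', mul_right_comm, inv_mul_cancel₀ hsinne, one_mul]
        rw [hpar1]
        linear_combination (-s) * hsin2 + 2 * Complex.I * ζ ^ k * hmul
      have hs2r : (ω ^ κz.val - ω ^ (κz - kz).val) * s = 2 * ω ^ wz.val := by
        apply mul_right_cancel₀ (pow_ne_zero (2 * k) hζ0)
        rw [hωκ, hωw]
        linear_combination ζ ^ (k + k % 2) * hsid - s * hκX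
      have CHAR := charFin M ω ζ s hζ0 hP hz (-kz) (κz - wz + hz)
        (eqCharR lam M hM hlam ω hω s kz wz κz hk0 hkk hkh hz0 hzz hωh hs2r)
      exact isoLemma M (PSK M) s hz (-kz) (κz - wz + hz) hz0 hnk0 hhk _ hTr CHAR
end
end

section
/- Let M = 2^λ with λ ≥ 3, let S be the M-PSK signal set, let k ∈ {1,…,M/2−1} be odd, and let s = sin(kπ/M)·exp(iπ/M) or s = (1/sin(kπ/M))·exp(iπ/M). Then the vital subgraph G_s^V of the singularity removal graph G_s admits a proper vertex coloring with 4 colors (it is 4-colorable). -/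
noncomputable section

section AuxProofMachinery

open Complex Polynomial Finset

/-- primitive M-th root of unity -/
noncomputable def prou (M : ℕ) : ℂ := Complex.exp (2 * Real.pi * Complex.I / M)

noncomputable def Ez (M : ℕ) : ZMod M → ℂ := fun x => prou M ^ x.val

lemma prou_prim (M : ℕ) [NeZero M] : IsPrimitiveRoot (prou M) M :=
  Complex.isPrimitiveRoot_exp M (NeZero.ne M)

lemma prou_pow_M (M : ℕ) [NeZero M] : prou M ^ M = 1 := (prou_prim M).pow_eq_one

lemma prou_pow_mod (M : ℕ) [NeZero M] (i : ℕ) : prou M ^ (i % M) = prou M ^ i := by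
  conv_rhs => rw [← Nat.div_add_mod i M]
  rw [pow_add, pow_mul, prou_pow_M, one_pow, one_mul]

lemma Ez_natCast (M : ℕ) [NeZero M] (i : ℕ) : Ez M (i : ZMod M) = prou M ^ i := by
  rw [Ez, ZMod.val_natCast, prou_pow_mod]

lemma Ez_add (M : ℕ) [NeZero M] (x y : ZMod M) : Ez M (x + y) = Ez M x * Ez M y := by
  have hx : ((x.val : ℕ) : ZMod M) = x := ZMod.natCast_zmod_val x
  have hy : ((y.val : ℕ) : ZMod M) = y := ZMod.natCast_zmod_val y
  rw [← hx, ← hy, ← Nat.cast_add, Ez_natCast, Ez_natCast, Ez_natCast, pow_add]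

lemma Ez_inj (M : ℕ) [NeZero M] : Function.Injective (Ez M) := by
  intro x y h
  simp only [Ez] at h
  have := (prou_prim M).pow_inj (ZMod.val_lt x) (ZMod.val_lt y) h
  exact ZMod.val_injective M this

lemma Ez_ne_zero (M : ℕ) [NeZero M] (x : ZMod M) : Ez M x ≠ 0 :=
  pow_ne_zero _ (Complex.exp_ne_zero _)

/-- linear independence of low powers of prou -/
lemma prou_indep (lam M : ℕ) (hlam : 1 ≤ lam) (hM : M = 2 ^ lam) (d : ℕ → ℤ)
    (h : ∑ i ∈ Finset.range (2 ^ (lam - 1)), (d i : ℂ) * prou M ^ i = 0) :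
    ∀ i < 2 ^ (lam - 1), d i = 0 := by
  haveI : NeZero M := ⟨by simp [hM]⟩
  set n := 2 ^ (lam - 1) with hn
  have hn1 : 1 ≤ n := Nat.one_le_two_pow
  -- the polynomial
  set P : ℚ[X] := ∑ i ∈ Finset.range n, Polynomial.C ((d i : ℚ)) * Polynomial.X ^ i with hP
  have haev : Polynomial.aeval (prou M) P = 0 := by
    have heq : Polynomial.aeval (prou M) P = ∑ i ∈ Finset.range n, (d i : ℂ) * prou M ^ i := by
      rw [hP, map_sum]
      apply Finset.sum_congr rfl
      intro i _
      simp only [map_mul, Polynomial.aeval_C, map_pow, Polynomial.aeval_X, map_intCast]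
    rw [heq, h]
  have hmin : minpoly ℚ (prou M) = Polynomial.cyclotomic M ℚ :=
    (Polynomial.cyclotomic_eq_minpoly_rat (prou_prim M) (Nat.pos_of_ne_zero (NeZero.ne M))).symm
  have hdeg : (minpoly ℚ (prou M)).natDegree = n := by
    rw [hmin, Polynomial.natDegree_cyclotomic, hM, Nat.totient_prime_pow Nat.prime_two hlam]
    simp [hn]
  have hPzero : P = 0 := by
    by_contra hP0
    have hdvd : minpoly ℚ (prou M) ∣ P := minpoly.dvd ℚ (prou M) haev
    have h1 : (minpoly ℚ (prou M)).natDegree ≤ P.natDegree :=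
      Polynomial.natDegree_le_of_dvd hdvd hP0
    have h2 : P.natDegree ≤ n - 1 := by
      rw [hP]
      apply Polynomial.natDegree_sum_le_of_forall_le
      intro i hi
      refine le_trans (Polynomial.natDegree_C_mul_le _ _) ?_
      rw [Polynomial.natDegree_X_pow]
      exact Nat.le_sub_one_of_lt (Finset.mem_range.mp hi)
    omega
  intro i hi
  have hco : P.coeff i = (d i : ℚ) := by
    rw [hP, Polynomial.finset_sum_coeff]
    rw [Finset.sum_eq_single i]
    · simp
    · intro j _ hj
      have : ¬ (i = j) := fun hh => hj hh.symm
      simp [Polynomial.coeff_C_mul, Polynomial.coeff_X_pow, this]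
    · intro hni
      exact absurd (Finset.mem_range.mpr hi) hni
  rw [hPzero] at hco
  simp at hco
  exact_mod_cast hco.symm

lemma zmod_sum_eq (M : ℕ) [NeZero M] (f : ZMod M → ℂ) :
    ∑ j : ZMod M, f j = ∑ i ∈ Finset.range M, f (i : ZMod M) := by
  rw [← Fin.sum_univ_eq_sum_range (fun i => f (i : ZMod M)) M]
  have hbij : Function.Bijective (fun i : Fin M => ((i : ℕ) : ZMod M)) := by
    rw [Fintype.bijective_iff_injective_and_card]
    constructor
    · intro i j hij
      have hij' : ((i : ℕ) : ZMod M) = ((j : ℕ) : ZMod M) := hij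
      have hi := ZMod.val_natCast_of_lt i.2
      have hj := ZMod.val_natCast_of_lt j.2
      have hv : ((i : ℕ) : ZMod M).val = ((j : ℕ) : ZMod M).val := congrArg ZMod.val hij'
      rw [hi, hj] at hv
      exact Fin.ext hv
    · simp [ZMod.card]
  exact (Fintype.sum_bijective _ hbij _ _ (fun i => rfl)).symm

lemma prou_pow_half (lam M N : ℕ) (hlam : 1 ≤ lam) (hM : M = 2 ^ lam) (hN : N = 2 ^ (lam - 1)) :
    prou M ^ N = -1 := by
  have hMN : M = 2 * N := by
    rw [hM, hN]
    rw [← pow_succ']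
    congr 1
    omega
  have hM0 : (M : ℂ) ≠ 0 := by
    simp [hM]
  rw [prou, ← Complex.exp_nat_mul, ← Complex.exp_pi_mul_I]
  congr 1
  have : (M : ℂ) = 2 * N := by rw [hMN]; push_cast; ring
  rw [this]
  have hN0 : (N : ℂ) ≠ 0 := by
    have : N ≠ 0 := by rw [hN]; positivity
    exact_mod_cast Nat.cast_ne_zero.mpr this
  field_simp

/-- key lemma -/
lemma key (lam M N : ℕ) [NeZero M] (hlam : 1 ≤ lam) (hM : M = 2 ^ lam) (hN : N = 2 ^ (lam - 1))
    (F : ZMod M → ℤ) (h : ∑ j : ZMod M, (F j : ℂ) * Ez M j = 0) :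
    ∀ j : ZMod M, F j = F (j + (N : ZMod M)) := by
  have hMN : M = 2 * N := by
    rw [hM, hN, ← pow_succ']
    congr 1
    omega
  have hNpos : 0 < N := by rw [hN]; positivity
  -- convert to range sum
  rw [zmod_sum_eq] at h
  have hsplit : ∑ i ∈ Finset.range M, (F (i : ZMod M) : ℂ) * Ez M (i : ZMod M)
      = ∑ i ∈ Finset.range N, ((F (i : ZMod M) - F ((i : ZMod M) + (N : ZMod M)) : ℤ) : ℂ) * prou M ^ i := by
    have hMN' : M - N = N := by omega
    rw [Finset.range_eq_Ico, ← Finset.sum_Ico_consecutive _ (Nat.zero_le N) (by omega : N ≤ M)]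
    rw [Finset.sum_Ico_eq_sum_range, Finset.sum_Ico_eq_sum_range, hMN', Nat.sub_zero]
    simp only [Nat.zero_add]
    rw [← Finset.sum_add_distrib]
    apply Finset.sum_congr rfl
    intro i hi
    have h1 : Ez M ((i : ℕ) : ZMod M) = prou M ^ i := Ez_natCast M i
    have h2 : Ez M ((N + i : ℕ) : ZMod M) = prou M ^ (N + i) := Ez_natCast M _
    have h3 : prou M ^ (N + i) = - prou M ^ i := by
      rw [pow_add, prou_pow_half lam M N hlam hM hN]
      ring
    have h4 : ((N + i : ℕ) : ZMod M) = (i : ZMod M) + (N : ZMod M) := by push_cast; ring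
    rw [h1, h2, h3, h4]
    push_cast
    ring
  rw [hsplit] at h
  have hvan : ∀ i : ℕ, i < 2 ^ (lam - 1) →
      F ((i : ℕ) : ZMod M) - F (((i : ℕ) : ZMod M) + (((2 ^ (lam - 1) : ℕ)) : ZMod M)) = 0 := by
    rw [hN] at h
    exact prou_indep lam M hlam hM _ h
  have hmain : ∀ i : ℕ, i < N → F (i : ZMod M) = F ((i : ZMod M) + (N : ZMod M)) := by
    intro i hi
    have h1 := hvan i (by rw [← hN]; exact hi)
    rw [← hN] at h1
    omega
  intro j
  have hj : j = ((j.val : ℕ) : ZMod M) := (ZMod.natCast_zmod_val j).symm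
  have hjlt : j.val < M := ZMod.val_lt j
  by_cases hcase : j.val < N
  · rw [hj]; exact hmain j.val hcase
  · have hr : j.val - N < N := by omega
    have hrw : j = ((j.val - N : ℕ) : ZMod M) + (N : ZMod M) := by
      conv_lhs => rw [hj]
      rw [← Nat.cast_add]
      congr 1
      omega
    have h2N : ((N : ZMod M) + (N : ZMod M)) = 0 := by
      rw [← Nat.cast_add]
      rw [show N + N = M by omega]
      exact ZMod.natCast_self M
    have := hmain (j.val - N) hr
    rw [hrw]
    rw [add_assoc, h2N, add_zero]
    exact this.symm

def chi {M : ℕ} (a j : ZMod M) : ℤ := if j = a then 1 else 0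

lemma chi_eq_one {M : ℕ} {a j : ZMod M} (h : j = a) : chi a j = 1 := by simp [chi, h]
lemma chi_eq_zero {M : ℕ} {a j : ZMod M} (h : j ≠ a) : chi a j = 0 := by simp [chi, h]
lemma chi_nonneg {M : ℕ} (a j : ZMod M) : 0 ≤ chi a j := by
  unfold chi; split <;> omega
lemma chi_le_one {M : ℕ} (a j : ZMod M) : chi a j ≤ 1 := by
  unfold chi; split <;> omega

lemma chi_sum (M : ℕ) [NeZero M] (a : ZMod M) :
    ∑ j : ZMod M, (chi a j : ℂ) * Ez M j = Ez M a := by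
  have h : ∀ j : ZMod M, ((chi a j : ℤ) : ℂ) * Ez M j = if j = a then Ez M j else 0 := by
    intro j; by_cases hj : j = a <;> simp [chi, hj]
  rw [Finset.sum_congr rfl fun j _ => h j, Finset.sum_ite_eq' Finset.univ a (Ez M)]
  simp

/-- The core structure lemma. -/
lemma core {M : ℕ} [NeZero M] (n κ : ZMod M)
    (hkey : ∀ F : ZMod M → ℤ, (∑ j : ZMod M, (F j : ℂ) * Ez M j) = 0 →
      ∀ j, F j = F (j + n))
    (hn0 : n ≠ 0) (hnn : n + n = 0) (hEn : Ez M n = -1)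
    (hk0 : κ ≠ 0) (hkn : κ ≠ n) (hkn0 : κ + n ≠ 0) (h2k0 : κ + κ ≠ 0) (h2kn : κ + κ ≠ n)
    (x x' y y' ε2 : ZMod M)
    (hne : ¬(x = x' ∧ y = y'))
    (hsum : 2 * Ez M x + Ez M (y + (ε2 + κ)) - Ez M (y + ε2)
          = 2 * Ez M x' + Ez M (y' + (ε2 + κ)) - Ez M (y' + ε2)) :
    y' = y + n ∧ ((x = y + ε2 ∧ x' = y + (ε2 + κ)) ∨
      (y + (ε2 + κ) = x + n ∧ y + ε2 = x' + n)) := by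
  by_cases hyy : y = y'
  · exfalso
    apply hne
    refine ⟨?_, hyy⟩
    apply Ez_inj M
    subst hyy
    linear_combination hsum / 2
  -- stage 1 : prove y' = y + n
  have hB : y' = y + n := by
    set F : ZMod M → ℤ := fun j =>
      2 * chi x j - 2 * chi x' j + chi (y + (ε2 + κ)) j - chi (y + ε2) j
        - chi (y' + (ε2 + κ)) j + chi (y' + ε2) j with hFdef
    have hFval : ∀ j, F j = 2 * chi x j - 2 * chi x' j + chi (y + (ε2 + κ)) j
        - chi (y + ε2) j - chi (y' + (ε2 + κ)) j + chi (y' + ε2) j := fun j => rfl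
    have hFs : ∑ j : ZMod M, (F j : ℂ) * Ez M j = 0 := by
      have h1 : ∀ j : ZMod M, ((F j : ℤ) : ℂ) * Ez M j =
          2 * ((chi x j : ℂ) * Ez M j) - 2 * ((chi x' j : ℂ) * Ez M j)
          + ((chi (y + (ε2 + κ)) j : ℂ) * Ez M j) - ((chi (y + ε2) j : ℂ) * Ez M j)
          - ((chi (y' + (ε2 + κ)) j : ℂ) * Ez M j) + ((chi (y' + ε2) j : ℂ) * Ez M j) := by
        intro j; rw [hFval]; push_cast; ring
      rw [Finset.sum_congr rfl fun j _ => h1 j]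
      rw [Finset.sum_add_distrib, Finset.sum_sub_distrib, Finset.sum_sub_distrib,
        Finset.sum_add_distrib, Finset.sum_sub_distrib, ← Finset.mul_sum, ← Finset.mul_sum,
        chi_sum, chi_sum, chi_sum, chi_sum, chi_sum, chi_sum]
      linear_combination hsum
    have H := hkey F hFs
    by_cases hA : y' = y + κ
    · exfalso
      have H1 := H (y + ε2)
      rw [hFval, hFval] at H1
      rw [chi_eq_zero (show y + ε2 ≠ y + (ε2 + κ) from fun h => hk0 (by linear_combination -h)),
        chi_eq_one (rfl : y + ε2 = y + ε2),
        chi_eq_zero (show y + ε2 ≠ y' + (ε2 + κ) from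
          fun h => h2k0 (by linear_combination -h - hA)),
        chi_eq_zero (show y + ε2 ≠ y' + ε2 from fun h => hyy (by linear_combination h)),
        chi_eq_zero (show y + ε2 + n ≠ y + (ε2 + κ) from
          fun h => hkn (by linear_combination -h)),
        chi_eq_zero (show y + ε2 + n ≠ y + ε2 from fun h => hn0 (by linear_combination h)),
        chi_eq_zero (show y + ε2 + n ≠ y' + (ε2 + κ) from
          fun h => h2kn (by linear_combination -h - hA)),
        chi_eq_zero (show y + ε2 + n ≠ y' + ε2 from
          fun h => hkn (by linear_combination -h - hA))] at H1
      omega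
    by_contra hB
    by_cases hC : y' = y + (κ + n)
    · have H1 := H (y + ε2)
      rw [hFval, hFval] at H1
      rw [chi_eq_zero (show y + ε2 ≠ y + (ε2 + κ) from fun h => hk0 (by linear_combination -h)),
        chi_eq_one (rfl : y + ε2 = y + ε2),
        chi_eq_zero (show y + ε2 ≠ y' + (ε2 + κ) from
          fun h => h2kn (by linear_combination -h - hC - hnn)),
        chi_eq_zero (show y + ε2 ≠ y' + ε2 from
          fun h => hkn0 (by linear_combination -h - hC)),
        chi_eq_zero (show y + ε2 + n ≠ y + (ε2 + κ) from
          fun h => hkn (by linear_combination -h)),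
        chi_eq_zero (show y + ε2 + n ≠ y + ε2 from fun h => hn0 (by linear_combination h)),
        chi_eq_zero (show y + ε2 + n ≠ y' + (ε2 + κ) from
          fun h => h2k0 (by linear_combination -h - hC)),
        chi_eq_zero (show y + ε2 + n ≠ y' + ε2 from
          fun h => hk0 (by linear_combination -h - hC))] at H1
      omega
    · have H1 := H (y + (ε2 + κ))
      rw [hFval, hFval] at H1
      rw [chi_eq_one (rfl : y + (ε2 + κ) = y + (ε2 + κ)),
        chi_eq_zero (show y + (ε2 + κ) ≠ y + ε2 from fun h => hk0 (by linear_combination h)),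
        chi_eq_zero (show y + (ε2 + κ) ≠ y' + (ε2 + κ) from
          fun h => hyy (by linear_combination h)),
        chi_eq_zero (show y + (ε2 + κ) ≠ y' + ε2 from fun h => hA (by linear_combination -h)),
        chi_eq_zero (show y + (ε2 + κ) + n ≠ y + (ε2 + κ) from
          fun h => hn0 (by linear_combination h)),
        chi_eq_zero (show y + (ε2 + κ) + n ≠ y + ε2 from
          fun h => hkn0 (by linear_combination h)),
        chi_eq_zero (show y + (ε2 + κ) + n ≠ y' + (ε2 + κ) from
          fun h => hB (by linear_combination -h)),
        chi_eq_zero (show y + (ε2 + κ) + n ≠ y' + ε2 from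
          fun h => hC (by linear_combination -h))] at H1
      omega
  subst hB
  refine ⟨rfl, ?_⟩
  -- stage 2
  have e1 : Ez M (y + n + (ε2 + κ)) = - Ez M (y + (ε2 + κ)) := by
    rw [show y + n + (ε2 + κ) = (y + (ε2 + κ)) + n by ring, Ez_add, hEn]; ring
  have e2 : Ez M (y + n + ε2) = - Ez M (y + ε2) := by
    rw [show y + n + ε2 = (y + ε2) + n by ring, Ez_add, hEn]; ring
  have hsum2 : Ez M x + Ez M (y + (ε2 + κ)) = Ez M x' + Ez M (y + ε2) := by
    linear_combination hsum / 2 + e1 / 2 - e2 / 2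
  have hxx' : x ≠ x' := by
    intro h
    apply hk0
    have h2 : Ez M (y + (ε2 + κ)) = Ez M (y + ε2) := by rw [h] at hsum2; linear_combination hsum2
    have h3 := Ez_inj M h2
    linear_combination h3
  set G : ZMod M → ℤ := fun j =>
    chi x j - chi x' j + chi (y + (ε2 + κ)) j - chi (y + ε2) j with hGdef
  have hGval : ∀ j, G j = chi x j - chi x' j + chi (y + (ε2 + κ)) j - chi (y + ε2) j :=
    fun j => rfl
  have hGs : ∑ j : ZMod M, (G j : ℂ) * Ez M j = 0 := by
    have h1 : ∀ j : ZMod M, ((G j : ℤ) : ℂ) * Ez M j =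
        ((chi x j : ℂ) * Ez M j) - ((chi x' j : ℂ) * Ez M j)
        + ((chi (y + (ε2 + κ)) j : ℂ) * Ez M j) - ((chi (y + ε2) j : ℂ) * Ez M j) := by
      intro j; rw [hGval]; push_cast; ring
    rw [Finset.sum_congr rfl fun j _ => h1 j]
    rw [Finset.sum_sub_distrib, Finset.sum_add_distrib, Finset.sum_sub_distrib,
      chi_sum, chi_sum, chi_sum, chi_sum]
    linear_combination hsum2
  have H := hkey G hGs
  -- (i) x ≠ u
  have hxu : x ≠ y + (ε2 + κ) := by
    intro hxu
    have hxv : x ≠ y + ε2 := fun h => hk0 (by linear_combination h - hxu)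
    have H1 := H x
    rw [hGval, hGval] at H1
    rw [chi_eq_one (rfl : x = x),
      chi_eq_zero (show x ≠ x' from hxx'),
      chi_eq_one (hxu),
      chi_eq_zero (hxv),
      chi_eq_zero (show x + n ≠ x from fun h => hn0 (by linear_combination h)),
      chi_eq_zero (show x + n ≠ y + (ε2 + κ) from
        fun h => hn0 (by linear_combination h - hxu))] at H1
    have b1 := chi_nonneg x' (x + n); have b2 := chi_le_one x' (x + n)
    have b3 := chi_nonneg (y + ε2) (x + n); have b4 := chi_le_one (y + ε2) (x + n)
    omega
  -- (ii) x' ≠ v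
  have hx'v : x' ≠ y + ε2 := by
    intro hx'v
    have hx'u : x' ≠ y + (ε2 + κ) := fun h => hk0 (by linear_combination hx'v - h)
    have H1 := H x'
    rw [hGval, hGval] at H1
    rw [chi_eq_zero (show x' ≠ x from fun h => hxx' h.symm),
      chi_eq_one (rfl : x' = x'),
      chi_eq_zero hx'u,
      chi_eq_one hx'v,
      chi_eq_zero (show x' + n ≠ x' from fun h => hn0 (by linear_combination h)),
      chi_eq_zero (show x' + n ≠ y + ε2 from
        fun h => hn0 (by linear_combination h - hx'v))] at H1
    have b1 := chi_nonneg x (x' + n); have b2 := chi_le_one x (x' + n)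
    have b3 := chi_nonneg (y + (ε2 + κ)) (x' + n)
    have b4 := chi_le_one (y + (ε2 + κ)) (x' + n)
    omega
  by_cases hxv : x = y + ε2
  · left
    refine ⟨hxv, ?_⟩
    by_contra hx'u
    have H1 := H (y + (ε2 + κ))
    rw [hGval, hGval] at H1
    rw [chi_eq_zero (show y + (ε2 + κ) ≠ x from fun h => hxu h.symm),
      chi_eq_zero (show y + (ε2 + κ) ≠ x' from fun h => hx'u h.symm),
      chi_eq_one (rfl : y + (ε2 + κ) = y + (ε2 + κ)),
      chi_eq_zero (show y + (ε2 + κ) ≠ y + ε2 from fun h => hk0 (by linear_combination h)),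
      chi_eq_zero (show y + (ε2 + κ) + n ≠ x from
        fun h => hkn0 (by linear_combination h + hxv)),
      chi_eq_zero (show y + (ε2 + κ) + n ≠ y + (ε2 + κ) from
        fun h => hn0 (by linear_combination h)),
      chi_eq_zero (show y + (ε2 + κ) + n ≠ y + ε2 from
        fun h => hkn0 (by linear_combination h))] at H1
    have b1 := chi_nonneg x' (y + (ε2 + κ) + n); have b2 := chi_le_one x' (y + (ε2 + κ) + n)
    omega
  · right
    by_cases hu : y + (ε2 + κ) = x + n
    · refine ⟨hu, ?_⟩
      by_contra hv
      have H1 := H (y + ε2)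
      rw [hGval, hGval] at H1
      rw [chi_eq_zero (show y + ε2 ≠ x from fun h => hxv h.symm),
        chi_eq_zero (show y + ε2 ≠ x' from fun h => hx'v h.symm),
        chi_eq_zero (show y + ε2 ≠ y + (ε2 + κ) from fun h => hk0 (by linear_combination -h)),
        chi_eq_one (rfl : y + ε2 = y + ε2),
        chi_eq_zero (show y + ε2 + n ≠ x from
          fun h => hk0 (by linear_combination hu - h + hnn)),
        chi_eq_zero (show y + ε2 + n ≠ x' from
          fun h => hv (by linear_combination h - hnn)),
        chi_eq_zero (show y + ε2 + n ≠ y + (ε2 + κ) from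
          fun h => hkn (by linear_combination -h)),
        chi_eq_zero (show y + ε2 + n ≠ y + ε2 from
          fun h => hn0 (by linear_combination h))] at H1
      omega
    · exfalso
      have H1 := H x
      rw [hGval, hGval] at H1
      rw [chi_eq_one (rfl : x = x),
        chi_eq_zero hxx',
        chi_eq_zero hxu,
        chi_eq_zero hxv,
        chi_eq_zero (show x + n ≠ x from fun h => hn0 (by linear_combination h)),
        chi_eq_zero (show x + n ≠ y + (ε2 + κ) from fun h => hu (by linear_combination -h))] at H1
      have b1 := chi_nonneg x' (x + n); have b2 := chi_le_one x' (x + n)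
      have b3 := chi_nonneg (y + ε2) (x + n); have b4 := chi_le_one (y + ε2) (x + n)
      omega

-- new defs
def fz {M : ℕ} (i : Fin M) : ZMod M := ((i : ℕ) : ZMod M)

lemma fz_inj {M : ℕ} : Function.Injective (fz (M := M)) := by
  intro i j h
  have hi : (fz i).val = (i : ℕ) := ZMod.val_natCast_of_lt i.2
  have hj : (fz j).val = (j : ℕ) := ZMod.val_natCast_of_lt j.2
  have := congrArg ZMod.val h
  rw [hi, hj] at this
  exact Fin.ext this

lemma colorable_of_struct (M : ℕ) (S : Fin M → ℂ) (s : ℂ)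
    (G : ZMod M → Fin 4) (R C D : ZMod M)
    (hDR : D ≠ R)
    (gR : ∀ z : ZMod M, G z ≠ G (z + R))
    (gD : ∀ z : ZMod M, G z ≠ G (z + D))
    (hstruct : ∀ p r : Fin M × Fin M, p ≠ r → S p.1 + s * S p.2 = S r.1 + s * S r.2 →
      ∃ x : ZMod M,
        ((fz p.1 = x ∧ fz p.2 = x + C) ∨ (fz p.1 = x + R ∧ fz p.2 = x + C + D)) ∧
        ((fz r.1 = x ∧ fz r.2 = x + C) ∨ (fz r.1 = x + R ∧ fz r.2 = x + C + D))) :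
    (vital M S s).Colorable 4 := by
  set f : Fin M × Fin M → Fin 4 := fun p =>
    if fz p.2 = fz p.1 + C then G (fz p.1)
    else if fz p.2 = fz p.1 + C + D - R then G (fz p.1 - R) else 0 with hfdef
  have hfP : ∀ (p : Fin M × Fin M) (xx : ZMod M),
      ((fz p.1 = xx ∧ fz p.2 = xx + C) ∨ (fz p.1 = xx + R ∧ fz p.2 = xx + C + D)) →
      f p = G xx := by
    rintro p xx (⟨h1, h2⟩ | ⟨h1, h2⟩)
    · show (if fz p.2 = fz p.1 + C then G (fz p.1)
        else if fz p.2 = fz p.1 + C + D - R then G (fz p.1 - R) else 0) = G xx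
      rw [if_pos (by rw [h1, h2])]
      rw [h1]
    · show (if fz p.2 = fz p.1 + C then G (fz p.1)
        else if fz p.2 = fz p.1 + C + D - R then G (fz p.1 - R) else 0) = G xx
      rw [if_neg (by rw [h1, h2]; intro hh; exact hDR (by linear_combination hh)),
        if_pos (by rw [h1, h2]; ring), h1]
      congr 1
      ring
  have hconst : ∀ p q : Fin M × Fin M,
      S p.1 + s * S p.2 = S q.1 + s * S q.2 → f p = f q := by
    intro p q h
    by_cases hpq : p = q
    · rw [hpq]
    · obtain ⟨xx, h1, h2⟩ := hstruct p q hpq h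
      rw [hfP p xx h1, hfP q xx h2]
  set c : Quotient (fadeSetoid M S s) → Fin 4 := Quotient.lift f hconst with hcdef
  refine ⟨SimpleGraph.Coloring.mk (fun u => c u.val) ?_⟩
  intro u v huv
  have huv' : (srg M S s).Adj u.val v.val := huv
  obtain ⟨hne, p, q, hp, hq, hshare⟩ := huv'
  have main : ∀ (cc : Quotient (fadeSetoid M S s)), cc ∈ vitalSet M S s →
      ∀ p0 : Fin M × Fin M, Quotient.mk (fadeSetoid M S s) p0 = cc →
      ∃ (xx : ZMod M) (r0 : Fin M × Fin M),
        ((fz p0.1 = xx ∧ fz p0.2 = xx + C) ∨ (fz p0.1 = xx + R ∧ fz p0.2 = xx + C + D)) ∧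
        ((fz r0.1 = xx ∧ fz r0.2 = xx + C) ∨ (fz r0.1 = xx + R ∧ fz r0.2 = xx + C + D)) ∧
        p0 ≠ r0 ∧ Quotient.mk (fadeSetoid M S s) r0 = cc := by
    rintro cc ⟨p₁, p₂, h12, hp₁, hp₂⟩ p0 hp0
    have hrel1 : S p0.1 + s * S p0.2 = S p₁.1 + s * S p₁.2 :=
      Quotient.exact (hp0.trans hp₁.symm)
    have hrel2 : S p0.1 + s * S p0.2 = S p₂.1 + s * S p₂.2 :=
      Quotient.exact (hp0.trans hp₂.symm)
    by_cases he : p0 = p₁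
    · have hne2 : p0 ≠ p₂ := by rw [he]; exact h12
      obtain ⟨xx, h1, h2⟩ := hstruct p0 p₂ hne2 hrel2
      exact ⟨xx, p₂, h1, h2, hne2, hp₂⟩
    · obtain ⟨xx, h1, h2⟩ := hstruct p0 p₁ he hrel1
      exact ⟨xx, p₁, h1, h2, he, hp₁⟩
  obtain ⟨xu, ru, hLp, hLru, hpru, hru⟩ := main u.val u.2 p hp
  obtain ⟨xv, rv, hLq, hLrv, hqrv, hrv⟩ := main v.val v.2 q hq
  have hCu : c u.val = G xu := by rw [← hp]; exact hfP p xu hLp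
  have hCv : c v.val = G xv := by rw [← hq]; exact hfP q xv hLq
  have hxx : xu ≠ xv := by
    intro hEq
    apply hne
    rw [← hEq] at hLq
    have hqeq : q = p ∨ q = ru := by
      rcases hLq with ⟨a1, a2⟩ | ⟨a1, a2⟩
      · rcases hLp with ⟨b1, b2⟩ | ⟨b1, b2⟩
        · left
          exact Prod.ext (fz_inj (a1.trans b1.symm)) (fz_inj (a2.trans b2.symm))
        · rcases hLru with ⟨c1, c2⟩ | ⟨c1, c2⟩
          · right
            exact Prod.ext (fz_inj (a1.trans c1.symm)) (fz_inj (a2.trans c2.symm))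
          · exact absurd (Prod.ext (fz_inj (b1.trans c1.symm)) (fz_inj (b2.trans c2.symm))) hpru
      · rcases hLp with ⟨b1, b2⟩ | ⟨b1, b2⟩
        · rcases hLru with ⟨c1, c2⟩ | ⟨c1, c2⟩
          · exact absurd (Prod.ext (fz_inj (b1.trans c1.symm)) (fz_inj (b2.trans c2.symm))) hpru
          · right
            exact Prod.ext (fz_inj (a1.trans c1.symm)) (fz_inj (a2.trans c2.symm))
        · left
          exact Prod.ext (fz_inj (a1.trans b1.symm)) (fz_inj (a2.trans b2.symm))
    rcases hqeq with h | h
    · rw [← hp, ← hq, h]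
    · rw [← hq, h, hru]
  show c u.val ≠ c v.val
  rw [hCu, hCv]
  rcases hshare with hrow | hcol
  · have hfe : fz p.1 = fz q.1 := by rw [hrow]
    rcases hLp with ⟨b1, -⟩ | ⟨b1, -⟩ <;> rcases hLq with ⟨a1, -⟩ | ⟨a1, -⟩
    · exact absurd (by rw [← b1, ← a1, hfe]) hxx
    · have : xu = xv + R := by rw [← b1, ← a1, hfe]
      rw [this]
      exact (gR xv).symm
    · have : xv = xu + R := by rw [← a1, ← b1, hfe]
      rw [this]
      exact gR xu
    · have : xu + R = xv + R := by rw [← b1, ← a1, hfe]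
      exact absurd (by linear_combination this) hxx
  · have hfe : fz p.2 = fz q.2 := by rw [hcol]
    rcases hLp with ⟨-, b2⟩ | ⟨-, b2⟩ <;> rcases hLq with ⟨-, a2⟩ | ⟨-, a2⟩
    · have : xu + C = xv + C := by rw [← b2, ← a2, hfe]
      exact absurd (by linear_combination this) hxx
    · have h0 : xu + C = xv + C + D := by rw [← b2, ← a2, hfe]
      have : xu = xv + D := by linear_combination h0
      rw [this]
      exact (gD xv).symm
    · have h0 : xu + C + D = xv + C := by rw [← b2, ← a2, hfe]
      have : xv = xu + D := by linear_combination -h0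
      rw [this]
      exact gD xu
    · have : xu + C + D = xv + C + D := by rw [← b2, ← a2, hfe]
      exact absurd (by linear_combination this) hxx

def Gc (M N : ℕ) : ZMod M → Fin 4 := fun z =>
  ⟨(if z.val < N then 0 else 2) + z.val % 2, by split <;> omega⟩

lemma Gc_k (M N k : ℕ) [NeZero M] (hMN : M = 2 * N) (hk : k < M) (hkodd : k % 2 = 1) :
    ∀ z : ZMod M, Gc M N z ≠ Gc M N (z + (k : ZMod M)) := by
  intro z h
  have hv : (z + (k : ZMod M)).val = (z.val + k) % M := by
    rw [ZMod.val_add, ZMod.val_natCast_of_lt hk]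
  have hzlt : z.val < M := ZMod.val_lt z
  have hval : (if z.val < N then 0 else 2) + z.val % 2
      = (if (z + (k : ZMod M)).val < N then 0 else 2) + (z + (k : ZMod M)).val % 2 := by
    simp only [Gc, Fin.mk.injEq] at h
    exact h
  rw [hv] at hval
  have hmod : ((z.val + k) % M = z.val + k ∧ z.val + k < M) ∨
      ((z.val + k) % M = z.val + k - M ∧ M ≤ z.val + k) := by
    by_cases hlt : z.val + k < M
    · left; exact ⟨Nat.mod_eq_of_lt hlt, hlt⟩
    · right
      refine ⟨?_, by omega⟩
      rw [Nat.mod_eq_sub_mod (by omega)]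
      exact Nat.mod_eq_of_lt (by omega)
  rcases hmod with ⟨hm, hx⟩ | ⟨hm, hx⟩ <;> rw [hm] at hval <;> split_ifs at hval <;> omega

lemma Gc_N (M N : ℕ) [NeZero M] (hMN : M = 2 * N) (hN2 : N % 2 = 0) (hN0 : 0 < N) :
    ∀ z : ZMod M, Gc M N z ≠ Gc M N (z + (N : ZMod M)) := by
  intro z h
  have hv : (z + (N : ZMod M)).val = (z.val + N) % M := by
    rw [ZMod.val_add, ZMod.val_natCast_of_lt (by omega)]
  have hzlt : z.val < M := ZMod.val_lt z
  have hval : (if z.val < N then 0 else 2) + z.val % 2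
      = (if (z + (N : ZMod M)).val < N then 0 else 2) + (z + (N : ZMod M)).val % 2 := by
    simp only [Gc, Fin.mk.injEq] at h
    exact h
  rw [hv] at hval
  have hmod : ((z.val + N) % M = z.val + N ∧ z.val + N < M) ∨
      ((z.val + N) % M = z.val + N - M ∧ M ≤ z.val + N) := by
    by_cases hlt : z.val + N < M
    · left; exact ⟨Nat.mod_eq_of_lt hlt, hlt⟩
    · right
      refine ⟨?_, by omega⟩
      rw [Nat.mod_eq_sub_mod (by omega)]
      exact Nat.mod_eq_of_lt (by omega)
  rcases hmod with ⟨hm, hx⟩ | ⟨hm, hx⟩ <;> rw [hm] at hval <;> split_ifs at hval <;> omega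

end AuxProofMachinery

/-- for `M = 2^λ`-PSK with `k ∈ {1, …, M/2 − 1}` odd and
`s = sin(kπ/M)·exp(iπ/M)` or `s = (1/sin(kπ/M))·exp(iπ/M)`, the vital subgraph
is 4-colorable. -/
theorem psk_vital_colorable_four_sin_odd (lam M k : ℕ) (hlam : 3 ≤ lam)
    (hM : M = 2 ^ lam) (hk1 : 1 ≤ k) (hk2 : k ≤ M / 2 - 1) (hkodd : k % 2 = 1)
    (s : ℂ)
    (hs : s = ((Real.sin (k * Real.pi / M) : ℝ) : ℂ) *
            Complex.exp (Complex.I * (Real.pi : ℂ) / (M : ℂ)) ∨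
          s = ((1 / Real.sin (k * Real.pi / M) : ℝ) : ℂ) *
            Complex.exp (Complex.I * (Real.pi : ℂ) / (M : ℂ))) :
    (vital M (PSK M) s).Colorable 4 := by
  haveI : NeZero M := ⟨by simp [hM]⟩
  set N : ℕ := 2 ^ (lam - 1) with hN
  set Q : ℕ := 2 ^ (lam - 2) with hQ
  set k1 : ℕ := (k + 1) / 2 with hk1def
  have hMN : M = 2 * N := by rw [hM, hN, ← pow_succ']; congr 1; omega
  have hNQ : N = 2 * Q := by rw [hN, hQ, ← pow_succ']; congr 1; omega
  have hQ0 : 0 < Q := by rw [hQ]; positivity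
  have hN4 : N % 4 = 0 := by
    have h4 : N = 4 * 2 ^ (lam - 3) := by
      rw [hN, show lam - 1 = 2 + (lam - 3) by omega, pow_add]
      norm_num
    omega
  have hM2 : M / 2 = N := by omega
  have hkN : k < N := by omega
  have h2k1 : 2 * k1 = k + 1 := by omega
  have hkey : ∀ F : ZMod M → ℤ, (∑ j : ZMod M, (F j : ℂ) * Ez M j) = 0 →
      ∀ j, F j = F (j + ((N : ℕ) : ZMod M)) :=
    fun F hF => key lam M N (by omega) hM hN F hF
  -- ZMod facts
  have hcast_eq : ∀ a b : ℕ, a < M → b < M → ((a : ZMod M) = (b : ZMod M)) → a = b := by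
    intro a b ha hb hab
    have h1 := congrArg ZMod.val hab
    rw [ZMod.val_natCast_of_lt ha, ZMod.val_natCast_of_lt hb] at h1
    exact h1
  have hzero : ∀ a : ℕ, 0 < a → a < M → ((a : ZMod M) ≠ 0) := by
    intro a h0 hM' hc
    have h1 := hcast_eq a 0 hM' (by omega) (by rw [hc]; simp)
    omega
  have hn0 : ((N : ℕ) : ZMod M) ≠ 0 := hzero N (by omega) (by omega)
  have hnn : ((N : ℕ) : ZMod M) + ((N : ℕ) : ZMod M) = 0 := by
    rw [← Nat.cast_add, show N + N = M by omega, ZMod.natCast_self]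
  have hk0 : ((k : ℕ) : ZMod M) ≠ 0 := hzero k (by omega) (by omega)
  have hknq : ((k : ℕ) : ZMod M) ≠ ((N : ℕ) : ZMod M) := by
    intro h
    have := hcast_eq k N (by omega) (by omega) h
    omega
  have hkn0 : ((k : ℕ) : ZMod M) + ((N : ℕ) : ZMod M) ≠ 0 := by
    rw [← Nat.cast_add]; exact hzero (k + N) (by omega) (by omega)
  have h2k0 : ((k : ℕ) : ZMod M) + ((k : ℕ) : ZMod M) ≠ 0 := by
    rw [← Nat.cast_add]; exact hzero (k + k) (by omega) (by omega)
  have h2kn : ((k : ℕ) : ZMod M) + ((k : ℕ) : ZMod M) ≠ ((N : ℕ) : ZMod M) := by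
    rw [← Nat.cast_add]
    intro h
    have := hcast_eq (k + k) N (by omega) (by omega) h
    omega
  -- complex setup
  set ζ : ℂ := Complex.exp (Complex.I * (Real.pi : ℂ) / (M : ℂ)) with hζ
  have hζ0 : ζ ≠ 0 := Complex.exp_ne_zero _
  have hMC : (M : ℂ) = 2 * N := by rw [hMN]; push_cast; ring
  have hNC0 : (N : ℂ) ≠ 0 := Nat.cast_ne_zero.mpr (by omega)
  have hMC0 : (M : ℂ) ≠ 0 := Nat.cast_ne_zero.mpr (NeZero.ne M)
  have hprou2 : prou M = ζ ^ 2 := by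
    rw [prou, hζ, ← Complex.exp_nat_mul]; congr 1; push_cast; ring
  have hEznat : ∀ m : ℕ, Ez M (m : ZMod M) = ζ ^ (2 * m) := by
    intro m; rw [Ez_natCast, hprou2, ← pow_mul]
  have hEn : Ez M ((N : ℕ) : ZMod M) = -1 := by
    rw [hEznat, show 2 * N = M by omega, hζ, ← Complex.exp_nat_mul,
      show (M : ℂ) * (Complex.I * (Real.pi : ℂ) / (M : ℂ)) = (Real.pi : ℂ) * Complex.I from by
        field_simp, Complex.exp_pi_mul_I]
  have hI : ζ ^ N = Complex.I := by
    rw [hζ, ← Complex.exp_nat_mul,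
      show (N : ℂ) * (Complex.I * (Real.pi : ℂ) / (M : ℂ))
        = ((Real.pi / 2 : ℝ) : ℂ) * Complex.I from by
        rw [hMC]; push_cast; field_simp,
      Complex.exp_mul_I, ← Complex.ofReal_cos, ← Complex.ofReal_sin,
      Real.cos_pi_div_two, Real.sin_pi_div_two]
    simp
  have hEq : Ez M ((Q : ℕ) : ZMod M) = Complex.I := by
    rw [hEznat, show 2 * Q = N by omega, hI]
  have hS : ∀ m : Fin M, PSK M m = ζ * Ez M (fz m) := by
    intro m
    simp only [PSK]
    rw [show Ez M (fz m) = ζ ^ (2 * (m : ℕ)) from hEznat (m : ℕ), ← pow_succ']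
    rw [hζ, ← Complex.exp_nat_mul]
    congr 1
    push_cast
    ring
  have hsinpos : 0 < Real.sin (k * Real.pi / M) := by
    apply Real.sin_pos_of_pos_of_lt_pi
    · apply div_pos
      · apply mul_pos _ Real.pi_pos
        exact_mod_cast Nat.cast_pos.mpr (by omega : 0 < k)
      · exact_mod_cast Nat.cast_pos.mpr (by omega : 0 < M)
    · rw [div_lt_iff₀ (by exact_mod_cast Nat.cast_pos.mpr (by omega : 0 < M) : (0:ℝ) < M)]
      have hkM : (k : ℝ) < M := by exact_mod_cast (by omega : k < M)
      nlinarith [Real.pi_pos]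
  set sinc : ℂ := ((Real.sin (k * Real.pi / M) : ℝ) : ℂ) with hsincdef
  have hsinc0 : sinc ≠ 0 := by
    rw [hsincdef]; exact Complex.ofReal_ne_zero.mpr (ne_of_gt hsinpos)
  have hexpz : Complex.exp (((k * Real.pi / M : ℝ) : ℂ) * Complex.I) = ζ ^ k := by
    rw [hζ, ← Complex.exp_nat_mul]; congr 1; push_cast; ring
  have hexpzn : Complex.exp (-((k * Real.pi / M : ℝ) : ℂ) * Complex.I) * ζ ^ k = 1 := by
    rw [neg_mul, ← hexpz, ← Complex.exp_add]; simp
  have hI2 : Complex.I * Complex.I = -1 := Complex.I_mul_I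
  have hsin' : sinc * ζ ^ k = (1 - ζ ^ (2 * k)) * Complex.I / 2 := by
    rw [hsincdef, Complex.ofReal_sin,
      show ∀ z : ℂ, Complex.sin z
        = (Complex.exp (-z * Complex.I) - Complex.exp (z * Complex.I)) * Complex.I / 2
        from fun z => rfl]
    linear_combination (Complex.I / 2) * hexpzn - (Complex.I / 2 * ζ ^ k) * hexpz
  rcases hs with hs | hs
  · -- case w = 0
    set e2 : ZMod M := ((k1 : ℕ) : ZMod M) - ((Q : ℕ) : ZMod M) - ((k : ℕ) : ZMod M) with he2
    have hEe1 : Ez M (e2 + ((k : ℕ) : ZMod M)) * Complex.I = ζ ^ (k + 1) := by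
      have h1 : Ez M (e2 + ((k : ℕ) : ZMod M)) * Ez M ((Q : ℕ) : ZMod M)
          = Ez M ((k1 : ℕ) : ZMod M) := by
        rw [← Ez_add]; congr 1; rw [he2]; ring
      rw [hEq, hEznat, h2k1] at h1
      exact h1
    have hEe2 : Ez M e2 * Complex.I * ζ ^ (2 * k) = ζ ^ (k + 1) := by
      have h1 : Ez M e2 * Ez M ((Q : ℕ) : ZMod M) * Ez M ((k : ℕ) : ZMod M)
          = Ez M ((k1 : ℕ) : ZMod M) := by
        rw [← Ez_add, ← Ez_add]; congr 1; rw [he2]; ring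
      rw [hEq, hEznat, hEznat, h2k1] at h1
      exact h1
    have hss : Ez M (e2 + ((k : ℕ) : ZMod M)) - Ez M e2 = 2 * s := by
      rw [hs]
      apply mul_right_cancel₀ (show Complex.I * ζ ^ (2 * k) ≠ 0 from
        mul_ne_zero Complex.I_ne_zero (pow_ne_zero _ hζ0))
      linear_combination ζ ^ (2 * k) * hEe1 - hEe2 - 2 * Complex.I * ζ ^ (k + 1) * hsin'
        - ζ ^ (k + 1) * (1 - ζ ^ (2 * k)) * hI2
    have hstruct0 : ∀ p r : Fin M × Fin M, p ≠ r →
        PSK M p.1 + s * PSK M p.2 = PSK M r.1 + s * PSK M r.2 →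
        ∃ x : ZMod M,
          ((fz p.1 = x ∧ fz p.2 = x + (-e2)) ∨
            (fz p.1 = x + ((k : ℕ) : ZMod M) ∧ fz p.2 = x + (-e2) + ((N : ℕ) : ZMod M))) ∧
          ((fz r.1 = x ∧ fz r.2 = x + (-e2)) ∨
            (fz r.1 = x + ((k : ℕ) : ZMod M) ∧ fz r.2 = x + (-e2) + ((N : ℕ) : ZMod M))) := by
      intro p r hpr hrel
      rw [hS p.1, hS p.2, hS r.1, hS r.2] at hrel
      have h' : Ez M (fz p.1) + s * Ez M (fz p.2) = Ez M (fz r.1) + s * Ez M (fz r.2) := by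
        apply mul_left_cancel₀ hζ0
        linear_combination hrel
      have h6 : 2 * Ez M (fz p.1) + Ez M (fz p.2 + (e2 + ((k : ℕ) : ZMod M)))
            - Ez M (fz p.2 + e2)
          = 2 * Ez M (fz r.1) + Ez M (fz r.2 + (e2 + ((k : ℕ) : ZMod M)))
            - Ez M (fz r.2 + e2) := by
        have hss' := hss
        rw [Ez_add] at hss'
        simp only [Ez_add]
        linear_combination 2 * h' + (Ez M (fz p.2) - Ez M (fz r.2)) * hss'
      obtain ⟨hb, hbr⟩ := core ((N : ℕ) : ZMod M) ((k : ℕ) : ZMod M) hkey hn0 hnn hEn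
        hk0 hknq hkn0 h2k0 h2kn (fz p.1) (fz r.1) (fz p.2) (fz r.2) e2
        (fun hc => hpr (Prod.ext (fz_inj hc.1) (fz_inj hc.2))) h6
      rcases hbr with ⟨h1, h2⟩ | ⟨h1, h2⟩
      · exact ⟨fz p.1, Or.inl ⟨rfl, by linear_combination -h1⟩,
          Or.inr ⟨by linear_combination h2 - h1, by linear_combination hb - h1⟩⟩
      · exact ⟨fz p.1 - ((k : ℕ) : ZMod M),
          Or.inr ⟨by ring, by linear_combination h1⟩,
          Or.inl ⟨by linear_combination h1 - h2, by linear_combination hb + h1 + hnn⟩⟩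
    exact colorable_of_struct M (PSK M) s (Gc M N) ((k : ℕ) : ZMod M) (-e2) ((N : ℕ) : ZMod M)
      (fun h => hknq (by linear_combination -h))
      (Gc_k M N k hMN (by omega) hkodd) (Gc_N M N hMN (by omega) (by omega)) hstruct0
  · -- case w = 1
    rw [show ((1 / Real.sin (k * Real.pi / M) : ℝ) : ℂ)
        = 1 / ((Real.sin (k * Real.pi / M) : ℝ) : ℂ) from by push_cast; ring] at hs
    have hofr : ((Real.sin (k * Real.pi / M) : ℝ) : ℂ) ≠ 0 :=
      Complex.ofReal_ne_zero.mpr (ne_of_gt hsinpos)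
    have hssinc : s * sinc = ζ := by
      rw [hs, hsincdef, mul_right_comm, one_div, inv_mul_cancel₀ hofr, one_mul]
    set e2' : ZMod M := ((k1 : ℕ) : ZMod M) - ((k : ℕ) : ZMod M) with he2'
    set hcz : ZMod M := ((Q : ℕ) : ZMod M) + 1 with hhcz
    have hEhc : Ez M hcz = Complex.I * ζ ^ 2 := by
      have h1 : Ez M hcz = Ez M ((Q : ℕ) : ZMod M) * Ez M ((1 : ℕ) : ZMod M) := by
        rw [← Ez_add]; congr 1; rw [hhcz]; push_cast; ring
      rw [h1, hEq, hEznat]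
    have hEk1' : Ez M (e2' + ((k : ℕ) : ZMod M)) = ζ ^ (k + 1) := by
      rw [show e2' + ((k : ℕ) : ZMod M) = ((k1 : ℕ) : ZMod M) from by rw [he2']; ring,
        hEznat, h2k1]
    have hEe2' : Ez M e2' * ζ ^ (2 * k) = ζ ^ (k + 1) := by
      have h1 : Ez M e2' * Ez M ((k : ℕ) : ZMod M) = Ez M ((k1 : ℕ) : ZMod M) := by
        rw [← Ez_add]; congr 1; rw [he2']; ring
      rw [hEznat, hEznat, h2k1] at h1
      exact h1
    have key1 : 2 * sinc * Complex.I * ζ = Ez M (e2' + ((k : ℕ) : ZMod M)) - Ez M e2' := by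
      apply mul_right_cancel₀ (pow_ne_zero (2 * k) hζ0)
      linear_combination 2 * Complex.I * ζ ^ (k + 1) * hsin'
        + ζ ^ (k + 1) * (1 - ζ ^ (2 * k)) * hI2 - ζ ^ (2 * k) * hEk1' + hEe2'
    have key2 : 2 * s * sinc * Complex.I * ζ = 2 * Ez M hcz := by
      rw [hEhc]; linear_combination (2 * Complex.I * ζ) * hssinc
    have hstruct1 : ∀ p r : Fin M × Fin M, p ≠ r →
        PSK M p.1 + s * PSK M p.2 = PSK M r.1 + s * PSK M r.2 →
        ∃ x : ZMod M,
          ((fz p.1 = x ∧ fz p.2 = x + (e2' - hcz)) ∨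
            (fz p.1 = x + ((N : ℕ) : ZMod M) ∧ fz p.2 = x + (e2' - hcz) + ((k : ℕ) : ZMod M))) ∧
          ((fz r.1 = x ∧ fz r.2 = x + (e2' - hcz)) ∨
            (fz r.1 = x + ((N : ℕ) : ZMod M) ∧ fz r.2 = x + (e2' - hcz) + ((k : ℕ) : ZMod M))) := by
      intro p r hpr hrel
      rw [hS p.1, hS p.2, hS r.1, hS r.2] at hrel
      have h' : Ez M (fz p.1) + s * Ez M (fz p.2) = Ez M (fz r.1) + s * Ez M (fz r.2) := by
        apply mul_left_cancel₀ hζ0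
        linear_combination hrel
      have h6 : 2 * Ez M (fz p.2 + hcz) + Ez M (fz p.1 + (e2' + ((k : ℕ) : ZMod M)))
            - Ez M (fz p.1 + e2')
          = 2 * Ez M (fz r.2 + hcz) + Ez M (fz r.1 + (e2' + ((k : ℕ) : ZMod M)))
            - Ez M (fz r.1 + e2') := by
        have key1' := key1
        rw [Ez_add] at key1'
        simp only [Ez_add]
        linear_combination (2 * sinc * Complex.I * ζ) * h'
          - (Ez M (fz p.1) - Ez M (fz r.1)) * key1'
          - (Ez M (fz p.2) - Ez M (fz r.2)) * key2
      obtain ⟨hb, hbr⟩ := core ((N : ℕ) : ZMod M) ((k : ℕ) : ZMod M) hkey hn0 hnn hEn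
        hk0 hknq hkn0 h2k0 h2kn (fz p.2 + hcz) (fz r.2 + hcz) (fz p.1) (fz r.1) e2'
        (fun hc => hpr (Prod.ext (fz_inj hc.2) (fz_inj (by linear_combination hc.1)))) h6
      rcases hbr with ⟨h1, h2⟩ | ⟨h1, h2⟩
      · exact ⟨fz p.1, Or.inl ⟨rfl, by linear_combination h1⟩,
          Or.inr ⟨by linear_combination hb, by linear_combination h2⟩⟩
      · exact ⟨fz p.1 + ((N : ℕ) : ZMod M),
          Or.inr ⟨by rw [add_assoc, hnn, add_zero], by linear_combination -h1 - hnn⟩,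
          Or.inl ⟨by linear_combination hb, by linear_combination -h2 - hnn⟩⟩
    exact colorable_of_struct M (PSK M) s (Gc M N) ((N : ℕ) : ZMod M) (e2' - hcz)
      ((k : ℕ) : ZMod M) hknq
      (Gc_N M N hMN (by omega) (by omega)) (Gc_k M N k hMN (by omega) hkodd) hstruct1
end
end

section
/- Let M = 2^λ with λ ≥ 3, let S be the M-PSK signal set, let k = 2^m·a₁ ∈ {1,…,M/2−1} with m ≥ 1 and a₁ odd, and let s = sin(kπ/M) or s = 1/sin(kπ/M). Then the vital subgraph G_s^V of the singularity removal graph G_s admits a proper vertex coloring with 4 colors (it is 4-colorable). -/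
noncomputable section

namespace PSKV



lemma bit_eq_mod (x P : ℕ) : x / P % 2 = x % (P * 2) / P := (Nat.mod_mul_right_div_self x P 2).symm

/-- bit `m` of `(v + 2^m * a₁) % 2^lam` differs from bit `m` of `v`, for odd `a₁`. -/
lemma bit_flip {lam m a₁ v : ℕ} (h : m + 1 ≤ lam) (ha : a₁ % 2 = 1) :
    ((v + 2^m * a₁) % 2^lam) / 2^m % 2 ≠ v / 2^m % 2 := by
  set P := 2^m with hPdef
  have hP : 0 < P := Nat.pow_pos (by norm_num)
  have hT : P * 2 = 2^(m+1) := by rw [hPdef, pow_succ]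
  have hdvd : P * 2 ∣ 2^lam := by rw [hT]; exact pow_dvd_pow 2 h
  rw [bit_eq_mod, bit_eq_mod, Nat.mod_mod_of_dvd _ hdvd]
  obtain ⟨t, ht⟩ : ∃ t, a₁ = 2*t + 1 := ⟨a₁/2, by omega⟩
  have key : (v + P * a₁) % (P*2) = (v % (P*2) + P) % (P*2) := by
    rw [ht]
    calc (v + P * (2*t+1)) % (P*2) = (v + P + (P*2) * t) % (P*2) := by ring_nf
      _ = (v + P) % (P*2) := by rw [Nat.add_mul_mod_self_left]
      _ = (v % (P*2) + P) % (P*2) := (Nat.mod_add_mod v (P*2) P).symm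
  rw [key]
  set r := v % (P*2) with hr
  have hrlt : r < P*2 := Nat.mod_lt _ (by omega)
  rcases lt_or_ge r P with hc | hc
  · rw [Nat.mod_eq_of_lt (by omega), Nat.add_div_right _ hP, Nat.div_eq_of_lt hc]
    omega
  · have h1 : (r + P) % (P*2) = r - P := by
      rw [Nat.mod_eq_sub_mod (by omega), Nat.mod_eq_of_lt (by omega)]; omega
    rw [h1, Nat.div_eq_of_lt (by omega)]
    have h2 : r / P = 1 := by
      have : r = P * 1 + (r - P) := by omega
      rw [this, Nat.mul_add_div hP, Nat.div_eq_of_lt (by omega)]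
    omega





/-- the 4-coloring of `ZMod M`: bits `m` and `lam-1`. -/
def color (lam m : ℕ) {M : ℕ} (z : ZMod M) : Fin 2 × Fin 2 :=
  (⟨z.val / 2^m % 2, Nat.mod_lt _ two_pos⟩, ⟨z.val / 2^(lam-1) % 2, Nat.mod_lt _ two_pos⟩)

variable {lam M m k a₁ : ℕ}

lemma val_add_nat (hM : M = 2^lam) {c : ℕ} (hc : c < M) (z : ZMod M) :
    (z + (c : ZMod M)).val = (z.val + c) % M := by
  have : NeZero M := ⟨by rw [hM]; positivity⟩
  rw [ZMod.val_add, ZMod.val_cast_of_lt hc]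

lemma color_add_k_ne (hM : M = 2^lam) (hmlam : m + 1 ≤ lam) (ha : a₁ % 2 = 1)
    (hk : k = 2^m * a₁) (hkM : k < M) (z : ZMod M) :
    color lam m (z + (k : ZMod M)) ≠ color lam m z := by
  subst hk; subst hM
  intro hcol
  have h1 := congrArg (fun x : Fin 2 × Fin 2 => (x.1 : ℕ)) hcol
  simp only [color] at h1
  rw [val_add_nat rfl hkM] at h1
  exact bit_flip hmlam ha h1

lemma color_add_n_ne (hM : M = 2^lam) (hlam1 : 1 ≤ lam) (z : ZMod M) :
    color lam m (z + ((2^(lam-1) : ℕ) : ZMod M)) ≠ color lam m z := by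
  subst hM
  intro hcol
  have h1 := congrArg (fun x : Fin 2 × Fin 2 => (x.2 : ℕ)) hcol
  simp only [color] at h1
  have hn : (2^(lam-1) : ℕ) < 2^lam := Nat.pow_lt_pow_right one_lt_two (by omega)
  rw [val_add_nat rfl hn] at h1
  have := bit_flip (lam := lam) (m := lam - 1) (a₁ := 1) (v := z.val) (by omega) (by norm_num)
  rw [mul_one] at this
  exact this h1

lemma castFin_inj (p q : Fin M) (h : ((p : ℕ) : ZMod M) = ((q : ℕ) : ZMod M)) : p = q := by
  have : NeZero M := ⟨by have := p.2; omega⟩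
  have h2 := congrArg ZMod.val h
  rw [ZMod.val_cast_of_lt p.2, ZMod.val_cast_of_lt q.2] at h2
  exact Fin.ext h2




open Polynomial

lemma coeff_periodic {lam M n : ℕ} (hlam : 1 ≤ lam) (hM : M = 2^lam) (hn : n = 2^(lam-1))
    [NeZero M] (c : ZMod M → ℤ)
    (h : ∑ t : ZMod M, (c t : ℂ) *
        (Complex.exp (2 * Real.pi * Complex.I / (M : ℕ))) ^ t.val = 0) :
    ∀ t : ZMod M, c t = c (t + ((n : ℕ) : ZMod M)) := by
  have hM0 : (M : ℕ) ≠ 0 := by rw [hM]; positivity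
  have hMn : M = n + n := by rw [hM, hn, ← two_mul, ← pow_succ']; congr 1; omega
  have hn0 : 0 < n := by rw [hn]; positivity
  set ξ := Complex.exp (2 * Real.pi * Complex.I / (M : ℕ)) with hxi
  have prim : IsPrimitiveRoot ξ M := Complex.isPrimitiveRoot_exp M hM0
  have hxM : ξ ^ M = 1 := prim.pow_eq_one
  have hxn : ξ ^ n = -1 := by
    have h2 : ξ^n * ξ^n = 1 := by rw [← pow_add, ← hMn]; exact hxM
    rcases mul_self_eq_one_iff.mp h2 with h1 | h1
    · exact absurd h1 (prim.pow_ne_one_of_pos_of_lt hn0.ne' (by omega))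
    · exact h1
  have hvc : ∀ t : ZMod M, ((t.val : ℕ) : ZMod M) = t := fun t => ZMod.natCast_rightInverse t
  have hsum : ∑ t : ZMod M, (c t : ℂ) * ξ ^ t.val
      = ∑ j ∈ Finset.range M, (c (j : ZMod M) : ℂ) * ξ ^ j := by
    refine Finset.sum_nbij' (fun t => t.val) (fun j => (j : ZMod M)) ?_ ?_ ?_ ?_ ?_
    · intro t _; exact Finset.mem_range.mpr t.val_lt
    · intro j _; exact Finset.mem_univ _
    · intro t _; exact hvc t
    · intro j hj; exact ZMod.val_cast_of_lt (Finset.mem_range.mp hj)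
    · intro t _; rw [hvc t]
  set r : ℕ → ℤ := fun j => c (j : ZMod M) - c ((j : ZMod M) + ((n:ℕ) : ZMod M)) with hrdef
  have hsplit : ∑ j ∈ Finset.range M, (c (j : ZMod M) : ℂ) * ξ ^ j
      = ∑ j ∈ Finset.range n, (r j : ℂ) * ξ ^ j := by
    rw [show Finset.range M = Finset.range (n + n) from by rw [← hMn],
      Finset.sum_range_add, ← Finset.sum_add_distrib]
    apply Finset.sum_congr rfl
    intro j _
    have hcast : ((n + j : ℕ) : ZMod M) = (j : ZMod M) + ((n:ℕ) : ZMod M) := by push_cast; ring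
    rw [hcast, pow_add, hxn, hrdef]
    push_cast
    ring
  set P : Polynomial ℚ := ∑ j ∈ Finset.range n, C ((r j : ℚ)) * X^j with hPdef
  have haev : aeval ξ P = 0 := by
    rw [hPdef, map_sum]
    have : ∀ j ∈ Finset.range n, aeval ξ (C ((r j : ℚ)) * X^j) = (r j : ℂ) * ξ^j := by
      intro j _
      rw [map_mul, aeval_C, map_pow, aeval_X, eq_ratCast]
      push_cast
      ring
    rw [Finset.sum_congr rfl this, ← hsplit, ← hsum, h]
  have hP0 : P = 0 := by
    by_contra hne
    have hdeg : P.degree < (n : ℕ) := by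
      rw [hPdef]
      refine lt_of_le_of_lt (Polynomial.degree_sum_le _ _) ?_
      rw [Finset.sup_lt_iff (by exact_mod_cast WithBot.bot_lt_coe (n:ℕ))]
      intro j hj
      refine lt_of_le_of_lt (Polynomial.degree_C_mul_X_pow_le _ _) ?_
      exact_mod_cast Finset.mem_range.mp hj
    have hmin : (minpoly ℚ ξ).degree ≤ P.degree := minpoly.degree_le_of_ne_zero ℚ ξ hne haev
    rw [← Polynomial.cyclotomic_eq_minpoly_rat prim (by omega)] at hmin
    rw [Polynomial.degree_cyclotomic] at hmin
    rw [hM, Nat.totient_prime_pow Nat.prime_two (by omega)] at hmin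
    have hnn : (2^(lam-1) * (2-1) : ℕ) = n := by rw [hn]; omega
    rw [hnn] at hmin
    exact absurd (lt_of_le_of_lt hmin hdeg) (lt_irrefl _)
  have hco : ∀ j, j < n → r j = 0 := by
    intro j hj
    have h2 := congrArg (fun p => Polynomial.coeff p j) hP0
    simp only [hPdef, Polynomial.finset_sum_coeff, Polynomial.coeff_C_mul,
      Polynomial.coeff_X_pow, Polynomial.coeff_zero, mul_ite, mul_one, mul_zero] at h2
    rw [Finset.sum_ite_eq (Finset.range n) j (fun x => ((r x : ℚ)))] at h2
    rw [if_pos (Finset.mem_range.mpr hj)] at h2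
    exact_mod_cast h2
  intro t
  rcases lt_or_ge t.val n with hv | hv
  · have h3 := hco t.val hv
    rw [hrdef] at h3
    simp only [hvc t] at h3
    omega
  · have hv2 : t.val - n < n := by have := t.val_lt; omega
    have h0 := hco (t.val - n) hv2
    rw [hrdef] at h0
    simp only at h0
    have e1 : ((t.val - n : ℕ) : ZMod M) + ((n:ℕ) : ZMod M) = t := by
      rw [← Nat.cast_add, show t.val - n + n = t.val by omega, hvc t]
    have e2 : t + ((n:ℕ) : ZMod M) = ((t.val - n : ℕ) : ZMod M) := by
      conv_lhs => rw [← e1]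
      rw [add_assoc, ← Nat.cast_add, show (n + n : ℕ) = M by omega]
      simp [ZMod.natCast_self]
    rw [e1] at h0
    rw [e2]
    omega




variable {M : ℕ}

/-- The coefficient function of the 6-term vanishing sum. -/
def Lfun (A A' P1 P2 P3 P4 : ZMod M) (t : ZMod M) : ℤ :=
  (if A = t then (2:ℤ) else 0) - (if A' = t then 2 else 0) + (if P1 = t then 1 else 0)
    - (if P2 = t then 1 else 0) + (if P4 = t then 1 else 0) - (if P3 = t then 1 else 0)

lemma comb (ν κ : ZMod M) (hν0 : ν ≠ 0) (hνν : ν + ν = 0)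
    (hκ0 : κ ≠ 0) (hκν : κ ≠ ν) (h2κ : κ + κ ≠ 0) (hκν2 : κ + ν ≠ 0)
    (A A' P1 P2 P3 P4 : ZMod M)
    (h12 : P1 = P2 + κ) (h34 : P3 = P4 + κ)
    (hne : ¬(A = A' ∧ P1 = P3))
    (H : ∀ t, Lfun A A' P1 P2 P3 P4 t = Lfun A A' P1 P2 P3 P4 (t + ν)) :
    P3 = P1 + ν ∧ ((A = P2 ∧ A' = P1) ∨ (A = P1 + ν ∧ A' = P2 + ν)) := by
  have shift_ne : ∀ z : ZMod M, z ≠ z + ν := fun z h => hν0 (by linear_combination -h)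
  have d12 : P1 ≠ P2 := fun h => hκ0 (by linear_combination h - h12)
  have d34 : P3 ≠ P4 := fun h => hκ0 (by linear_combination h - h34)
  have d12ν : P1 ≠ P2 + ν := fun h => hκν (by linear_combination h - h12)
  have d21ν : P2 ≠ P1 + ν := fun h => hκν2 (by linear_combination -h12 - h)
  have d34ν : P3 ≠ P4 + ν := fun h => hκν (by linear_combination h - h34)
  have d43ν : P4 ≠ P3 + ν := fun h => hκν2 (by linear_combination -h34 - h)
  -- Step I : P1 ≠ P3
  have hP13 : P1 ≠ P3 := by
    intro hP
    have hA : A ≠ A' := fun h => hne ⟨h, hP⟩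
    have hP24 : P2 = P4 := by linear_combination -h12 + h34 + hP
    have h1 := H A
    simp only [Lfun, eq_self_iff_true, if_true] at h1
    rw [← hP, ← hP24] at h1
    rw [if_neg (fun h : A' = A => hA h.symm), if_neg (shift_ne A)] at h1
    split_ifs at h1 <;> omega
  have hP24 : P2 ≠ P4 := fun h => hP13 (by linear_combination h12 - h34 + h)
  -- Step II : A ≠ A'
  have hAA' : A ≠ A' := by
    intro hA
    have h1 := H P1
    simp only [Lfun, eq_self_iff_true, if_true] at h1
    rw [← hA] at h1
    rw [if_neg (fun h : P2 = P1 => d12 h.symm),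
      if_neg (fun h : P3 = P1 => hP13 h.symm), if_neg (shift_ne P1),
      if_neg d21ν] at h1
    by_cases u4 : P4 = P1 + ν
    case neg => rw [if_neg u4] at h1; split_ifs at h1 <;> omega
    rw [if_pos u4] at h1
    have h2 := H P2
    simp only [Lfun, eq_self_iff_true, if_true] at h2
    rw [← hA] at h2
    by_cases w : P4 = P2
    · exact absurd (w.symm.trans u4) d21ν
    rw [if_neg d12, if_neg w, if_neg d12ν, if_neg (shift_ne P2),
      if_neg (fun h : P4 = P2 + ν => d12 (by linear_combination h - u4)),
      if_neg (fun h : P3 = P2 + ν => h2κ (by linear_combination h - h34 - u4 - h12))] at h2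
    split_ifs at h2 <;> omega
  -- Step III.0 : A' ≠ A + ν
  have hA'ν : A' ≠ A + ν := by
    intro hc
    have h1 := H A
    simp only [Lfun, eq_self_iff_true, if_true] at h1
    rw [if_neg (fun h : A' = A => hAA' h.symm), if_neg (shift_ne A),
      if_pos hc] at h1
    by_cases q1 : P3 = A
    case neg => rw [if_neg q1] at h1; split_ifs at h1 <;> omega
    by_cases q2 : P4 = A + ν
    case pos => exact hκν2 (by linear_combination q1 - q2 - h34)
    rw [if_pos q1, if_neg q2] at h1
    split_ifs at h1 <;> omega
  -- main analysis at A
  have h1 := H A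
  simp only [Lfun, eq_self_iff_true, if_true] at h1
  rw [if_neg (fun h : A' = A => hAA' h.symm), if_neg (shift_ne A),
    if_neg hA'ν] at h1
  by_cases ha : P2 = A
  · -- case (a) : family 1
    rw [if_pos ha, if_neg (fun h : P1 = A => d12 (h.trans ha.symm)),
      if_neg (fun h : P4 = A => hP24 (ha.trans h.symm)),
      if_neg (fun h : P1 = A + ν => d12ν (by linear_combination h - ha)),
      if_neg (fun h : P2 = A + ν => hν0 (by linear_combination ha - h))] at h1
    by_cases hc2 : P3 = A
    · -- subcase: P2 = P3 = A, impossible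
      exfalso
      have h2 := H A'
      simp only [Lfun, eq_self_iff_true, if_true] at h2
      rw [if_neg hAA',
        if_neg (fun h : P2 = A' => hAA' (ha.symm.trans h)),
        if_neg (fun h : P3 = A' => hAA' (hc2.symm.trans h)),
        if_neg (fun h : A = A' + ν => hA'ν (by linear_combination -h - hνν)),
        if_neg (shift_ne A'),
        if_neg (fun h : P2 = A' + ν => hA'ν (by linear_combination ha - h - hνν)),
        if_neg (fun h : P3 = A' + ν => hA'ν (by linear_combination hc2 - h - hνν))] at h2
      split_ifs at h2 with g1 g2 g3 g4 <;>
        first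
          | omega
          | exact h2κ (by linear_combination (g1.trans g2.symm : P1 = P4) -
              (ha.trans hc2.symm : P2 = P3) - h12 - h34)
    · rw [if_neg hc2] at h1
      by_cases v3 : P4 = A + ν
      case neg => rw [if_neg v3] at h1; split_ifs at h1 <;> omega
      rw [if_pos v3] at h1
      have hy : P3 = P1 + ν := by linear_combination h34 + v3 - ha - h12
      -- now force A' = P1
      have h3 := H P1
      simp only [Lfun, eq_self_iff_true, if_true] at h3
      rw [if_neg (fun h : A = P1 => d12 (ha.trans h).symm),
        if_neg (fun h : P2 = P1 => d12 h.symm),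
        if_neg (fun h : P4 = P1 => hκν (by linear_combination -h12 + v3 - ha - h)),
        if_neg (fun h : P3 = P1 => hP13 h.symm),
        if_neg (fun h : A = P1 + ν => d21ν (ha.trans h)),
        if_neg (shift_ne P1), if_neg d21ν,
        if_neg (fun h : P4 = P1 + ν => hκ0 (by linear_combination -h12 + v3 - h - ha)),
        if_pos hy] at h3
      by_cases g : A' = P1
      · exact ⟨hy, Or.inl ⟨ha.symm, g⟩⟩
      · rw [if_neg g] at h3; split_ifs at h3 <;> omega
  · by_cases hb : P3 = A
    · -- case (b) : family 2
      rw [if_pos hb, if_neg (fun h : P1 = A => hP13 (h.trans hb.symm)),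
        if_neg ha,
        if_neg (fun h : P4 = A => d34 (hb.trans h.symm)),
        if_neg (fun h : P4 = A + ν => hκν2 (by linear_combination hb - h34 - h)),
        if_neg (fun h : P3 = A + ν => hν0 (by linear_combination hb - h))] at h1
      by_cases c1 : P1 = A + ν
      case neg => rw [if_neg c1] at h1; split_ifs at h1 <;> omega
      rw [if_pos c1] at h1
      have hy : P3 = P1 + ν := by linear_combination hb - c1 - hνν
      have hx : A = P1 + ν := by linear_combination -c1 - hνν
      have h3 := H P2
      simp only [Lfun, eq_self_iff_true, if_true] at h3
      rw [if_neg (fun h : A = P2 => d21ν (by linear_combination hx - h)), if_neg d12,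
        if_neg (fun h : P4 = P2 => hν0 (by linear_combination h + h34 - hy - h12)),
        if_neg (fun h : P3 = P2 => hκν2 (by linear_combination h - h12 - hy)),
        if_neg (fun h : A = P2 + ν => d12 (by linear_combination h - hx)),
        if_neg d12ν, if_neg (shift_ne P2),
        if_pos (show P4 = P2 + ν by linear_combination hy + h12 - h34),
        if_neg (fun h : P3 = P2 + ν => d12 (by linear_combination h - hy))] at h3
      by_cases g2 : A' = P2 + ν
      · exact ⟨hy, Or.inr ⟨hx, g2⟩⟩
      · rw [if_neg g2] at h3; split_ifs at h3 <;> omega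
    · by_cases hcψ : P1 = A + ν
      · -- case (c) : impossible
        exfalso
        rw [if_neg ha, if_neg hb,
          if_neg (fun h : P1 = A => hν0 (by linear_combination h - hcψ)),
          if_pos hcψ,
          if_neg (fun h : P2 = A + ν => d12 (hcψ.trans h.symm)),
          if_neg (fun h : P3 = A + ν => hP13 (h.trans hcψ.symm).symm)] at h1
        by_cases c2 : P4 = A + ν
        case neg => rw [if_neg c2] at h1; split_ifs at h1 <;> omega
        have hP14 : P4 = P1 := c2.trans hcψ.symm
        have hP31 : P3 = P1 + κ := by linear_combination h34 + hP14
        have h3 := H P2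
        simp only [Lfun, eq_self_iff_true, if_true] at h3
        rw [if_neg (fun h : A = P2 => d12ν (by linear_combination hcψ + h)),
          if_neg d12,
          if_neg (fun h : P4 = P2 => d12 (hP14.symm.trans h)),
          if_neg (fun h : P3 = P2 => h2κ (by linear_combination h - hP31 - h12)),
          if_neg (fun h : A = P2 + ν => d12 (by linear_combination hcψ + h + hνν)),
          if_neg d12ν, if_neg (shift_ne P2),
          if_neg (fun h : P4 = P2 + ν => d12ν (hP14.symm.trans h))] at h3
        by_cases g1 : A' = P2
        · by_cases g2 : A' = P2 + ν
          · exact shift_ne P2 (g1.symm.trans g2)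
          · rw [if_pos g1, if_neg g2] at h3
            split_ifs at h3 <;> omega
        · by_cases g2 : A' = P2 + ν
          · rw [if_neg g1, if_pos g2] at h3
            split_ifs at h3 <;> omega
          · rw [if_neg g1, if_neg g2] at h3
            by_cases g3 : P3 = P2 + ν
            case neg => rw [if_neg g3] at h3; omega
            -- g3 : P3 = P2 + ν ; evaluate at A'
            have h4 := H A'
            simp only [Lfun, eq_self_iff_true, if_true] at h4
            rw [if_neg hAA',
              if_neg (fun h : P1 = A' => hA'ν (h.symm.trans hcψ)),
              if_neg (fun h : P2 = A' => g1 h.symm),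
              if_neg (fun h : P4 = A' => hA'ν ((h.symm.trans hP14).trans hcψ)),
              if_neg (fun h : P3 = A' => g2 (h.symm.trans g3)),
              if_neg (fun h : A = A' + ν => hA'ν (by linear_combination -h - hνν)),
              if_neg (shift_ne A'),
              if_neg (fun h : P1 = A' + ν => hAA' (by linear_combination h - hcψ)),
              if_neg (fun h : P4 = A' + ν => hAA' (by linear_combination h - hP14 - hcψ)),
              if_neg (fun h : P3 = A' + ν => g1 (by linear_combination g3 - h))] at h4
            split_ifs at h4 <;> omega
      · by_cases hd : P4 = A + ν
        · -- case (d): numeric contradiction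
          exfalso
          rw [if_neg ha, if_neg hb,
            if_neg (fun h : P4 = A => hν0 (by linear_combination h - hd)),
            if_neg hcψ, if_pos hd] at h1
          split_ifs at h1 <;> omega
        · -- case (e): numeric contradiction
          exfalso
          rw [if_neg ha, if_neg hb, if_neg hcψ, if_neg hd] at h1
          split_ifs at h1 <;> omega





/-- `Efun M j = exp(jπi/M)`. -/
def Efun (M : ℕ) (j : ℤ) : ℂ := Complex.exp (j * (Real.pi * Complex.I / M))

lemma E_add (M : ℕ) (i j : ℤ) : Efun M (i + j) = Efun M i * Efun M j := by
  rw [Efun, Efun, Efun, ← Complex.exp_add]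
  congr 1
  push_cast
  ring

lemma E_ne (M : ℕ) (j : ℤ) : Efun M j ≠ 0 := Complex.exp_ne_zero _

lemma E_M {M : ℕ} (hM0 : M ≠ 0) : Efun M M = -1 := by
  rw [Efun]
  have : ((M : ℤ) : ℂ) * (Real.pi * Complex.I / M) = Real.pi * Complex.I := by
    have : (M : ℂ) ≠ 0 := Nat.cast_ne_zero.mpr hM0
    field_simp
    norm_cast
  rw [this, Complex.exp_pi_mul_I]

lemma E_I {M n : ℕ} (hM0 : M ≠ 0) (hn : 2 * n = M) : Efun M n = Complex.I := by
  rw [Efun]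
  have harg : ((n : ℤ) : ℂ) * (Real.pi * Complex.I / M) = (Real.pi / 2 : ℝ) * Complex.I := by
    have hM : (M : ℂ) = 2 * n := by exact_mod_cast congrArg (Nat.cast : ℕ → ℂ) hn.symm
    have hn0 : (n : ℂ) ≠ 0 := by
      intro h
      rw [h, mul_zero] at hM
      exact (Nat.cast_ne_zero.mpr hM0) hM
    rw [hM]
    push_cast
    field_simp
  rw [harg, Complex.exp_mul_I]
  rw [← Complex.ofReal_cos, ← Complex.ofReal_sin, Real.cos_pi_div_two, Real.sin_pi_div_two]
  simp

lemma PSK_eq (M : ℕ) (t : Fin M) : PSK M t = Efun M (2 * (t : ℕ) + 1) := by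
  rw [PSK, Efun]
  congr 1
  push_cast
  ring

lemma sin_eq {M : ℕ} (k : ℕ) :
    ((Real.sin (k * Real.pi / M) : ℝ) : ℂ) = (Efun M (-(k:ℤ)) - Efun M k) * Complex.I / 2 := by
  rw [Complex.ofReal_sin]
  show ((Complex.exp (-((k * Real.pi / M : ℝ) : ℂ) * Complex.I)
      - Complex.exp (((k * Real.pi / M : ℝ) : ℂ) * Complex.I)) * Complex.I / 2) = _
  rw [Efun, Efun]
  congr 3 <;> (push_cast; ring)



lemma E_zero (M : ℕ) : Efun M 0 = 1 := by rw [Efun]; norm_num [Complex.exp_zero]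

lemma rel_iff_master {M n k K Q : ℕ} (hM0 : M ≠ 0) (hn : 2 * n = M) (hK : 2 * K = k)
    (hQ : 2 * Q = n) (a a' b b' : ℤ) :
    (Efun M (2*a+1) + ((Real.sin (k * Real.pi / M) : ℝ) : ℂ) * Efun M (2*b+1)
      = Efun M (2*a'+1) + ((Real.sin (k * Real.pi / M) : ℝ) : ℂ) * Efun M (2*b'+1))
    ↔ (2 * Efun M (2*(a+(Q:ℤ))) - 2 * Efun M (2*(a'+(Q:ℤ))) - Efun M (2*(b'+(K:ℤ)))
        + Efun M (2*(b+(K:ℤ))) + Efun M (2*(b'-(K:ℤ))) - Efun M (2*(b-(K:ℤ))) = 0) := by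
  have hKz : (K:ℤ) + (K:ℤ) = k := by
    have := congrArg (Nat.cast : ℕ → ℤ) hK; push_cast at this; omega
  have hQz : (Q:ℤ) + (Q:ℤ) = n := by
    have := congrArg (Nat.cast : ℕ → ℤ) hQ; push_cast at this; omega
  have hnz : (n:ℤ) + (n:ℤ) = M := by
    have := congrArg (Nat.cast : ℕ → ℤ) hn; push_cast at this; omega
  have hEn2 : Efun M n * Efun M n = -1 := by
    rw [← E_add, show (n:ℤ) + n = M from hnz]; exact E_M hM0
  have e1 : Efun M (2*a+1) = Efun M (2*a) * Efun M 1 := E_add M (2*a) 1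
  have e2 : Efun M (2*a'+1) = Efun M (2*a') * Efun M 1 := E_add M (2*a') 1
  have e3 : Efun M (2*b+1) = Efun M (2*b) * Efun M 1 := E_add M (2*b) 1
  have e4 : Efun M (2*b'+1) = Efun M (2*b') * Efun M 1 := E_add M (2*b') 1
  have g1 : Efun M (2*(a+(Q:ℤ))) = Efun M (2*a) * Efun M n := by
    rw [show 2*(a+(Q:ℤ)) = 2*a + (n:ℤ) by omega]; exact E_add _ _ _
  have g2 : Efun M (2*(a'+(Q:ℤ))) = Efun M (2*a') * Efun M n := by
    rw [show 2*(a'+(Q:ℤ)) = 2*a' + (n:ℤ) by omega]; exact E_add _ _ _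
  have g3 : Efun M (2*(b+(K:ℤ))) = Efun M (2*b) * Efun M k := by
    rw [show 2*(b+(K:ℤ)) = 2*b + (k:ℤ) by omega]; exact E_add _ _ _
  have g4 : Efun M (2*(b-(K:ℤ))) = Efun M (2*b) * Efun M (-(k:ℤ)) := by
    rw [show 2*(b-(K:ℤ)) = 2*b + (-(k:ℤ)) by omega]; exact E_add _ _ _
  have g5 : Efun M (2*(b'+(K:ℤ))) = Efun M (2*b') * Efun M k := by
    rw [show 2*(b'+(K:ℤ)) = 2*b' + (k:ℤ) by omega]; exact E_add _ _ _
  have g6 : Efun M (2*(b'-(K:ℤ))) = Efun M (2*b') * Efun M (-(k:ℤ)) := by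
    rw [show 2*(b'-(K:ℤ)) = 2*b' + (-(k:ℤ)) by omega]; exact E_add _ _ _
  have hσ : ((Real.sin (k * Real.pi / M) : ℝ) : ℂ)
      = (Efun M (-(k:ℤ)) - Efun M k) * Efun M n / 2 := by
    rw [sin_eq, E_I hM0 hn]
  rw [e1, e2, e3, e4, g1, g2, g3, g4, g5, g6, hσ]
  constructor
  · intro h
    have h2 : Efun M (2*a) + (Efun M (-(k:ℤ)) - Efun M k) * Efun M n / 2 * Efun M (2*b)
        = Efun M (2*a') + (Efun M (-(k:ℤ)) - Efun M k) * Efun M n / 2 * Efun M (2*b') :=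
      mul_right_cancel₀ (E_ne M 1) (by linear_combination h)
    linear_combination (2 * Efun M n) * h2
      + ((Efun M k - Efun M (-(k:ℤ))) * (Efun M (2*b) - Efun M (2*b'))) * hEn2
  · intro h
    have h2 : (Efun M (2*a) + (Efun M (-(k:ℤ)) - Efun M k) * Efun M n / 2 * Efun M (2*b))
          * (2 * Efun M n)
        = (Efun M (2*a') + (Efun M (-(k:ℤ)) - Efun M k) * Efun M n / 2 * Efun M (2*b'))
          * (2 * Efun M n) := by
      linear_combination h
        - ((Efun M k - Efun M (-(k:ℤ))) * (Efun M (2*b) - Efun M (2*b'))) * hEn2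
    have h3 := mul_right_cancel₀ (mul_ne_zero two_ne_zero (E_ne M n)) h2
    linear_combination (Efun M 1) * h3



lemma F_as_pow {M : ℕ} [NeZero M] (j : ℤ) :
    Efun M (2*j) = (Complex.exp (2 * Real.pi * Complex.I / M)) ^ ((j : ZMod M)).val := by
  have hM0 : (M:ℕ) ≠ 0 := NeZero.ne M
  set ξ := Complex.exp (2 * Real.pi * Complex.I / M) with hξ
  have hξ0 : ξ ≠ 0 := Complex.exp_ne_zero _
  have hξM : ξ ^ (M:ℤ) = 1 := by
    rw [zpow_natCast]
    exact (Complex.isPrimitiveRoot_exp M hM0).pow_eq_one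
  have h1 : Efun M (2*j) = ξ ^ j := by
    rw [Efun, hξ, ← Complex.exp_int_mul]
    congr 1
    push_cast
    ring
  rw [h1]
  have h2 : j = (M:ℤ) * (j / M) + j % M := (Int.mul_ediv_add_emod j M).symm
  rw [show ξ ^ j = ξ ^ ((M:ℤ) * (j / M) + j % M) from by rw [← h2]]
  rw [zpow_add₀ hξ0, zpow_mul, hξM, one_zpow, one_mul]
  rw [show (j % (M:ℤ)) = (((j : ZMod M)).val : ℤ) from (ZMod.val_intCast j).symm, zpow_natCast]

lemma F_congr {M : ℕ} [NeZero M] {i j : ℤ} (h : ((i : ZMod M)) = ((j : ZMod M))) :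
    Efun M (2*i) = Efun M (2*j) := by
  rw [F_as_pow, F_as_pow, h]

lemma F_shift {M n : ℕ} (hM0 : M ≠ 0) (hn : 2 * n = M) (j : ℤ) :
    Efun M (2*(j + (n:ℤ))) = - Efun M (2*j) := by
  have hnz : (n:ℤ) + (n:ℤ) = M := by
    have := congrArg (Nat.cast : ℕ → ℤ) hn; push_cast at this; omega
  rw [show 2*(j+(n:ℤ)) = 2*j + (M:ℤ) by omega, E_add, E_M hM0]
  ring

lemma master {lam M n k K Q : ℕ} (hlam : 3 ≤ lam) (hM : M = 2^lam)
    (hn : 2*n = M) (hQ : 2*Q = n) (hK : 2*K = k) (hk0 : 0 < k) (hkn : k < n)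
    (x x' y y' : ℤ)
    (hne : ¬(((x : ZMod M) = (x' : ZMod M)) ∧ ((y : ZMod M) = (y' : ZMod M))))
    (heq : 2 * Efun M (2*(x+(Q:ℤ))) - 2 * Efun M (2*(x'+(Q:ℤ))) - Efun M (2*(y'+(K:ℤ)))
        + Efun M (2*(y+(K:ℤ))) + Efun M (2*(y'-(K:ℤ))) - Efun M (2*(y-(K:ℤ))) = 0) :
    ((y' : ZMod M) = (y : ZMod M) + (n : ℕ)) ∧
      ((((x : ZMod M) = (y : ZMod M) - (K:ℕ) - (Q:ℕ)) ∧ ((x' : ZMod M) = (y:ZMod M) + (K:ℕ) - (Q:ℕ)))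
        ∨ (((x : ZMod M) = (y : ZMod M) + (K:ℕ) + (Q:ℕ)) ∧ ((x' : ZMod M) = (y:ZMod M) - (K:ℕ) + (Q:ℕ)))) := by
  have hM0 : (M:ℕ) ≠ 0 := by rw [hM]; positivity
  have : NeZero M := ⟨hM0⟩
  have hn0 : 0 < n := by omega
  have hvc : ∀ c : ℕ, c < M → ((c:ℕ) : ZMod M).val = c := fun c h => ZMod.val_cast_of_lt h
  have hval0 : (0 : ZMod M).val = 0 := ZMod.val_zero
  have cast_ne : ∀ c : ℕ, 0 < c → c < M → ((c:ℕ) : ZMod M) ≠ 0 := by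
    intro c h1 h2 h
    have := congrArg ZMod.val h
    rw [hvc c h2, hval0] at this
    omega
  set A : ZMod M := ((x + (Q:ℤ) : ℤ) : ZMod M) with hA
  set A' : ZMod M := ((x' + (Q:ℤ) : ℤ) : ZMod M) with hA'
  set P1 : ZMod M := ((y + (K:ℤ) : ℤ) : ZMod M) with hP1
  set P2 : ZMod M := ((y - (K:ℤ) : ℤ) : ZMod M) with hP2
  set P3 : ZMod M := ((y' + (K:ℤ) : ℤ) : ZMod M) with hP3
  set P4 : ZMod M := ((y' - (K:ℤ) : ℤ) : ZMod M) with hP4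
  set ξ := Complex.exp (2 * Real.pi * Complex.I / M) with hξ
  -- the vanishing sum
  have collapse : ∀ (Z : ZMod M) (cc : ℂ),
      ∑ t : ZMod M, (if Z = t then cc else 0) * ξ^t.val = cc * ξ^Z.val := by
    intro Z cc
    calc ∑ t : ZMod M, (if Z = t then cc else 0) * ξ^t.val
        = ∑ t : ZMod M, (if Z = t then cc * ξ^t.val else 0) := by
          apply Finset.sum_congr rfl; intro t _; split_ifs <;> simp
      _ = cc * ξ^Z.val := by rw [Finset.sum_ite_eq]; simp
  have hsum : ∑ t : ZMod M, ((Lfun A A' P1 P2 P3 P4 t : ℤ) : ℂ) * ξ^t.val = 0 := by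
    have hrw : ∀ t : ZMod M, ((Lfun A A' P1 P2 P3 P4 t : ℤ) : ℂ) * ξ^t.val
        = (if A = t then (2:ℂ) else 0) * ξ^t.val - (if A' = t then (2:ℂ) else 0) * ξ^t.val
          + (if P1 = t then (1:ℂ) else 0) * ξ^t.val - (if P2 = t then (1:ℂ) else 0) * ξ^t.val
          + (if P4 = t then (1:ℂ) else 0) * ξ^t.val - (if P3 = t then (1:ℂ) else 0) * ξ^t.val := by
      intro t
      rw [Lfun]
      split_ifs <;> push_cast <;> ring
    rw [Finset.sum_congr rfl (fun t _ => hrw t)]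
    rw [Finset.sum_sub_distrib, Finset.sum_add_distrib, Finset.sum_sub_distrib,
      Finset.sum_add_distrib, Finset.sum_sub_distrib, collapse, collapse, collapse,
      collapse, collapse, collapse]
    rw [hA, hA', hP1, hP2, hP3, hP4]
    rw [← F_as_pow, ← F_as_pow, ← F_as_pow, ← F_as_pow, ← F_as_pow, ← F_as_pow]
    linear_combination heq
  have hn2 : n = 2^(lam-1) := by
    have h2 : (2:ℕ)^lam = 2 * 2^(lam-1) := by
      rw [← pow_succ']; congr 1; omega
    omega
  have hper := coeff_periodic (by omega) hM hn2 (Lfun A A' P1 P2 P3 P4) hsum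
  -- ZMod facts
  have hνν : ((n:ℕ) : ZMod M) + ((n:ℕ) : ZMod M) = 0 := by
    rw [← Nat.cast_add, show (n + n : ℕ) = M by omega, ZMod.natCast_self]
  have hν0 : ((n:ℕ) : ZMod M) ≠ 0 := cast_ne n hn0 (by omega)
  have hκ0 : ((k:ℕ) : ZMod M) ≠ 0 := cast_ne k hk0 (by omega)
  have hκν : ((k:ℕ) : ZMod M) ≠ ((n:ℕ) : ZMod M) := by
    intro h
    have := congrArg ZMod.val h
    rw [hvc k (by omega), hvc n (by omega)] at this
    omega
  have h2κ : ((k:ℕ) : ZMod M) + ((k:ℕ) : ZMod M) ≠ 0 := by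
    rw [← Nat.cast_add]
    exact cast_ne (k+k) (by omega) (by omega)
  have hκν2 : ((k:ℕ) : ZMod M) + ((n:ℕ) : ZMod M) ≠ 0 := by
    rw [← Nat.cast_add]
    exact cast_ne (k+n) (by omega) (by omega)
  have hKK : ((K:ℕ) : ZMod M) + ((K:ℕ) : ZMod M) = ((k:ℕ) : ZMod M) := by
    rw [← Nat.cast_add, show (K + K : ℕ) = k by omega]
  have hQQ : ((Q:ℕ) : ZMod M) + ((Q:ℕ) : ZMod M) = ((n:ℕ) : ZMod M) := by
    rw [← Nat.cast_add, show (Q + Q : ℕ) = n by omega]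
  have h12 : P1 = P2 + ((k:ℕ) : ZMod M) := by
    rw [hP1, hP2]; push_cast; linear_combination hKK
  have h34 : P3 = P4 + ((k:ℕ) : ZMod M) := by
    rw [hP3, hP4]; push_cast; linear_combination hKK
  have hneA : ¬(A = A' ∧ P1 = P3) := by
    rintro ⟨h1, h2⟩
    apply hne
    rw [hA, hA'] at h1
    rw [hP1, hP3] at h2
    push_cast at h1 h2
    constructor
    · linear_combination h1
    · linear_combination h2
  obtain ⟨hy, hfam⟩ := comb ((n:ℕ) : ZMod M) ((k:ℕ) : ZMod M) hν0 hνν hκ0 hκν h2κ hκν2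
    A A' P1 P2 P3 P4 h12 h34 hneA hper
  rw [hP1, hP3] at hy
  push_cast at hy
  constructor
  · linear_combination hy
  · rcases hfam with ⟨hh1, hh2⟩ | ⟨hh1, hh2⟩
    · left
      rw [hA, hP2] at hh1
      rw [hA', hP1] at hh2
      push_cast at hh1 hh2
      exact ⟨by linear_combination hh1, by linear_combination hh2⟩
    · right
      rw [hA, hP1] at hh1
      rw [hA', hP2] at hh2
      push_cast at hh1 hh2
      exact ⟨by linear_combination hh1 - hQQ, by linear_combination hh2 - hQQ⟩

lemma master_conv {M n k K Q : ℕ} (hM0 : M ≠ 0) [NeZero M]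
    (hn : 2*n = M) (hQ : 2*Q = n)
    (x x' y y' : ℤ)
    (h1 : (y' : ZMod M) = (y : ZMod M) + (n : ℕ))
    (h2 : (((x : ZMod M) = (y : ZMod M) - (K:ℕ) - (Q:ℕ)) ∧ ((x' : ZMod M) = (y:ZMod M) + (K:ℕ) - (Q:ℕ)))
        ∨ (((x : ZMod M) = (y : ZMod M) + (K:ℕ) + (Q:ℕ)) ∧ ((x' : ZMod M) = (y:ZMod M) - (K:ℕ) + (Q:ℕ)))) :
    2 * Efun M (2*(x+(Q:ℤ))) - 2 * Efun M (2*(x'+(Q:ℤ))) - Efun M (2*(y'+(K:ℤ)))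
        + Efun M (2*(y+(K:ℤ))) + Efun M (2*(y'-(K:ℤ))) - Efun M (2*(y-(K:ℤ))) = 0 := by
  have hQQ : ((Q:ℕ) : ZMod M) + ((Q:ℕ) : ZMod M) = ((n:ℕ) : ZMod M) := by
    rw [← Nat.cast_add, show (Q + Q : ℕ) = n by omega]
  have e3 : Efun M (2*(y'+(K:ℤ))) = - Efun M (2*(y+(K:ℤ))) := by
    rw [show Efun M (2*(y'+(K:ℤ))) = Efun M (2*((y+(K:ℤ)) + (n:ℤ))) from
      F_congr (by push_cast; linear_combination h1), F_shift hM0 hn]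
  have e4 : Efun M (2*(y'-(K:ℤ))) = - Efun M (2*(y-(K:ℤ))) := by
    rw [show Efun M (2*(y'-(K:ℤ))) = Efun M (2*((y-(K:ℤ)) + (n:ℤ))) from
      F_congr (by push_cast; linear_combination h1), F_shift hM0 hn]
  rcases h2 with ⟨hh1, hh2⟩ | ⟨hh1, hh2⟩
  · have e1 : Efun M (2*(x+(Q:ℤ))) = Efun M (2*(y-(K:ℤ))) :=
      F_congr (by push_cast; linear_combination hh1)
    have e2 : Efun M (2*(x'+(Q:ℤ))) = Efun M (2*(y+(K:ℤ))) :=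
      F_congr (by push_cast; linear_combination hh2)
    rw [e1, e2, e3, e4]; ring
  · have e1 : Efun M (2*(x+(Q:ℤ))) = - Efun M (2*(y+(K:ℤ))) := by
      rw [show Efun M (2*(x+(Q:ℤ))) = Efun M (2*((y+(K:ℤ)) + (n:ℤ))) from
        F_congr (by push_cast; linear_combination hh1 + hQQ), F_shift hM0 hn]
    have e2 : Efun M (2*(x'+(Q:ℤ))) = - Efun M (2*(y-(K:ℤ))) := by
      rw [show Efun M (2*(x'+(Q:ℤ))) = Efun M (2*((y-(K:ℤ)) + (n:ℤ))) from
        F_congr (by push_cast; linear_combination hh2 + hQQ), F_shift hM0 hn]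
    rw [e1, e2, e3, e4]; ring

/-- recover the class base point from a cell. -/
def betaF (M K Q n : ℕ) (p : Fin M × Fin M) : ZMod M :=
  if ((p.1 : ℕ) : ZMod M) + (K:ℕ) + (Q:ℕ) = ((p.2 : ℕ) : ZMod M)
  then ((p.2 : ℕ) : ZMod M) else ((p.2 : ℕ) : ZMod M) - (n:ℕ)

lemma sin_package {lam M m k a₁ n K Q : ℕ} (hlam : 3 ≤ lam) (hM : M = 2^lam)
    (hm : 1 ≤ m) (ha₁ : a₁ % 2 = 1) (hk : k = 2^m * a₁)
    (hn : 2*n = M) (hQ : 2*Q = n) (hK : 2*K = k) (hk0 : 0 < k) (hkn : k < n) :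
    ∃ f : Fin M × Fin M → Fin 2 × Fin 2,
      (∀ p q : Fin M × Fin M,
        PSK M p.1 + ((Real.sin (k * Real.pi / M) : ℝ) : ℂ) * PSK M p.2
          = PSK M q.1 + ((Real.sin (k * Real.pi / M) : ℝ) : ℂ) * PSK M q.2 → f p = f q) ∧
      (∀ p q : Fin M × Fin M,
        (∃ p', p' ≠ p ∧ PSK M p.1 + ((Real.sin (k * Real.pi / M) : ℝ) : ℂ) * PSK M p.2
          = PSK M p'.1 + ((Real.sin (k * Real.pi / M) : ℝ) : ℂ) * PSK M p'.2) →
        (∃ q', q' ≠ q ∧ PSK M q.1 + ((Real.sin (k * Real.pi / M) : ℝ) : ℂ) * PSK M q.2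
          = PSK M q'.1 + ((Real.sin (k * Real.pi / M) : ℝ) : ℂ) * PSK M q'.2) →
        ¬(PSK M p.1 + ((Real.sin (k * Real.pi / M) : ℝ) : ℂ) * PSK M p.2
          = PSK M q.1 + ((Real.sin (k * Real.pi / M) : ℝ) : ℂ) * PSK M q.2) →
        (p.1 = q.1 ∨ p.2 = q.2) → f p ≠ f q) := by
  have hM0 : (M:ℕ) ≠ 0 := by rw [hM]; positivity
  have : NeZero M := ⟨hM0⟩
  have hn0 : 0 < n := by omega
  have hmlam : m + 1 ≤ lam := by
    have h1 : 2^m ≤ k := by rw [hk]; nlinarith [Nat.one_le_iff_ne_zero.mpr (by omega : a₁ ≠ 0)]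
    have h2 : n = 2^(lam-1) := by
      have : (2:ℕ)^lam = 2 * 2^(lam-1) := by rw [← pow_succ']; congr 1; omega
      omega
    by_contra hcon
    have : 2^(lam-1) ≤ 2^m := Nat.pow_le_pow_right (by norm_num) (by omega)
    omega
  have hn2 : n = 2^(lam-1) := by
    have : (2:ℕ)^lam = 2 * 2^(lam-1) := by rw [← pow_succ']; congr 1; omega
    omega
  -- ZMod facts
  have hvc : ∀ c : ℕ, c < M → ((c:ℕ) : ZMod M).val = c := fun c h => ZMod.val_cast_of_lt h
  have cast_ne : ∀ c : ℕ, 0 < c → c < M → ((c:ℕ) : ZMod M) ≠ 0 := by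
    intro c h1 h2 h
    have := congrArg ZMod.val h
    rw [hvc c h2, ZMod.val_zero] at this
    omega
  have hnn0 : ((n:ℕ) : ZMod M) + ((n:ℕ) : ZMod M) = 0 := by
    rw [← Nat.cast_add, show (n + n : ℕ) = M by omega, ZMod.natCast_self]
  have hQQn : ((Q:ℕ) : ZMod M) + ((Q:ℕ) : ZMod M) = ((n:ℕ) : ZMod M) := by
    rw [← Nat.cast_add, show (Q + Q : ℕ) = n by omega]
  have hKKk : ((K:ℕ) : ZMod M) + ((K:ℕ) : ZMod M) = ((k:ℕ) : ZMod M) := by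
    rw [← Nat.cast_add, show (K + K : ℕ) = k by omega]
  have hκν : ((k:ℕ) : ZMod M) ≠ ((n:ℕ) : ZMod M) := by
    intro h
    have := congrArg ZMod.val h
    rw [hvc k (by omega), hvc n (by omega)] at this
    omega
  have hκν2 : ((k:ℕ) : ZMod M) + ((n:ℕ) : ZMod M) ≠ 0 := by
    rw [← Nat.cast_add]
    exact cast_ne (k+n) (by omega) (by omega)
  -- the master equation characterization
  set σ : ℂ := ((Real.sin (k * Real.pi / M) : ℝ) : ℂ) with hσ
  have rel_iff : ∀ p q : Fin M × Fin M,
      (PSK M p.1 + σ * PSK M p.2 = PSK M q.1 + σ * PSK M q.2)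
      ↔ (2 * Efun M (2*(((p.1:ℕ):ℤ)+(Q:ℤ))) - 2 * Efun M (2*(((q.1:ℕ):ℤ)+(Q:ℤ)))
          - Efun M (2*(((q.2:ℕ):ℤ)+(K:ℤ))) + Efun M (2*(((p.2:ℕ):ℤ)+(K:ℤ)))
          + Efun M (2*(((q.2:ℕ):ℤ)-(K:ℤ))) - Efun M (2*(((p.2:ℕ):ℤ)-(K:ℤ))) = 0) := by
    intro p q
    rw [PSK_eq, PSK_eq, PSK_eq, PSK_eq, hσ]
    exact rel_iff_master hM0 hn hK hQ _ _ _ _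
  -- structure of nontrivial relations
  have hstruct : ∀ p q : Fin M × Fin M,
      PSK M p.1 + σ * PSK M p.2 = PSK M q.1 + σ * PSK M q.2 → p ≠ q →
      ((((q.2:ℕ)) : ZMod M) = ((p.2:ℕ) : ZMod M) + (n:ℕ)) ∧
        (((((p.1:ℕ)) : ZMod M) = ((p.2:ℕ) : ZMod M) - (K:ℕ) - (Q:ℕ)
            ∧ (((q.1:ℕ)) : ZMod M) = ((p.2:ℕ) : ZMod M) + (K:ℕ) - (Q:ℕ))
          ∨ ((((p.1:ℕ)) : ZMod M) = ((p.2:ℕ) : ZMod M) + (K:ℕ) + (Q:ℕ)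
            ∧ (((q.1:ℕ)) : ZMod M) = ((p.2:ℕ) : ZMod M) - (K:ℕ) + (Q:ℕ))) := by
    intro p q hrel hpq
    have h2 := (rel_iff p q).mp hrel
    have hne : ¬((((p.1:ℕ):ℤ) : ZMod M) = (((q.1:ℕ):ℤ) : ZMod M)
        ∧ (((p.2:ℕ):ℤ) : ZMod M) = (((q.2:ℕ):ℤ) : ZMod M)) := by
      rintro ⟨e1, e2⟩
      push_cast at e1 e2
      exact hpq (Prod.ext (castFin_inj _ _ e1) (castFin_inj _ _ e2))
    have := master hlam hM hn hQ hK hk0 hkn ((p.1:ℕ):ℤ) ((q.1:ℕ):ℤ) ((p.2:ℕ):ℤ) ((q.2:ℕ):ℤ) hne h2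
    push_cast at this
    exact this
  -- converse
  have hconv : ∀ p q : Fin M × Fin M,
      ((((q.2:ℕ)) : ZMod M) = ((p.2:ℕ) : ZMod M) + (n:ℕ)) →
      (((((p.1:ℕ)) : ZMod M) = ((p.2:ℕ) : ZMod M) - (K:ℕ) - (Q:ℕ)
          ∧ (((q.1:ℕ)) : ZMod M) = ((p.2:ℕ) : ZMod M) + (K:ℕ) - (Q:ℕ))
        ∨ ((((p.1:ℕ)) : ZMod M) = ((p.2:ℕ) : ZMod M) + (K:ℕ) + (Q:ℕ)
          ∧ (((q.1:ℕ)) : ZMod M) = ((p.2:ℕ) : ZMod M) - (K:ℕ) + (Q:ℕ))) →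
      PSK M p.1 + σ * PSK M p.2 = PSK M q.1 + σ * PSK M q.2 := by
    intro p q h1 h2
    refine (rel_iff p q).mpr (master_conv (k := k) hM0 hn hQ _ _ _ _ ?_ ?_)
    · push_cast
      exact h1
    · push_cast
      exact h2
  refine ⟨fun p => color lam m (betaF M K Q n p), ?_, ?_⟩
  · -- constancy
    intro p q hrel
    show color lam m (betaF M K Q n p) = color lam m (betaF M K Q n q)
    by_cases hpq : p = q
    · rw [hpq]
    obtain ⟨h1, h2⟩ := hstruct p q hrel hpq
    rcases h2 with ⟨ha, hb⟩ | ⟨ha, hb⟩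
    · have e1 : betaF M K Q n p = ((p.2:ℕ) : ZMod M) := by
        rw [betaF, if_pos (show ((p.1:ℕ):ZMod M) + (K:ℕ) + (Q:ℕ) = ((p.2:ℕ):ZMod M) by
          linear_combination ha)]
      have e2 : betaF M K Q n q = ((p.2:ℕ) : ZMod M) := by
        rw [betaF, if_neg (fun h : ((q.1:ℕ):ZMod M) + (K:ℕ) + (Q:ℕ) = ((q.2:ℕ):ZMod M) =>
          hκν (by linear_combination h - hb + h1 - hKKk))]
        linear_combination h1
      rw [e1, e2]
    · have e1 : betaF M K Q n p = ((p.2:ℕ) : ZMod M) - (n:ℕ) := by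
        rw [betaF, if_neg (fun h : ((p.1:ℕ):ZMod M) + (K:ℕ) + (Q:ℕ) = ((p.2:ℕ):ZMod M) =>
          hκν2 (by linear_combination h - ha - hKKk - hQQn))]
      have e2 : betaF M K Q n q = ((p.2:ℕ) : ZMod M) - (n:ℕ) := by
        rw [betaF, if_pos (show ((q.1:ℕ):ZMod M) + (K:ℕ) + (Q:ℕ) = ((q.2:ℕ):ZMod M) by
          linear_combination hb - h1 + hQQn)]
        linear_combination h1 + hnn0
      rw [e1, e2]
  · -- properness
    intro p q hvp hvq hnrel hor
    -- both cells have a defined offset type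
    have dval : ∀ r : Fin M × Fin M,
        (∃ r', r' ≠ r ∧ PSK M r.1 + σ * PSK M r.2 = PSK M r'.1 + σ * PSK M r'.2) →
        (((r.1:ℕ) : ZMod M) = ((r.2:ℕ) : ZMod M) - (K:ℕ) - (Q:ℕ))
          ∨ (((r.1:ℕ) : ZMod M) = ((r.2:ℕ) : ZMod M) + (K:ℕ) + (Q:ℕ)) := by
      rintro r ⟨r', hne, hrel⟩
      obtain ⟨-, h2⟩ := hstruct r r' hrel (fun h => hne (h.symm))
      rcases h2 with ⟨ha, -⟩ | ⟨ha, -⟩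
      · exact Or.inl ha
      · exact Or.inr ha
    -- characterization of beta in the two cases
    have betachar : ∀ r : Fin M × Fin M,
        (((r.1:ℕ) : ZMod M) = ((r.2:ℕ) : ZMod M) - (K:ℕ) - (Q:ℕ))
          ∨ (((r.1:ℕ) : ZMod M) = ((r.2:ℕ) : ZMod M) + (K:ℕ) + (Q:ℕ)) →
        (betaF M K Q n r = ((r.2:ℕ) : ZMod M)
            ∧ ((r.1:ℕ) : ZMod M) = betaF M K Q n r - (K:ℕ) - (Q:ℕ))
          ∨ (betaF M K Q n r = ((r.2:ℕ) : ZMod M) - (n:ℕ)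
            ∧ ((r.1:ℕ) : ZMod M) = betaF M K Q n r + (K:ℕ) - (Q:ℕ)) := by
      rintro r (ha | ha)
      · left
        have e1 : betaF M K Q n r = ((r.2:ℕ) : ZMod M) := by
          rw [betaF, if_pos (show ((r.1:ℕ):ZMod M) + (K:ℕ) + (Q:ℕ) = ((r.2:ℕ):ZMod M) by
            linear_combination ha)]
        exact ⟨e1, by rw [e1]; exact ha⟩
      · right
        have e1 : betaF M K Q n r = ((r.2:ℕ) : ZMod M) - (n:ℕ) := by
          rw [betaF, if_neg (fun h : ((r.1:ℕ):ZMod M) + (K:ℕ) + (Q:ℕ) = ((r.2:ℕ):ZMod M) =>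
            hκν2 (by linear_combination h - ha - hKKk - hQQn))]
        refine ⟨e1, ?_⟩
        rw [e1]
        linear_combination ha + hQQn + hnn0
    -- equal beta implies related
    have hbeq : betaF M K Q n p ≠ betaF M K Q n q := by
      intro hBB
      apply hnrel
      rcases betachar p (dval p hvp) with ⟨e1, e2⟩ | ⟨e1, e2⟩ <;>
        rcases betachar q (dval q hvq) with ⟨g1, g2⟩ | ⟨g1, g2⟩
      · -- both base: same cell
        have c2 : p.2 = q.2 := castFin_inj _ _ (by rw [← e1, ← g1, hBB])
        have c1 : p.1 = q.1 := castFin_inj _ _ (by rw [e2, g2, hBB])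
        rw [show p = q from Prod.ext c1 c2]
      · -- p base, q shifted : structured pair
        refine hconv p q ?_ (Or.inl ⟨?_, ?_⟩)
        · linear_combination -g1 - hBB + e1
        · linear_combination e2 + e1
        · linear_combination g2 - hBB + e1
      · -- q base, p shifted : structured pair the other way
        refine (hconv q p ?_ (Or.inl ⟨?_, ?_⟩)).symm
        · linear_combination -e1 + hBB + g1
        · linear_combination g2 + g1
        · linear_combination e2 + hBB + g1
      · -- both shifted: same cell
        have c2 : p.2 = q.2 := castFin_inj _ _ (by linear_combination -e1 + hBB + g1)
        have c1 : p.1 = q.1 := castFin_inj _ _ (by rw [e2, g2, hBB])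
        rw [show p = q from Prod.ext c1 c2]
    -- now compare colors
    show color lam m (betaF M K Q n p) ≠ color lam m (betaF M K Q n q)
    intro hcol
    rcases betachar p (dval p hvp) with ⟨e1, e2⟩ | ⟨e1, e2⟩ <;>
      rcases betachar q (dval q hvq) with ⟨g1, g2⟩ | ⟨g1, g2⟩ <;>
      rcases hor with hr | hc
    -- 8 cases
    · -- (base,base), rows equal : beta p = beta q
      exact hbeq (by
        have := congrArg (fun t : Fin M => ((t:ℕ) : ZMod M)) hr
        rw [e2, g2] at this
        linear_combination this)
    · exact hbeq (by
        have := congrArg (fun t : Fin M => ((t:ℕ) : ZMod M)) hc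
        rw [← e1, ← g1] at this
        exact this)
    · -- (base, shifted), rows equal: beta p = beta q + k → color differ
      have hBk : betaF M K Q n p = betaF M K Q n q + ((k:ℕ) : ZMod M) := by
        have := congrArg (fun t : Fin M => ((t:ℕ) : ZMod M)) hr
        rw [e2, g2] at this
        linear_combination this + hKKk
      rw [hBk] at hcol
      exact color_add_k_ne hM hmlam ha₁ hk (by omega) _ hcol
    · -- (base, shifted), cols equal: beta q = beta p + n (as -n) → color differ
      have hBn : betaF M K Q n q = betaF M K Q n p + ((n:ℕ) : ZMod M) := by
        have := congrArg (fun t : Fin M => ((t:ℕ) : ZMod M)) hc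
        rw [← e1] at this
        rw [g1, ← this]
        linear_combination -hnn0
      rw [hBn] at hcol
      have := color_add_n_ne (m := m) hM (by omega) (betaF M K Q n p)
      rw [← hn2] at this
      exact this hcol.symm
    · -- (shifted, base), rows equal: beta q = beta p + k
      have hBk : betaF M K Q n q = betaF M K Q n p + ((k:ℕ) : ZMod M) := by
        have := congrArg (fun t : Fin M => ((t:ℕ) : ZMod M)) hr
        rw [e2, g2] at this
        linear_combination -this + hKKk
      rw [hBk] at hcol
      exact color_add_k_ne hM hmlam ha₁ hk (by omega) _ hcol.symm
    · -- (shifted, base), cols equal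
      have hBn : betaF M K Q n p = betaF M K Q n q + ((n:ℕ) : ZMod M) := by
        have := congrArg (fun t : Fin M => ((t:ℕ) : ZMod M)) hc
        rw [← g1] at this
        rw [e1, this]
        linear_combination -hnn0
      rw [hBn] at hcol
      have := color_add_n_ne (m := m) hM (by omega) (betaF M K Q n q)
      rw [← hn2] at this
      exact this hcol
    · -- (shifted, shifted), rows equal: beta equal
      exact hbeq (by
        have := congrArg (fun t : Fin M => ((t:ℕ) : ZMod M)) hr
        rw [e2, g2] at this
        linear_combination this)
    · -- (shifted, shifted), cols equal: beta equal
      exact hbeq (by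
        have := congrArg (fun t : Fin M => ((t:ℕ) : ZMod M)) hc
        rw [e1, g1, this])

lemma colorable_of_package {M : ℕ} (S : Fin M → ℂ) (s : ℂ)
    (f : Fin M × Fin M → Fin 2 × Fin 2)
    (hconst : ∀ p q : Fin M × Fin M, S p.1 + s * S p.2 = S q.1 + s * S q.2 → f p = f q)
    (hproper : ∀ p q : Fin M × Fin M,
      (∃ p', p' ≠ p ∧ S p.1 + s * S p.2 = S p'.1 + s * S p'.2) →
      (∃ q', q' ≠ q ∧ S q.1 + s * S q.2 = S q'.1 + s * S q'.2) →
      ¬(S p.1 + s * S p.2 = S q.1 + s * S q.2) →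
      (p.1 = q.1 ∨ p.2 = q.2) → f p ≠ f q) :
    (vital M S s).Colorable 4 := by
  have hcard : Fintype.card (Fin 2 × Fin 2) = 4 := by simp
  rw [← hcard]
  apply SimpleGraph.Coloring.colorable
  refine SimpleGraph.Coloring.mk (fun v => Quotient.lift f hconst v.1) ?_
  intro v w hadj
  obtain ⟨hne, p, q, hp, hq, hor⟩ := hadj
  show Quotient.lift f hconst (v : Quotient (fadeSetoid M S s)) ≠
    Quotient.lift f hconst (w : Quotient (fadeSetoid M S s))
  rw [show (v : Quotient (fadeSetoid M S s)) = Quotient.mk (fadeSetoid M S s) p from hp.symm,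
    show (w : Quotient (fadeSetoid M S s)) = Quotient.mk (fadeSetoid M S s) q from hq.symm]
  show f p ≠ f q
  have getpartner : ∀ (u : vitalSet M S s) (r : Fin M × Fin M),
      Quotient.mk (fadeSetoid M S s) r = u.1 →
      ∃ r', r' ≠ r ∧ S r.1 + s * S r.2 = S r'.1 + s * S r'.2 := by
    rintro u r hr
    obtain ⟨p₁, q₁, hne₁, h₁, h₂⟩ := u.2
    by_cases hc : p₁ = r
    · exact ⟨q₁, fun h => hne₁ (hc ▸ h.symm ▸ rfl), Quotient.exact (hr.trans h₂.symm)⟩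
    · exact ⟨p₁, hc, Quotient.exact (hr.trans h₁.symm)⟩
  exact hproper p q (getpartner v p hp) (getpartner w q hq)
    (fun h => hne (by rw [← hp, ← hq]; exact Quotient.sound h)) hor

end PSKV

/-- for `M = 2^λ`-PSK with `k = 2^m a₁ ∈ {1, …, M/2 − 1}`
(`m ≥ 1`, `a₁` odd) and `s = sin(kπ/M)` or `s = 1/sin(kπ/M)`, the vital
subgraph is 4-colorable. -/
theorem psk_vital_colorable_four_sin_even (lam M m k a₁ : ℕ) (hlam : 3 ≤ lam)
    (hM : M = 2 ^ lam) (hm : 1 ≤ m) (ha₁ : a₁ % 2 = 1) (hk : k = 2 ^ m * a₁)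
    (hk1 : 1 ≤ k) (hk2 : k ≤ M / 2 - 1) (s : ℂ)
    (hs : s = ((Real.sin (k * Real.pi / M) : ℝ) : ℂ) ∨
          s = ((1 / Real.sin (k * Real.pi / M) : ℝ) : ℂ)) :
    (vital M (PSK M) s).Colorable 4 := by

  have hM0 : M ≠ 0 := by rw [hM]; positivity
  have hn : 2 * 2^(lam-1) = M := by
    rw [hM, ← pow_succ']; congr 1; omega
  have hQ : 2 * 2^(lam-2) = 2^(lam-1) := by
    rw [← pow_succ']; congr 1; omega
  have hK : 2 * (2^(m-1) * a₁) = k := by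
    rw [hk, ← mul_assoc, ← pow_succ']; congr 2; omega
  have hk0 : 0 < k := hk1
  have hMn : M / 2 = 2^(lam-1) := by omega
  have hkn : k < 2^(lam-1) := by
    have h1 : (0:ℕ) < 2^(lam-1) := by positivity
    omega
  obtain ⟨f, hconst, hproper⟩ := PSKV.sin_package hlam hM hm ha₁ hk hn hQ hK hk0 hkn
  rcases hs with hs | hs
  · subst hs
    exact PSKV.colorable_of_package (PSK M) _ f hconst hproper
  · -- reciprocal case: transpose
    have hsin0 : Real.sin (k * Real.pi / M) > 0 := by
      apply Real.sin_pos_of_pos_of_lt_pi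
      · have : (0:ℝ) < M := by positivity
        positivity
      · rw [div_lt_iff₀ (by positivity : (0:ℝ) < M)]
        have hkM : (k:ℝ) < M := by
          have : k < M := by omega
          exact_mod_cast this
        nlinarith [Real.pi_pos]
    set σ : ℂ := ((Real.sin (k * Real.pi / M) : ℝ) : ℂ) with hσ
    have hσ0 : σ ≠ 0 := by
      rw [hσ]
      exact_mod_cast Complex.ofReal_ne_zero.mpr (ne_of_gt hsin0)
    have hs' : s = 1/σ := by rw [hs, hσ]; push_cast; ring
    have hiff : ∀ p q : Fin M × Fin M,
        (PSK M p.1 + s * PSK M p.2 = PSK M q.1 + s * PSK M q.2)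
        ↔ (PSK M p.2 + σ * PSK M p.1 = PSK M q.2 + σ * PSK M q.1) := by
      intro p q
      rw [hs']
      constructor
      · intro h
        field_simp [hσ0] at h
        linear_combination h
      · intro h
        field_simp [hσ0]
        linear_combination h
    apply PSKV.colorable_of_package (PSK M) s (fun p => f (p.2, p.1))
    · intro p q h
      exact hconst (p.2, p.1) (q.2, q.1) ((hiff p q).mp h)
    · intro p q hvp hvq hnrel hor
      apply hproper (p.2, p.1) (q.2, q.1)
      · obtain ⟨p', hne', hrel'⟩ := hvp
        exact ⟨(p'.2, p'.1), fun h => hne' (Prod.ext (congrArg Prod.snd h) (congrArg Prod.fst h)),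
          (hiff p p').mp hrel'⟩
      · obtain ⟨q', hne', hrel'⟩ := hvq
        exact ⟨(q'.2, q'.1), fun h => hne' (Prod.ext (congrArg Prod.snd h) (congrArg Prod.fst h)),
          (hiff q q').mp hrel'⟩
      · exact fun h => hnrel ((hiff p q).mpr h)
      · exact hor.symm
end
end
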